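/- arXiv:2502.08390 — 10 statements merged into one kernel-verified Lean document; each statement's English description precedes it below -/
import Mathlib

section
/- Let L(z) = h(z)·conj(g(z)) be logharmonic in the unit disk 𝔻, where h(z) = z + Σ_{n=2}^∞ a_n z^n and g(z) = 1 + Σ_{n=1}^∞ b_n z^n are analytic on 𝔻 (with the conventions a₀ = 0, a₁ = 1, b₀ = 1). If Λ_{L_{z̄}}(z) = |h'(z)·conj(g'(z))| + |h(z)·conj(g''(z))| ≤ Λ₂ for all z ∈ 𝔻, then for every integer n ≥ 0 one has |Σ_{j=0}^n (j+1)(n−j+1)·a_{j+1}·b_{n−j+1}| ≤ Λ₂. -/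
open Complex Metric
open Complex Metric FormalMultilinearSeries
open Complex Metric FormalMultilinearSeries
open scoped ENNReal NNReal

lemma aux_coeff (a : ℕ → ℂ) (n : ℕ) : (ofScalars ℂ a).coeff n = a n := by
  show ofScalars ℂ a n (fun _ => 1) = a n
  rw [ofScalars_apply_eq]; simp

lemma aux_hasFPS (h : ℂ → ℂ) (a : ℕ → ℂ)
    (hasum : ∀ z ∈ ball (0:ℂ) 1, Summable fun n => a n * z ^ n)
    (hhs : ∀ z ∈ ball (0:ℂ) 1, h z = ∑' n, a n * z ^ n) :
    HasFPowerSeriesOnBall h (ofScalars ℂ a) 0 1 := by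
  constructor
  · refine ENNReal.le_of_forall_nnreal_lt fun r hr => ?_
    have hrb : ((r:ℝ):ℂ) ∈ ball (0:ℂ) 1 := by
      simp only [mem_ball, dist_zero_right, Complex.norm_real, Real.norm_eq_abs]
      rw [_root_.abs_of_nonneg r.coe_nonneg]
      exact_mod_cast hr
    refine le_radius_of_summable _ ?_
    have := (summable_norm_iff.mpr (hasum _ hrb))
    apply this.congr
    intro n
    rw [ofScalars_norm, norm_mul, norm_pow, Complex.norm_real, Real.norm_eq_abs,
      _root_.abs_of_nonneg r.coe_nonneg]
  · exact one_pos
  · intro y hy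
    have hy1 : y ∈ ball (0:ℂ) 1 := by
      simp only [Metric.mem_eball, edist_dist, dist_zero_right, ENNReal.ofReal_lt_one] at hy
      simp only [mem_ball_zero_iff]
      exact_mod_cast hy
    have := (hasum y hy1).hasSum
    rw [← hhs y hy1] at this
    have heq : ∀ n, (ofScalars ℂ a n fun _ => y) = a n * y ^ n := by
      intro n; rw [ofScalars_apply_eq]; simp [smul_eq_mul]
    rw [zero_add]
    exact HasSum.congr_fun this fun n => heq n


lemma aux_deriv_hasSum (h : ℂ → ℂ) (a : ℕ → ℂ)
    (hp : HasFPowerSeriesOnBall h (ofScalars ℂ a) 0 1)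
    {z : ℂ} (hz : z ∈ ball (0:ℂ) 1) (hz0 : z ≠ 0) :
    HasSum (fun n : ℕ => ((n:ℂ)+1) * a (n+1) * z ^ n) (deriv h z) := by
  have hd := hp.fderiv
  have hz' : z ∈ Metric.eball (0:ℂ) 1 := by
    simp only [Metric.mem_eball, edist_dist, dist_zero_right, ENNReal.ofReal_lt_one]
    exact_mod_cast mem_ball_zero_iff.mp hz
  have hs := hd.hasSum hz'
  have hs2 := (ContinuousLinearMap.apply ℂ ℂ z).hasSum hs
  simp only [ContinuousLinearMap.apply_apply] at hs2
  have hterm : ∀ n : ℕ, (((ofScalars ℂ a).derivSeries n) fun _ => z) z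
      = z * (((n:ℂ)+1) * a (n+1) * z ^ n) := by
    intro n
    rw [derivSeries_apply_diag, ofScalars_apply_eq]
    push_cast [smul_eq_mul]
    ring
  have hrhs : (fderiv ℂ h (0 + z)) z = z * deriv h z := by
    rw [zero_add]
    have := (fderiv ℂ h z).map_smul z (1:ℂ)
    rw [smul_eq_mul, mul_one] at this
    rw [this, smul_eq_mul, fderiv_apply_one_eq_deriv]
  rw [hrhs] at hs2
  have hs3 : HasSum (fun n : ℕ => z * (((n:ℂ)+1) * a (n+1) * z ^ n)) (z * deriv h z) :=
    hs2.congr_fun fun n => (hterm n).symm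
  exact (hasSum_mul_left_iff hz0).mp hs3


lemma aux_cauchy (F : ℂ → ℂ) (c : ℕ → ℂ) (C : ℝ)
    (hF : ∀ z ∈ ball (0:ℂ) 1, AnalyticAt ℂ F z)
    (hsum : ∀ z ∈ ball (0:ℂ) 1, z ≠ 0 → HasSum (fun n => c n * z ^ n) (F z))
    (hb : ∀ z ∈ ball (0:ℂ) 1, ‖F z‖ ≤ C) :
    ∀ n, ‖c n‖ ≤ C := by
  -- radius of the scalar series is at least 1
  have hrad : 1 ≤ (ofScalars ℂ c).radius := by
    refine ENNReal.le_of_forall_nnreal_lt fun t ht => ?_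
    rcases eq_or_ne t 0 with rfl | ht0
    · simp
    have htpos : (0:ℝ) < t := lt_of_le_of_ne t.coe_nonneg (by exact_mod_cast ht0.symm)
    have htb : ((t:ℝ):ℂ) ∈ ball (0:ℂ) 1 := by
      simp only [mem_ball, dist_zero_right, Complex.norm_real, Real.norm_eq_abs]
      rw [_root_.abs_of_nonneg t.coe_nonneg]
      exact_mod_cast ht
    have htne : ((t:ℝ):ℂ) ≠ 0 := by exact_mod_cast htpos.ne'
    have hs := (hsum _ htb htne).summable
    refine le_radius_of_summable _ ((summable_norm_iff.mpr hs).congr fun n => ?_)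
    rw [ofScalars_norm, norm_mul, norm_pow, Complex.norm_real, Real.norm_eq_abs,
      _root_.abs_of_nonneg t.coe_nonneg]
  -- F 0 = c 0
  have h01 : (0:ℂ) ∈ ball (0:ℂ) 1 := by simp
  have hF0 : F 0 = c 0 := by
    have hradpos : (0:ℝ≥0∞) < (ofScalars ℂ c).radius := lt_of_lt_of_le one_pos hrad
    have hS := (ofScalars ℂ c).hasFPowerSeriesOnBall hradpos
    set S := (ofScalars ℂ c).sum with hSdef
    have hS0 : S 0 = c 0 := by
      have h1 := hS.hasSum (EMetric.mem_ball_self hradpos)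
      have h2 : HasSum (fun n => ofScalars ℂ c n fun _ => (0:ℂ)) (c 0) := by
        have := hasSum_single (f := fun n => c n * (0:ℂ) ^ n) 0 (by
          intro b hb; simp [zero_pow hb])
        simp only [pow_zero, mul_one] at this
        refine this.congr_fun fun n => ?_
        rw [ofScalars_apply_eq]; simp [smul_eq_mul]
      rw [zero_add] at h1
      exact h1.unique h2
    have heq : ∀ᶠ z in nhdsWithin (0:ℂ) {(0:ℂ)}ᶜ, F z = S z := by
      have hball : ball (0:ℂ) 1 ∈ nhdsWithin (0:ℂ) {(0:ℂ)}ᶜ :=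
        nhdsWithin_le_nhds (ball_mem_nhds _ one_pos)
      filter_upwards [hball, self_mem_nhdsWithin] with z hz hz0
      have h1 := hsum z hz hz0
      have hz' : z ∈ EMetric.ball (0:ℂ) (ofScalars ℂ c).radius := by
        refine lt_of_lt_of_le ?_ hrad
        rw [edist_dist, dist_zero_right, ENNReal.ofReal_lt_one]
        exact_mod_cast mem_ball_zero_iff.mp hz
      have h2 := hS.hasSum hz'
      rw [zero_add] at h2
      have h2' : HasSum (fun n => c n * z ^ n) (S z) :=
        h2.congr_fun fun n => by rw [ofScalars_apply_eq]; simp [smul_eq_mul]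
      exact h1.unique h2'
    have hFc : Filter.Tendsto F (nhdsWithin (0:ℂ) {(0:ℂ)}ᶜ) (nhds (F 0)) :=
      ((hF 0 h01).continuousAt.continuousWithinAt)
    have hSc : Filter.Tendsto S (nhdsWithin (0:ℂ) {(0:ℂ)}ᶜ) (nhds (S 0)) :=
      (hS.analyticAt.continuousAt.continuousWithinAt)
    have := hFc.congr' heq
    rw [hS0] at hSc
    exact tendsto_nhds_unique this hSc
  -- full HasSum on the unit ball
  have hsum' : ∀ z ∈ ball (0:ℂ) 1, HasSum (fun n => c n * z ^ n) (F z) := by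
    intro z hz
    rcases eq_or_ne z 0 with rfl | hz0
    · rw [hF0]
      have := hasSum_single (f := fun n => c n * (0:ℂ) ^ n) 0 (by
        intro b hb; simp [zero_pow hb])
      simpa using this
    · exact hsum z hz hz0
  have hC0 : (0:ℝ) ≤ C := le_trans (norm_nonneg _) (hb 0 h01)
  intro n
  -- bound for each radius r < 1
  have key : ∀ r : ℝ, 0 < r → r < 1 → ‖c n‖ * r ^ n ≤ C := by
    intro r hr0 hr1
    set R : NNReal := ⟨r, hr0.le⟩ with hRdef
    have hRr : (R:ℝ) = r := rfl
    have hsub : closedBall (0:ℂ) R ⊆ ball (0:ℂ) 1 := by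
      intro z hz
      simp only [mem_closedBall, dist_zero_right] at hz
      exact mem_ball_zero_iff.mpr (lt_of_le_of_lt (by exact_mod_cast hz) hr1)
    have hdiff : DifferentiableOn ℂ F (closedBall (0:ℂ) R) := fun z hz =>
      ((hF z (hsub hz)).differentiableAt).differentiableWithinAt
    have hFr := hdiff.hasFPowerSeriesOnBall (by exact_mod_cast hr0)
    -- ofScalars series also represents F on ball R
    have hqr : HasFPowerSeriesOnBall F (ofScalars ℂ c) 0 R := by
      constructor
      · exact le_trans (by exact_mod_cast (le_of_lt hr1 : r ≤ 1)) hrad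
      · exact_mod_cast hr0
      · intro y hy
        have hy1 : y ∈ ball (0:ℂ) 1 := by
          simp only [mem_emetric_ball_zero_iff] at hy
          have : ‖y‖ < (R:ℝ) := by exact_mod_cast hy
          exact mem_ball_zero_iff.mpr (this.trans hr1)
        rw [zero_add]
        exact (hsum' y hy1).congr_fun fun m => by rw [ofScalars_apply_eq]; simp [smul_eq_mul]
    have heqs : ofScalars ℂ c = cauchyPowerSeries F 0 R :=
      hqr.hasFPowerSeriesAt.eq_formalMultilinearSeries hFr.hasFPowerSeriesAt
    have hnorm : ‖c n‖ = ‖cauchyPowerSeries F 0 R n‖ := by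
      rw [← heqs, ofScalars_norm]
    -- integral estimate
    have hint : (2 * Real.pi)⁻¹ * (∫ θ : ℝ in (0)..2 * Real.pi,
        ‖F (circleMap 0 R θ)‖) ≤ C := by
      have hcont : Continuous fun θ : ℝ => ‖F (circleMap 0 (R:ℝ) θ)‖ := by
        refine Continuous.norm ?_
        rw [continuous_iff_continuousAt]
        intro θ
        have hmem : circleMap 0 (R:ℝ) θ ∈ ball (0:ℂ) 1 := by
          rw [mem_ball_zero_iff]
          simpa [norm_circleMap_zero, hRr, _root_.abs_of_nonneg hr0.le] using hr1
        exact ((hF _ hmem).continuousAt).comp (continuous_circleMap 0 (R:ℝ)).continuousAt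
      have hle : (∫ θ : ℝ in (0)..2 * Real.pi, ‖F (circleMap 0 R θ)‖)
          ≤ ∫ _ : ℝ in (0)..2 * Real.pi, C := by
        apply intervalIntegral.integral_mono_on Real.two_pi_pos.le
          (hcont.intervalIntegrable _ _) (intervalIntegrable_const)
        intro θ _
        apply hb
        rw [mem_ball_zero_iff]
        simpa [norm_circleMap_zero, hRr, _root_.abs_of_nonneg hr0.le] using hr1
      rw [intervalIntegral.integral_const, smul_eq_mul, sub_zero] at hle
      calc (2 * Real.pi)⁻¹ * (∫ θ : ℝ in (0)..2 * Real.pi, ‖F (circleMap 0 R θ)‖)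
          ≤ (2 * Real.pi)⁻¹ * (2 * Real.pi * C) := by
            apply mul_le_mul_of_nonneg_left hle
            positivity
        _ = C := by field_simp
    have hest := norm_cauchyPowerSeries_le F 0 (R:ℝ) n
    rw [← hnorm] at hest
    have habs : |(R:ℝ)| = r := by rw [_root_.abs_of_nonneg R.coe_nonneg]; exact hRr
    rw [habs] at hest
    have : ‖c n‖ * r ^ n ≤ ((2 * Real.pi)⁻¹ *
        (∫ θ : ℝ in (0)..2 * Real.pi, ‖F (circleMap 0 R θ)‖)) * r⁻¹ ^ n * r ^ n := by
      apply mul_le_mul_of_nonneg_right hest (pow_nonneg hr0.le n)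
    calc ‖c n‖ * r ^ n ≤ _ := this
      _ = (2 * Real.pi)⁻¹ * (∫ θ : ℝ in (0)..2 * Real.pi, ‖F (circleMap 0 R θ)‖) := by
          rw [mul_assoc, ← mul_pow, inv_mul_cancel₀ hr0.ne', one_pow, mul_one]
      _ ≤ C := hint
  -- pass to the limit r → 1⁻
  have htend : Filter.Tendsto (fun r : ℝ => ‖c n‖ * r ^ n)
      (nhdsWithin 1 (Set.Iio 1)) (nhds (‖c n‖)) := by
    have : Filter.Tendsto (fun r : ℝ => ‖c n‖ * r ^ n) (nhds 1) (nhds (‖c n‖ * 1 ^ n)) := by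
      exact (tendsto_const_nhds.mul ((continuous_pow n).tendsto 1))
    simpa using this.mono_left nhdsWithin_le_nhds
  refine le_of_tendsto htend ?_
  filter_upwards [Ioo_mem_nhdsLT_of_mem (by constructor <;> norm_num : (1:ℝ) ∈ Set.Ioc (1/2) 1)]
    with r hr
  exact key r (lt_trans (by norm_num) hr.1) hr.2

/-- Coefficient estimate for a logharmonic mapping `L = h · conj g` with
`Λ_{L_z̄} ≤ Λ₂` on the unit disk: the second family of bounds. -/
theorem stmt_3 (h g : ℂ → ℂ) (a b : ℕ → ℂ) (Λ₂ : ℝ)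
    (ha0 : a 0 = 0) (ha1 : a 1 = 1) (hb0 : b 0 = 1)
    (hh : AnalyticOnNhd ℂ h (ball 0 1)) (hg : AnalyticOnNhd ℂ g (ball 0 1))
    (hasum : ∀ z ∈ ball (0 : ℂ) 1, Summable fun n => a n * z ^ n)
    (hbsum : ∀ z ∈ ball (0 : ℂ) 1, Summable fun n => b n * z ^ n)
    (hhs : ∀ z ∈ ball (0 : ℂ) 1, h z = ∑' n, a n * z ^ n)
    (hgs : ∀ z ∈ ball (0 : ℂ) 1, g z = ∑' n, b n * z ^ n)
    (hΛ : ∀ z ∈ ball (0 : ℂ) 1,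
      ‖deriv h z * (starRingEnd ℂ) (deriv g z)‖ +
        ‖h z * (starRingEnd ℂ) (deriv (deriv g) z)‖ ≤ Λ₂) :
    ∀ n : ℕ, ‖(∑ j ∈ Finset.range (n + 1),
      ((j : ℂ) + 1) * ((n : ℂ) - (j : ℂ) + 1) * a (j + 1) * b (n - j + 1))‖ ≤ Λ₂ := by
  intro n
  set A : ℕ → ℂ := fun k => ((k:ℂ)+1) * a (k+1) with hA
  set B : ℕ → ℂ := fun k => ((k:ℂ)+1) * b (k+1) with hB
  set c : ℕ → ℂ := fun m => ∑ j ∈ Finset.range (m+1), A j * B (m - j) with hc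
  set F : ℂ → ℂ := fun z => deriv h z * deriv g z with hFdef
  have hpa := aux_hasFPS h a hasum hhs
  have hpb := aux_hasFPS g b hbsum hgs
  have hFa : ∀ z ∈ ball (0:ℂ) 1, AnalyticAt ℂ F z := fun z hz =>
    (hh.deriv z hz).mul (hg.deriv z hz)
  have hFsum : ∀ z ∈ ball (0:ℂ) 1, z ≠ 0 → HasSum (fun m => c m * z ^ m) (F z) := by
    intro z hz hz0
    have hA' := aux_deriv_hasSum h a hpa hz hz0
    have hB' := aux_deriv_hasSum g b hpb hz hz0
    have h1 : Summable fun k => ‖A k * z ^ k‖ := summable_norm_iff.mpr hA'.summable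
    have h2 : Summable fun k => ‖B k * z ^ k‖ := summable_norm_iff.mpr hB'.summable
    have hprod := hasSum_sum_range_mul_of_summable_norm h1 h2
    rw [hA'.tsum_eq, hB'.tsum_eq] at hprod
    refine hprod.congr_fun fun m => ?_
    rw [hc, Finset.sum_mul]
    refine Finset.sum_congr rfl fun j hj => ?_
    have hjm : j ≤ m := Nat.lt_succ_iff.mp (Finset.mem_range.mp hj)
    have : z ^ j * z ^ (m - j) = z ^ m := by
      rw [← pow_add, Nat.add_sub_cancel' hjm]
    calc A j * B (m-j) * z ^ m = A j * B (m-j) * (z ^ j * z ^ (m-j)) := by rw [this]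
      _ = A j * z ^ j * (B (m-j) * z ^ (m-j)) := by ring
  have hFb : ∀ z ∈ ball (0:ℂ) 1, ‖F z‖ ≤ Λ₂ := by
    intro z hz
    have h1 := hΛ z hz
    have h2 : ‖F z‖ = ‖deriv h z * (starRingEnd ℂ) (deriv g z)‖ := by
      simp [hFdef, map_mul]
    rw [h2]
    exact le_trans (le_add_of_nonneg_right (norm_nonneg _)) h1
  have hkey := aux_cauchy F c Λ₂ hFa hFsum hFb n
  have hceq : (∑ j ∈ Finset.range (n + 1),
      ((j : ℂ) + 1) * ((n : ℂ) - (j : ℂ) + 1) * a (j + 1) * b (n - j + 1)) = c n := by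
    rw [hc]
    refine Finset.sum_congr rfl fun j hj => ?_
    have hjn : j ≤ n := Nat.lt_succ_iff.mp (Finset.mem_range.mp hj)
    rw [hA, hB]
    have hcast : ((n - j : ℕ) : ℂ) = (n : ℂ) - (j : ℂ) := by
      push_cast [Nat.cast_sub hjn]; ring
    simp only [hcast]
    ring
  rw [hceq]
  exact hkey
end

section
/- Let L(z) = h(z)·conj(g(z)) be logharmonic in the unit disk 𝔻, where h(z) = z + Σ_{n=2}^∞ a_n z^n and g(z) = 1 + Σ_{n=1}^∞ b_n z^n are analytic on 𝔻 (with the conventions a₁ = 1, b₀ = 1). If Λ_{L_z}(z) = |h''(z)·conj(g(z))| + |h'(z)·conj(g'(z))| ≤ Λ₁ for all z ∈ 𝔻, then Σ_{n=0}^∞ |Σ_{j=0}^n (j+1)(j+2)·a_{j+2}·b_{n−j}|² + Σ_{n=0}^∞ |Σ_{j=0}^n (j+1)(n−j+1)·a_{j+1}·b_{n−j+1}|² ≤ Λ₁². -/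
set_option maxHeartbeats 1000000

open Complex Metric Finset Filter

lemma geom_orth {M : ℕ} (hM : 0 < M) {n m : ℕ} (hn : n < M) (hm : m < M) :
    ∑ k ∈ Finset.range M, (Complex.exp (2 * Real.pi * Complex.I / M) ^ n *
      (starRingEnd ℂ) (Complex.exp (2 * Real.pi * Complex.I / M)) ^ m) ^ k
      = if n = m then (M : ℂ) else 0 := by
  set ω := Complex.exp (2 * Real.pi * Complex.I / M) with hω
  have hprim : IsPrimitiveRoot ω M := Complex.isPrimitiveRoot_exp M hM.ne'
  have hω0 : ω ≠ 0 := Complex.exp_ne_zero _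
  have hconj : (starRingEnd ℂ) ω = ω⁻¹ := by
    rw [hω, ← Complex.exp_conj, ← Complex.exp_neg]
    congr 1
    simp only [map_div₀, map_mul, Complex.conj_I, Complex.conj_ofReal, map_ofNat,
      map_natCast, neg_div, neg_mul, mul_neg]
  have hζ : ω ^ n * (starRingEnd ℂ) ω ^ m = ω ^ ((n : ℤ) - (m : ℤ)) := by
    rw [hconj, sub_eq_add_neg, zpow_add₀ hω0, zpow_natCast, ← zpow_natCast ω⁻¹ m,
      inv_zpow, ← zpow_neg]
  rw [hζ]
  by_cases hnm : n = m
  · subst hnm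
    simp
  · rw [if_neg hnm]
    have hne1 : ω ^ ((n : ℤ) - (m : ℤ)) ≠ 1 := by
      intro hc
      have := (hprim.zpow_eq_one_iff_dvd _).mp hc
      have h0 := Int.eq_zero_of_abs_lt_dvd this (by
        rw [abs_sub_lt_iff]
        constructor <;> [skip; skip] <;> push_cast <;> omega)
      exact hnm (by exact_mod_cast sub_eq_zero.mp h0)
    rw [geom_sum_eq hne1]
    have : (ω ^ ((n : ℤ) - (m : ℤ))) ^ M = 1 := by
      rw [← zpow_natCast, ← zpow_mul, mul_comm, zpow_mul, zpow_natCast, hprim.pow_eq_one,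
        one_zpow]
    rw [this, sub_self, zero_div]

lemma discrete_parseval (M : ℕ) (hM : 0 < M) (e : ℕ → ℂ) (z : ℂ) :
    ∑ k ∈ Finset.range M, Complex.normSq (∑ n ∈ Finset.range M,
        e n * (z * Complex.exp (2 * Real.pi * Complex.I / M) ^ k) ^ n)
      = M * ∑ n ∈ Finset.range M, Complex.normSq (e n * z ^ n) := by
  set ω := Complex.exp (2 * Real.pi * Complex.I / M) with hω
  have expand : ∀ k, (∑ n ∈ Finset.range M, e n * (z * ω ^ k) ^ n) *
      (starRingEnd ℂ) (∑ n ∈ Finset.range M, e n * (z * ω ^ k) ^ n)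
      = ∑ n ∈ Finset.range M, ∑ m ∈ Finset.range M,
        (e n * z ^ n * (starRingEnd ℂ) (e m * z ^ m)) *
          (ω ^ n * (starRingEnd ℂ) ω ^ m) ^ k := by
    intro k
    rw [map_sum, Finset.sum_mul_sum]
    refine Finset.sum_congr rfl fun n _ => Finset.sum_congr rfl fun m _ => ?_
    simp only [map_mul, map_pow, mul_pow, ← pow_mul]
    ring_nf
  have key : ∑ k ∈ Finset.range M, ((∑ n ∈ Finset.range M, e n * (z * ω ^ k) ^ n) *
      (starRingEnd ℂ) (∑ n ∈ Finset.range M, e n * (z * ω ^ k) ^ n))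
      = (M : ℂ) * ∑ n ∈ Finset.range M, (e n * z ^ n) * (starRingEnd ℂ) (e n * z ^ n) := by
    rw [Finset.sum_congr rfl fun k _ => expand k]
    rw [Finset.sum_comm]
    have : ∀ n ∈ Finset.range M, (∑ k ∈ Finset.range M, ∑ m ∈ Finset.range M,
        (e n * z ^ n * (starRingEnd ℂ) (e m * z ^ m)) * (ω ^ n * (starRingEnd ℂ) ω ^ m) ^ k)
        = (e n * z ^ n) * (starRingEnd ℂ) (e n * z ^ n) * M := by
      intro n hn
      rw [Finset.sum_comm]
      have : ∀ m ∈ Finset.range M, (∑ k ∈ Finset.range M,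
          (e n * z ^ n * (starRingEnd ℂ) (e m * z ^ m)) * (ω ^ n * (starRingEnd ℂ) ω ^ m) ^ k)
          = if n = m then (e n * z ^ n * (starRingEnd ℂ) (e m * z ^ m)) * M else 0 := by
        intro m hm
        rw [← Finset.mul_sum, geom_orth hM (Finset.mem_range.mp hn) (Finset.mem_range.mp hm)]
        split <;> simp
      rw [Finset.sum_congr rfl this, Finset.sum_ite_eq (Finset.range M) n
        (fun m => e n * z ^ n * (starRingEnd ℂ) (e m * z ^ m) * M), if_pos hn]
    rw [Finset.sum_congr rfl this, ← Finset.sum_mul]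
    ring
  have cast1 : ∀ w : ℂ, w * (starRingEnd ℂ) w = (Complex.normSq w : ℂ) := fun w =>
    Complex.mul_conj w
  simp only [cast1] at key
  exact_mod_cast key

lemma iteratedDeriv_of_tsum (f : ℂ → ℂ) (c : ℕ → ℂ)
    (hsum : ∀ z ∈ ball (0:ℂ) 1, Summable fun n => c n * z ^ n)
    (hfs : ∀ z ∈ ball (0:ℂ) 1, f z = ∑' n, c n * z ^ n) (n : ℕ) :
    iteratedDeriv n f 0 = (n.factorial : ℂ) * c n := by
  have hps : HasFPowerSeriesOnBall f (FormalMultilinearSeries.ofScalars ℂ c) 0 1 := by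
    refine ⟨?_, one_pos, fun {y} hy => ?_⟩
    · refine ENNReal.le_of_forall_nnreal_lt fun r hr => ?_
      have hr1 : (r : ℝ) < 1 := by exact_mod_cast hr
      have hrball : (((r : ℝ) : ℂ)) ∈ ball (0:ℂ) 1 := by
        rw [mem_ball_zero_iff, Complex.norm_real, Real.norm_eq_abs,
          _root_.abs_of_nonneg r.coe_nonneg]
        exact hr1
      have hs := hsum _ hrball
      apply FormalMultilinearSeries.le_radius_of_tendsto _ (l := 0)
      have ht := hs.tendsto_atTop_zero.norm
      rw [norm_zero] at ht
      convert ht using 2 with n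
      rw [FormalMultilinearSeries.ofScalars_norm, norm_mul, norm_pow, Complex.norm_real,
        Real.norm_eq_abs, _root_.abs_of_nonneg r.coe_nonneg]
    · have hyball : y ∈ ball (0:ℂ) 1 := by
        rw [mem_ball_zero_iff]
        have := mem_emetric_ball_zero_iff.mp hy
        rw [← ofReal_norm, ENNReal.ofReal_lt_one] at this
        exact this
      have hsy := (hsum y hyball).hasSum
      rw [← hfs y hyball] at hsy
      have : (fun n => FormalMultilinearSeries.ofScalars ℂ c n fun _ => y)
          = fun n => c n * y ^ n := by
        funext n
        rw [FormalMultilinearSeries.ofScalars_apply_eq, smul_eq_mul]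
      rw [this, zero_add]
      exact hsy
  have h2 := hps.factorial_smul 1 n
  rw [FormalMultilinearSeries.ofScalars_apply_eq, one_pow, smul_eq_mul, mul_one,
    nsmul_eq_mul] at h2
  rw [iteratedDeriv_eq_iteratedFDeriv, ← h2]

lemma hasSum_deriv_one (f : ℂ → ℂ) (c : ℕ → ℂ)
    (hf : AnalyticOnNhd ℂ f (ball 0 1))
    (hsum : ∀ z ∈ ball (0:ℂ) 1, Summable fun n => c n * z ^ n)
    (hfs : ∀ z ∈ ball (0:ℂ) 1, f z = ∑' n, c n * z ^ n)
    {z : ℂ} (hz : z ∈ ball (0:ℂ) 1) :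
    HasSum (fun n : ℕ => ((n:ℂ) + 1) * c (n + 1) * z ^ n) (deriv f z) := by
  have hdiff : DifferentiableOn ℂ (deriv f) (ball 0 1) :=
    (hf.deriv).differentiableOn
  have H := Complex.hasSum_taylorSeries_on_ball hdiff hz
  have hco : ∀ n : ℕ, iteratedDeriv n (deriv f) 0 = ((n+1).factorial : ℂ) * c (n+1) := by
    intro n
    have e1 : iteratedDeriv n (deriv f) 0 = iteratedDeriv (n+1) f 0 := by
      rw [iteratedDeriv_succ']
    rw [e1, iteratedDeriv_of_tsum f c hsum hfs]
  have : (fun n : ℕ => (n.factorial : ℂ)⁻¹ • (z - 0) ^ n • iteratedDeriv n (deriv f) 0)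
      = fun n : ℕ => ((n:ℂ) + 1) * c (n + 1) * z ^ n := by
    funext n
    rw [hco n, sub_zero, smul_eq_mul, smul_eq_mul]
    have hfac : ((n+1).factorial : ℂ) = ((n:ℂ)+1) * (n.factorial : ℂ) := by
      rw [Nat.factorial_succ]
      push_cast
      ring
    have hne : (n.factorial : ℂ) ≠ 0 := Nat.cast_ne_zero.mpr n.factorial_ne_zero
    rw [hfac]
    field_simp [hfac]
  rwa [this] at H

lemma hasSum_deriv_two (f : ℂ → ℂ) (c : ℕ → ℂ)
    (hf : AnalyticOnNhd ℂ f (ball 0 1))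
    (hsum : ∀ z ∈ ball (0:ℂ) 1, Summable fun n => c n * z ^ n)
    (hfs : ∀ z ∈ ball (0:ℂ) 1, f z = ∑' n, c n * z ^ n)
    {z : ℂ} (hz : z ∈ ball (0:ℂ) 1) :
    HasSum (fun n : ℕ => ((n:ℂ) + 1) * ((n:ℂ) + 2) * c (n + 2) * z ^ n) (deriv (deriv f) z) := by
  have hdiff : DifferentiableOn ℂ (deriv (deriv f)) (ball 0 1) :=
    ((hf.deriv).deriv).differentiableOn
  have H := Complex.hasSum_taylorSeries_on_ball hdiff hz
  have hco : ∀ n : ℕ, iteratedDeriv n (deriv (deriv f)) 0 = ((n+2).factorial : ℂ) * c (n+2) := by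
    intro n
    have e1 : iteratedDeriv n (deriv (deriv f)) 0 = iteratedDeriv (n+2) f 0 := by
      show _ = iteratedDeriv (n+1+1) f 0
      rw [iteratedDeriv_succ', iteratedDeriv_succ']
    rw [e1, iteratedDeriv_of_tsum f c hsum hfs]
  have : (fun n : ℕ => (n.factorial : ℂ)⁻¹ • (z - 0) ^ n • iteratedDeriv n (deriv (deriv f)) 0)
      = fun n : ℕ => ((n:ℂ) + 1) * ((n:ℂ) + 2) * c (n + 2) * z ^ n := by
    funext n
    rw [hco n, sub_zero, smul_eq_mul, smul_eq_mul]
    have hfac : ((n+2).factorial : ℂ) = ((n:ℂ)+2) * (((n:ℂ)+1) * (n.factorial : ℂ)) := by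
      show ((n+1+1).factorial : ℂ) = _
      rw [Nat.factorial_succ, Nat.factorial_succ]
      push_cast
      ring
    have hne : (n.factorial : ℂ) ≠ 0 := Nat.cast_ne_zero.mpr n.factorial_ne_zero
    rw [hfac]
    field_simp [hfac]
  rwa [this] at H

lemma abs_summable_of_summable (c : ℕ → ℂ)
    (hsum : ∀ z ∈ ball (0:ℂ) 1, Summable fun n => c n * z ^ n)
    {w : ℂ} (hw : w ∈ ball (0:ℂ) 1) :
    Summable fun n => ‖c n * w ^ n‖ := by
  have hr1 : ‖w‖ < 1 := mem_ball_zero_iff.mp hw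
  have hr0 : 0 ≤ ‖w‖ := norm_nonneg w
  set ρ : ℝ := (1 + ‖w‖) / 2 with hρdef
  have hrρ : ‖w‖ < ρ := by rw [hρdef]; linarith
  have hρ1 : ρ < 1 := by rw [hρdef]; linarith
  have hρ0 : 0 < ρ := by rw [hρdef]; linarith
  have hρball : ((ρ : ℂ)) ∈ ball (0:ℂ) 1 := by
    rw [mem_ball_zero_iff, Complex.norm_real, Real.norm_eq_abs, abs_of_pos hρ0]
    exact hρ1
  have hs := hsum _ hρball
  have hb := hs.tendsto_atTop_zero.norm
  rw [norm_zero] at hb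
  obtain ⟨C, hC⟩ := hb.bddAbove_range
  have hCb : ∀ n, ‖c n‖ * ρ ^ n ≤ C := by
    intro n
    have := hC (Set.mem_range_self (f := fun n => ‖c n * (ρ:ℂ) ^ n‖) n)
    rwa [norm_mul, norm_pow, Complex.norm_real, Real.norm_eq_abs, abs_of_pos hρ0] at this
  refine Summable.of_nonneg_of_le (fun n => norm_nonneg _) (fun n => ?_)
    ((summable_geometric_of_lt_one (r := ‖w‖ / ρ) (div_nonneg hr0 hρ0.le)
      ((div_lt_one hρ0).mpr hrρ)).mul_left C)
  rw [norm_mul, norm_pow, div_pow, ← mul_div_assoc, le_div_iff₀ (by positivity)]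
  calc ‖c n‖ * ‖w‖ ^ n * ρ ^ n = (‖c n‖ * ρ ^ n) * ‖w‖ ^ n := by ring
  _ ≤ C * ‖w‖ ^ n := mul_le_mul_of_nonneg_right (hCb n) (by positivity)

lemma main_aux (F G : ℂ → ℂ) (c d : ℕ → ℂ) (Λ₁ : ℝ)
    (hFsum : ∀ z ∈ ball (0:ℂ) 1, HasSum (fun n => c n * z ^ n) (F z))
    (hGsum : ∀ z ∈ ball (0:ℂ) 1, HasSum (fun n => d n * z ^ n) (G z))
    (hFabs : ∀ z ∈ ball (0:ℂ) 1, Summable fun n => ‖c n * z ^ n‖)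
    (hGabs : ∀ z ∈ ball (0:ℂ) 1, Summable fun n => ‖d n * z ^ n‖)
    (hL : ∀ z ∈ ball (0:ℂ) 1, ‖F z‖ + ‖G z‖ ≤ Λ₁) (K : ℕ) :
    ∑ n ∈ Finset.range K, (Complex.normSq (c n) + Complex.normSq (d n)) ≤ Λ₁ ^ 2 := by
  have hΛ0 : 0 ≤ Λ₁ := le_trans (by positivity) (hL 0 (by simp))
  have nsq : ∀ w : ℂ, Complex.normSq w = ‖w‖ ^ 2 := fun w => by
    rw [Complex.normSq_eq_norm_sq]
  -- Step 1: fixed radius r, fixed M ≥ max K 1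
  have step1 : ∀ r : ℝ, 0 ≤ r → r < 1 → ∀ M : ℕ, K ≤ M → 1 ≤ M →
      ∑ n ∈ Finset.range K,
        (Complex.normSq (c n * (r:ℂ) ^ n) + Complex.normSq (d n * (r:ℂ) ^ n))
      ≤ (Λ₁ + ∑' n, ‖c (n + M) * (r:ℂ) ^ (n + M)‖
            + ∑' n, ‖d (n + M) * (r:ℂ) ^ (n + M)‖) ^ 2 := by
    intro r hr0 hr1 M hKM hM1
    have hM0 : 0 < M := hM1
    have hrball : ((r:ℂ)) ∈ ball (0:ℂ) 1 := by
      rw [mem_ball_zero_iff, Complex.norm_real, Real.norm_eq_abs, _root_.abs_of_nonneg hr0]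
      exact hr1
    set ω : ℂ := Complex.exp (2 * Real.pi * Complex.I / M) with hωdef
    have habsω : ‖ω‖ = 1 := by
      have harg : (2 * Real.pi * Complex.I / M) = ((2 * Real.pi / M : ℝ) : ℂ) * Complex.I := by
        push_cast; ring
      rw [hωdef, harg, Complex.norm_exp_ofReal_mul_I]
    set TC : ℝ := ∑' n, ‖c (n + M) * (r:ℂ) ^ (n + M)‖ with hTCdef
    set TD : ℝ := ∑' n, ‖d (n + M) * (r:ℂ) ^ (n + M)‖ with hTDdef
    have hTC0 : 0 ≤ TC := tsum_nonneg fun n => norm_nonneg _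
    have hTD0 : 0 ≤ TD := tsum_nonneg fun n => norm_nonneg _
    have hzk : ∀ k : ℕ, ‖(r:ℂ) * ω ^ k‖ = r := by
      intro k
      rw [norm_mul, norm_pow, habsω, one_pow, mul_one, Complex.norm_real, Real.norm_eq_abs,
        _root_.abs_of_nonneg hr0]
    have hzkball : ∀ k : ℕ, ((r:ℂ) * ω ^ k) ∈ ball (0:ℂ) 1 := fun k => by
      rw [mem_ball_zero_iff, hzk k]; exact hr1
    have key_k : ∀ k : ℕ,
        Complex.normSq (∑ n ∈ Finset.range M, c n * ((r:ℂ) * ω ^ k) ^ n)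
          + Complex.normSq (∑ n ∈ Finset.range M, d n * ((r:ℂ) * ω ^ k) ^ n)
        ≤ (Λ₁ + TC + TD) ^ 2 := by
      intro k
      set zk := (r:ℂ) * ω ^ k with hzkdef
      have hnormeq : ∀ (e : ℕ → ℂ) (n : ℕ), ‖e n * zk ^ n‖ = ‖e n * (r:ℂ) ^ n‖ := by
        intro e n
        rw [norm_mul, norm_mul, norm_pow, norm_pow, hzk k, Complex.norm_real,
          Real.norm_eq_abs, _root_.abs_of_nonneg hr0]
      have boundP : ∀ (e : ℕ → ℂ) (Fv : ℂ), HasSum (fun n => e n * zk ^ n) Fv →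
          (Summable fun n => ‖e n * (r:ℂ) ^ n‖) →
          ‖∑ n ∈ Finset.range M, e n * zk ^ n‖
            ≤ ‖Fv‖ + ∑' n, ‖e (n + M) * (r:ℂ) ^ (n + M)‖ := by
        intro e Fv hFv habs
        have habs' : Summable fun n => ‖e n * zk ^ n‖ := by
          simpa only [hnormeq] using habs
        have hsplit := Summable.sum_add_tsum_nat_add' (f := fun n => e n * zk ^ n) (k := M)
          ((summable_nat_add_iff (f := fun n => e n * zk ^ n) M).mpr habs'.of_norm)
        have hpart : ∑ n ∈ Finset.range M, e n * zk ^ n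
            = Fv - ∑' n, e (n + M) * zk ^ (n + M) := by
          rw [← hFv.tsum_eq, ← hsplit]; ring
        rw [hpart]
        refine (norm_sub_le _ _).trans ?_
        gcongr
        have hshift : Summable fun n => ‖e (n + M) * zk ^ (n + M)‖ :=
          (summable_nat_add_iff (f := fun n => ‖e n * zk ^ n‖) M).mpr habs'
        refine (norm_tsum_le_tsum_norm (f := fun n => e (n + M) * zk ^ (n + M)) hshift).trans ?_
        exact le_of_eq (tsum_congr fun n => hnormeq e (n + M))
      have h1 := boundP c (F zk) (hFsum zk (hzkball k)) (hFabs (r:ℂ) hrball)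
      have h2 := boundP d (G zk) (hGsum zk (hzkball k)) (hGabs (r:ℂ) hrball)
      have hFG := hL zk (hzkball k)
      rw [nsq, nsq]
      rw [← hTCdef] at h1
      rw [← hTDdef] at h2
      nlinarith [norm_nonneg (∑ n ∈ Finset.range M, c n * zk ^ n),
        norm_nonneg (∑ n ∈ Finset.range M, d n * zk ^ n),
        norm_nonneg (F zk), norm_nonneg (G zk), hTC0, hTD0,
        mul_nonneg (norm_nonneg (F zk)) (norm_nonneg (G zk))]
    have hsumk : ∑ k ∈ Finset.range M,
        (Complex.normSq (∑ n ∈ Finset.range M, c n * ((r:ℂ) * ω ^ k) ^ n)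
          + Complex.normSq (∑ n ∈ Finset.range M, d n * ((r:ℂ) * ω ^ k) ^ n))
        ≤ M * (Λ₁ + TC + TD) ^ 2 := by
      calc _ ≤ ∑ _k ∈ Finset.range M, (Λ₁ + TC + TD) ^ 2 :=
            Finset.sum_le_sum fun k _ => key_k k
      _ = M * (Λ₁ + TC + TD) ^ 2 := by
          rw [Finset.sum_const, Finset.card_range, nsmul_eq_mul]
    rw [Finset.sum_add_distrib] at hsumk
    have P1 := discrete_parseval M hM0 c (r:ℂ)
    have P2 := discrete_parseval M hM0 d (r:ℂ)
    rw [← hωdef] at P1 P2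
    rw [P1, P2, ← mul_add] at hsumk
    have hMR : (0:ℝ) < (M:ℝ) := by exact_mod_cast hM0
    have mainM := le_of_mul_le_mul_left hsumk hMR
    calc ∑ n ∈ Finset.range K,
        (Complex.normSq (c n * (r:ℂ) ^ n) + Complex.normSq (d n * (r:ℂ) ^ n))
        ≤ ∑ n ∈ Finset.range M,
          (Complex.normSq (c n * (r:ℂ) ^ n) + Complex.normSq (d n * (r:ℂ) ^ n)) := by
          refine Finset.sum_le_sum_of_subset_of_nonneg
            (Finset.range_subset_range.mpr hKM) fun n _ _ =>
            add_nonneg (Complex.normSq_nonneg _) (Complex.normSq_nonneg _)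
    _ = ∑ n ∈ Finset.range M, Complex.normSq (c n * (r:ℂ) ^ n)
          + ∑ n ∈ Finset.range M, Complex.normSq (d n * (r:ℂ) ^ n) :=
        Finset.sum_add_distrib
    _ ≤ (Λ₁ + TC + TD) ^ 2 := mainM
  -- Step 2: M → ∞ for fixed r
  have step2 : ∀ r : ℝ, 0 ≤ r → r < 1 →
      ∑ n ∈ Finset.range K,
        (Complex.normSq (c n * (r:ℂ) ^ n) + Complex.normSq (d n * (r:ℂ) ^ n)) ≤ Λ₁ ^ 2 := by
    intro r hr0 hr1
    have hrball : ((r:ℂ)) ∈ ball (0:ℂ) 1 := by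
      rw [mem_ball_zero_iff, Complex.norm_real, Real.norm_eq_abs, _root_.abs_of_nonneg hr0]
      exact hr1
    have hc := hFabs (r:ℂ) hrball
    have hd := hGabs (r:ℂ) hrball
    have hTCtend : Tendsto (fun M : ℕ => ∑' n, ‖c (n + M) * (r:ℂ) ^ (n + M)‖) atTop (nhds 0) := by
      have heq : ∀ M : ℕ, ∑' n, ‖c (n + M) * (r:ℂ) ^ (n + M)‖
          = (∑' n, ‖c n * (r:ℂ) ^ n‖) - ∑ n ∈ Finset.range M, ‖c n * (r:ℂ) ^ n‖ := by
        intro M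
        have := Summable.sum_add_tsum_nat_add' (f := fun n => ‖c n * (r:ℂ) ^ n‖) (k := M)
          ((summable_nat_add_iff (f := fun n => ‖c n * (r:ℂ) ^ n‖) M).mpr hc)
        linarith
      simp only [heq]
      have := hc.hasSum.tendsto_sum_nat
      have h2 := (tendsto_const_nhds (x := ∑' n, ‖c n * (r:ℂ) ^ n‖) (f := atTop (α := ℕ))).sub this
      simpa using h2
    have hTDtend : Tendsto (fun M : ℕ => ∑' n, ‖d (n + M) * (r:ℂ) ^ (n + M)‖) atTop (nhds 0) := by
      have heq : ∀ M : ℕ, ∑' n, ‖d (n + M) * (r:ℂ) ^ (n + M)‖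
          = (∑' n, ‖d n * (r:ℂ) ^ n‖) - ∑ n ∈ Finset.range M, ‖d n * (r:ℂ) ^ n‖ := by
        intro M
        have := Summable.sum_add_tsum_nat_add' (f := fun n => ‖d n * (r:ℂ) ^ n‖) (k := M)
          ((summable_nat_add_iff (f := fun n => ‖d n * (r:ℂ) ^ n‖) M).mpr hd)
        linarith
      simp only [heq]
      have := hd.hasSum.tendsto_sum_nat
      have h2 := (tendsto_const_nhds (x := ∑' n, ‖d n * (r:ℂ) ^ n‖) (f := atTop (α := ℕ))).sub this
      simpa using h2
    have htend : Tendsto (fun M : ℕ => (Λ₁ + ∑' n, ‖c (n + M) * (r:ℂ) ^ (n + M)‖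
        + ∑' n, ‖d (n + M) * (r:ℂ) ^ (n + M)‖) ^ 2) atTop (nhds (Λ₁ ^ 2)) := by
      have := (((tendsto_const_nhds (x := Λ₁) (f := atTop (α := ℕ))).add hTCtend).add
        hTDtend).pow 2
      simpa using this
    refine ge_of_tendsto htend ?_
    filter_upwards [eventually_ge_atTop K, eventually_ge_atTop 1] with M hKM hM1
    exact step1 r hr0 hr1 M hKM hM1
  -- Step 3: r → 1
  have useq : Tendsto (fun m : ℕ => 1 - 1 / ((m:ℝ) + 1)) atTop (nhds 1) := by
    have := tendsto_one_div_add_atTop_nhds_zero_nat (𝕜 := ℝ)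
    have h2 := (tendsto_const_nhds (x := (1:ℝ)) (f := atTop (α := ℕ))).sub this
    simpa using h2
  have hcont : Continuous (fun r : ℝ => ∑ n ∈ Finset.range K,
      (Complex.normSq (c n * (r:ℂ) ^ n) + Complex.normSq (d n * (r:ℂ) ^ n))) := by
    refine continuous_finset_sum _ fun n _ => Continuous.add ?_ ?_ <;>
      exact Complex.continuous_normSq.comp
        (continuous_const.mul (Complex.continuous_ofReal.pow n))
  have h1 := (hcont.tendsto 1).comp useq
  have hfinal : ((fun r : ℝ => ∑ n ∈ Finset.range K,
      (Complex.normSq (c n * (r:ℂ) ^ n) + Complex.normSq (d n * (r:ℂ) ^ n))) 1) ≤ Λ₁ ^ 2 := by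
    refine le_of_tendsto h1 ?_
    filter_upwards [] with m
    simp only [Function.comp_apply]
    have h0m : (0:ℝ) < (m:ℝ) + 1 := by positivity
    have hle : 1 / ((m:ℝ) + 1) ≤ 1 := by
      rw [div_le_one h0m]; linarith
    have hpos : 0 < 1 / ((m:ℝ) + 1) := by positivity
    exact step2 _ (by linarith) (by linarith)
  simpa using hfinal

lemma cauchy_hasSum (u v : ℕ → ℂ) (z : ℂ)
    (su : Summable fun n => ‖u n * z ^ n‖) (sv : Summable fun n => ‖v n * z ^ n‖)
    (U V : ℂ) (hU : HasSum (fun n => u n * z ^ n) U) (hV : HasSum (fun n => v n * z ^ n) V) :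
    HasSum (fun n : ℕ => (∑ j ∈ Finset.range (n + 1), u j * v (n - j)) * z ^ n) (U * V)
    ∧ Summable fun n : ℕ => ‖(∑ j ∈ Finset.range (n + 1), u j * v (n - j)) * z ^ n‖ := by
  have inner_eq : ∀ n : ℕ, ∑ j ∈ Finset.range (n + 1), (u j * z ^ j) * (v (n - j) * z ^ (n - j))
      = (∑ j ∈ Finset.range (n + 1), u j * v (n - j)) * z ^ n := by
    intro n
    rw [Finset.sum_mul]
    refine Finset.sum_congr rfl fun j hj => ?_
    have hj' : j ≤ n := Nat.lt_succ_iff.mp (Finset.mem_range.mp hj)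
    rw [show u j * z ^ j * (v (n - j) * z ^ (n - j))
        = u j * v (n - j) * (z ^ j * z ^ (n - j)) by ring, ← pow_add,
      Nat.add_sub_cancel' hj']
  have H := hasSum_sum_range_mul_of_summable_norm su sv
  rw [hU.tsum_eq, hV.tsum_eq] at H
  constructor
  · simpa only [inner_eq] using H
  · have := summable_norm_sum_mul_range_of_summable_norm su sv
    simpa only [inner_eq] using this

/-- Coefficient estimate for a logharmonic mapping `L = h · conj g` with
`Λ_{L_z} ≤ Λ₁` on the unit disk: the first family of bounds. -/
theorem stmt_4 (h g : ℂ → ℂ) (a b : ℕ → ℂ) (Λ₁ : ℝ)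
    (ha0 : a 0 = 0) (ha1 : a 1 = 1) (hb0 : b 0 = 1)
    (hh : AnalyticOnNhd ℂ h (ball 0 1)) (hg : AnalyticOnNhd ℂ g (ball 0 1))
    (hasum : ∀ z ∈ ball (0 : ℂ) 1, Summable fun n => a n * z ^ n)
    (hbsum : ∀ z ∈ ball (0 : ℂ) 1, Summable fun n => b n * z ^ n)
    (hhs : ∀ z ∈ ball (0 : ℂ) 1, h z = ∑' n, a n * z ^ n)
    (hgs : ∀ z ∈ ball (0 : ℂ) 1, g z = ∑' n, b n * z ^ n)
    (hΛ : ∀ z ∈ ball (0 : ℂ) 1,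
      Norm.norm (deriv (deriv h) z * (starRingEnd ℂ) (g z)) +
        Norm.norm (deriv h z * (starRingEnd ℂ) (deriv g z)) ≤ Λ₁) :
    (∑' n : ℕ, (Norm.norm (∑ j ∈ Finset.range (n + 1),
        ((j : ℂ) + 1) * ((j : ℂ) + 2) * a (j + 2) * b (n - j))) ^ 2) +
      (∑' n : ℕ, (Norm.norm (∑ j ∈ Finset.range (n + 1),
        ((j : ℂ) + 1) * ((n : ℂ) - (j : ℂ) + 1) * a (j + 1) * b (n - j + 1))) ^ 2)
      ≤ Λ₁ ^ 2 := by
  -- summability of the various coefficient series at every point of the ball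
  have hA2sum : ∀ w ∈ ball (0:ℂ) 1,
      Summable fun n : ℕ => (((n:ℂ) + 1) * ((n:ℂ) + 2) * a (n + 2)) * w ^ n :=
    fun w hw => (hasSum_deriv_two h a hh hasum hhs hw).summable
  have hA1sum : ∀ w ∈ ball (0:ℂ) 1,
      Summable fun n : ℕ => (((n:ℂ) + 1) * a (n + 1)) * w ^ n :=
    fun w hw => (hasSum_deriv_one h a hh hasum hhs hw).summable
  have hB1sum : ∀ w ∈ ball (0:ℂ) 1,
      Summable fun n : ℕ => (((n:ℂ) + 1) * b (n + 1)) * w ^ n :=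
    fun w hw => (hasSum_deriv_one g b hg hbsum hgs hw).summable
  have hBz : ∀ z ∈ ball (0:ℂ) 1, HasSum (fun n => b n * z ^ n) (g z) := by
    intro z hz
    have := (hbsum z hz).hasSum
    rwa [← hgs z hz] at this
  -- the index transformation for the second family
  have dd_eq : ∀ n : ℕ, (∑ j ∈ Finset.range (n + 1),
      ((j : ℂ) + 1) * ((n : ℂ) - (j : ℂ) + 1) * a (j + 1) * b (n - j + 1))
      = ∑ j ∈ Finset.range (n + 1),
        (((j:ℂ) + 1) * a (j + 1)) * (((((n - j : ℕ)):ℂ) + 1) * b ((n - j) + 1)) := by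
    intro n
    refine Finset.sum_congr rfl fun j hj => ?_
    have hj' : j ≤ n := Nat.lt_succ_iff.mp (Finset.mem_range.mp hj)
    rw [Nat.cast_sub hj']
    ring
  -- apply the main estimate
  have main := main_aux (fun z => deriv (deriv h) z * g z) (fun z => deriv h z * deriv g z)
    (fun n => ∑ j ∈ Finset.range (n + 1), ((j : ℂ) + 1) * ((j : ℂ) + 2) * a (j + 2) * b (n - j))
    (fun n => ∑ j ∈ Finset.range (n + 1),
      ((j : ℂ) + 1) * ((n : ℂ) - (j : ℂ) + 1) * a (j + 1) * b (n - j + 1)) Λ₁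
    (fun z hz => (cauchy_hasSum _ b z
        (abs_summable_of_summable _ hA2sum hz) (abs_summable_of_summable b hbsum hz)
        _ _ (hasSum_deriv_two h a hh hasum hhs hz) (hBz z hz)).1)
    (fun z hz => by
      have H := (cauchy_hasSum (fun j => ((j:ℂ) + 1) * a (j + 1))
        (fun j => ((j:ℂ) + 1) * b (j + 1)) z
        (abs_summable_of_summable _ hA1sum hz) (abs_summable_of_summable _ hB1sum hz)
        _ _ (hasSum_deriv_one h a hh hasum hhs hz) (hasSum_deriv_one g b hg hbsum hgs hz)).1
      simpa only [dd_eq] using H)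
    (fun z hz => (cauchy_hasSum _ b z
        (abs_summable_of_summable _ hA2sum hz) (abs_summable_of_summable b hbsum hz)
        _ _ (hasSum_deriv_two h a hh hasum hhs hz) (hBz z hz)).2)
    (fun z hz => by
      have H := (cauchy_hasSum (fun j => ((j:ℂ) + 1) * a (j + 1))
        (fun j => ((j:ℂ) + 1) * b (j + 1)) z
        (abs_summable_of_summable _ hA1sum hz) (abs_summable_of_summable _ hB1sum hz)
        _ _ (hasSum_deriv_one h a hh hasum hhs hz) (hasSum_deriv_one g b hg hbsum hgs hz)).2
      simpa only [dd_eq] using H)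
    (fun z hz => by
      have hv := hΛ z hz
      have e1 : Norm.norm (deriv (deriv h) z * (starRingEnd ℂ) (g z))
          = ‖deriv (deriv h) z * g z‖ := by
        rw [norm_mul, norm_mul, Complex.norm_conj]
      have e2 : Norm.norm (deriv h z * (starRingEnd ℂ) (deriv g z))
          = ‖deriv h z * deriv g z‖ := by
        rw [norm_mul, norm_mul, Complex.norm_conj]
      rw [e1, e2] at hv
      exact hv)
  -- conclude
  have s1 : Summable (fun n : ℕ => Complex.normSq (∑ j ∈ Finset.range (n + 1),
      ((j : ℂ) + 1) * ((j : ℂ) + 2) * a (j + 2) * b (n - j))) := by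
    refine summable_of_sum_range_le (c := Λ₁ ^ 2) (fun n => Complex.normSq_nonneg _) (fun K => ?_)
    refine le_trans (Finset.sum_le_sum fun i _ =>
      le_add_of_nonneg_right (Complex.normSq_nonneg _)) (main K)
  have s2 : Summable (fun n : ℕ => Complex.normSq (∑ j ∈ Finset.range (n + 1),
      ((j : ℂ) + 1) * ((n : ℂ) - (j : ℂ) + 1) * a (j + 1) * b (n - j + 1))) := by
    refine summable_of_sum_range_le (c := Λ₁ ^ 2) (fun n => Complex.normSq_nonneg _) (fun K => ?_)
    refine le_trans (Finset.sum_le_sum fun i _ =>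
      le_add_of_nonneg_left (Complex.normSq_nonneg _)) (main K)
  simp only [← Complex.normSq_eq_norm_sq]
  rw [← Summable.tsum_add s1 s2]
  exact Real.tsum_le_of_sum_range_le
    (fun n => add_nonneg (Complex.normSq_nonneg _) (Complex.normSq_nonneg _)) main
end

section
/- Let L(z) = h(z)·conj(g(z)) be logharmonic in the unit disk 𝔻, where h, g are analytic on 𝔻 and h(0) = 0. If Λ_L(z) = |h'(z)·g(z)| + |h(z)·g'(z)| ≤ Λ₂ for all z ∈ 𝔻, then |L(z)| ≤ Λ₂·|z| for every z ∈ 𝔻. -/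
open Complex Metric

/-- If `L = h · conj g` is logharmonic on the unit disk with `h 0 = 0` and
`Λ_L(z) = |h' g| + |h g'| ≤ Λ₂` there, then `|L z| ≤ Λ₂ |z|` on the disk. -/
theorem stmt_5 (h g : ℂ → ℂ) (Λ₂ : ℝ)
    (hh : AnalyticOnNhd ℂ h (ball 0 1)) (hg : AnalyticOnNhd ℂ g (ball 0 1))
    (h0 : h 0 = 0)
    (hΛ : ∀ z ∈ ball (0 : ℂ) 1,
      ‖deriv h z * g z‖ + ‖h z * deriv g z‖ ≤ Λ₂) :
    ∀ z ∈ ball (0 : ℂ) 1,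
      ‖h z * (starRingEnd ℂ) (g z)‖ ≤ Λ₂ * ‖z‖ := by
  intro z hz
  have key : ∀ w ∈ ball (0 : ℂ) 1,
      HasDerivWithinAt (fun w => h w * g w)
        (deriv h w * g w + h w * deriv g w) (ball 0 1) w := by
    intro w hw
    exact (((hh w hw).differentiableAt.hasDerivAt).mul
      ((hg w hw).differentiableAt.hasDerivAt)).hasDerivWithinAt
  have bound : ∀ w ∈ ball (0 : ℂ) 1,
      ‖deriv h w * g w + h w * deriv g w‖ ≤ Λ₂ := fun w hw =>
    (norm_add_le _ _).trans (hΛ w hw)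
  have := (convex_ball (0 : ℂ) 1).norm_image_sub_le_of_norm_hasDerivWithin_le
    key bound (mem_ball_self one_pos) hz
  simp only [h0, zero_mul, sub_zero] at this
  calc ‖h z * (starRingEnd ℂ) (g z)‖
      = ‖h z * g z‖ := by
        simp [map_mul]
    _ ≤ Λ₂ * ‖z‖ := this
end

section
/- Let F(z) = |z|²·L(z) + K(z) on the unit disk 𝔻, where L(z) = h₁(z)·conj(g₁(z)) is logharmonic with h₁, g₁ analytic on 𝔻 and h₁(0) = 0, and K(z) = h₂(z) + conj(g₂(z)) is harmonic with h₂, g₂ analytic on 𝔻. Suppose F(0) = 0, λ_F(0) = ||h₂'(0)| − |g₂'(0)|| = 1, Λ_K(z) = |h₂'(z)| + |g₂'(z)| < Λ₁ for all z ∈ 𝔻, where Λ₁ > 1, and Λ_L(z) = |h₁'(z)·g₁(z)| + |h₁(z)·g₁'(z)| ≤ Λ₂ for all z ∈ 𝔻. Then for every r ∈ (0,1) and all z₁, z₂ in the disk 𝔻_r = {|z| < r}, |F(z₂) − F(z₁)| ≥ |z₂ − z₁| · ( Λ₁·(1 − Λ₁ r)/(Λ₁ − r) − 3 r² Λ₂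 ). -/
open Complex Metric

lemma quad_bound (L r s X y : ℝ) (hr : 0 < r) (hrL : r * L < 1) (hL : 1 < L)
    (hs1 : 1 ≤ s) (hsL : s < L) (hy : X ^ 2 ≤ s ^ 2 * y)
    (hq : L ^ 2 * (y - 2 * X + s ^ 2) ≤ r ^ 2 * (L ^ 4 - 2 * L ^ 2 * X + s ^ 2 * y)) :
    s * (L * (1 - L * r)) ≤ X * (L - r) := by
  have hs0 : 0 < s := lt_of_lt_of_le one_pos hs1
  have hr1 : r < 1 := by nlinarith
  have hLs : 0 < L - r * s := by nlinarith
  have hLs' : 0 < L + r * s := by positivity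
  have hsq : (0:ℝ) ≤ L ^ 2 - r ^ 2 * s ^ 2 := by nlinarith [mul_pos hLs hLs']
  have hsrL : 0 < s - r * L := by nlinarith
  have key : (X * (L - r * s) - L * s * (s - r * L)) * (X * (L + r * s) - L * s * (s + r * L))
      = (X ^ 2 - s ^ 2 * y) * (L ^ 2 - r ^ 2 * s ^ 2)
        + s ^ 2 * (L ^ 2 * (y - 2 * X + s ^ 2) - r ^ 2 * (L ^ 4 - 2 * L ^ 2 * X + s ^ 2 * y)) := by
    ring
  have hQ : (X * (L - r * s) - L * s * (s - r * L)) * (X * (L + r * s) - L * s * (s + r * L)) ≤ 0 := by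
    rw [key]
    exact add_nonpos (mul_nonpos_of_nonpos_of_nonneg (sub_nonpos.2 hy) hsq)
      (mul_nonpos_of_nonneg_of_nonpos (sq_nonneg s) (by linarith))
  have hA : 0 ≤ X * (L - r * s) - L * s * (s - r * L) := by
    by_contra h
    push_neg at h
    have hid : (X * (L + r * s) - L * s * (s + r * L)) * (L - r * s)
        = (X * (L - r * s) - L * s * (s - r * L)) * (L + r * s) + 2 * r * L * s * (s ^ 2 - L ^ 2) := by
      ring
    have h2 : 2 * r * L * s * (s ^ 2 - L ^ 2) < 0 :=
      mul_neg_of_pos_of_neg (by positivity) (by nlinarith)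
    have hB : (X * (L + r * s) - L * s * (s + r * L)) * (L - r * s) < 0 := by
      rw [hid]
      have := mul_neg_of_neg_of_pos h hLs'
      linarith
    have hB' : X * (L + r * s) - L * s * (s + r * L) < 0 := by
      by_contra hb
      push_neg at hb
      have := mul_nonneg hb hLs.le
      linarith
    have := mul_pos_of_neg_of_neg h hB'
    linarith
  have hX : 0 < X := by
    by_contra h
    push_neg at h
    have h1 := mul_nonpos_of_nonpos_of_nonneg h hLs.le
    have h2 : 0 < L * s * (s - r * L) := by positivity
    linarith
  have hLr : (0:ℝ) ≤ L - r := by nlinarith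
  have e1 : L * s * (s - r * L) * (L - r) ≤ X * (L - r) * (L - r * s) := by
    have h := mul_nonneg hLr hA
    have hid : (L - r) * (X * (L - r * s) - L * s * (s - r * L))
        = X * (L - r) * (L - r * s) - L * s * (s - r * L) * (L - r) := by ring
    linarith [hid ▸ h]
  have e2 : s * (L * (1 - L * r)) * (L - r * s) ≤ L * s * (s - r * L) * (L - r) := by
    have k : (0:ℝ) ≤ (s - 1) * (1 - r ^ 2) * (L ^ 2 * s) :=
      mul_nonneg (mul_nonneg (by linarith) (by nlinarith)) (by positivity)
    have kid : L * s * (s - r * L) * (L - r) - s * (L * (1 - L * r)) * (L - r * s)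
        = (s - 1) * (1 - r ^ 2) * (L ^ 2 * s) := by ring
    linarith
  exact le_of_mul_le_mul_right (le_trans e2 e1) hLs


lemma normSq_ident (L : ℝ) (a p : ℂ) :
    Complex.normSq ((L:ℂ)^2 - (starRingEnd ℂ) a * p) - L^2 * Complex.normSq (p - a)
      = (L^2 - Complex.normSq a) * (L^2 - Complex.normSq p) := by
  simp only [Complex.normSq_apply, Complex.sub_re, Complex.sub_im, Complex.mul_re, Complex.mul_im,
    Complex.conj_re, Complex.conj_im, Complex.ofReal_re, Complex.ofReal_im, pow_two]
  ring

lemma core_lemma (φ : ℂ → ℂ) (L r : ℝ) (hφd : DifferentiableOn ℂ φ (ball 0 1))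
    (hb : ∀ z ∈ ball (0:ℂ) 1, ‖φ z‖ < L) (h1 : 1 ≤ ‖φ 0‖)
    (hr : 0 < r) (hrL : r * L < 1) (hL : 1 < L) :
    ∀ z ∈ ball (0:ℂ) r,
      ‖φ 0‖ * (L * (1 - L * r) / (L - r)) ≤ ((starRingEnd ℂ) (φ 0) * φ z).re := by
  intro z hz
  set a := φ 0 with ha
  have h0mem : (0:ℂ) ∈ ball (0:ℂ) 1 := by simp
  have hsL : ‖a‖ < L := hb 0 h0mem
  have hL0 : (0:ℝ) < L := by linarith
  -- denominator nonzero
  have hden : ∀ w ∈ ball (0:ℂ) 1, ((L:ℂ)^2 - (starRingEnd ℂ) a * φ w) ≠ 0 := by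
    intro w hw h
    have h3 : ‖(starRingEnd ℂ) a * φ w‖ < L^2 := by
      rw [norm_mul, Complex.norm_conj]
      calc ‖a‖ * ‖φ w‖ ≤ ‖a‖ * L :=
            mul_le_mul_of_nonneg_left (hb w hw).le (norm_nonneg _)
        _ < L * L := by nlinarith [norm_nonneg a]
        _ = L^2 := by ring
    have h4 : (L:ℂ)^2 = (starRingEnd ℂ) a * φ w := by linear_combination h
    rw [← h4] at h3
    simp only [← Complex.ofReal_pow, Complex.norm_real, Real.norm_eq_abs] at h3
    rw [abs_of_pos (by positivity)] at h3
    linarith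
  set w : ℂ → ℂ := fun z => (L:ℂ) * (φ z - a) / ((L:ℂ)^2 - (starRingEnd ℂ) a * φ z) with hw
  have hwd : DifferentiableOn ℂ w (ball 0 1) := by
    apply DifferentiableOn.div
    · exact (differentiableOn_const _).mul (hφd.sub (differentiableOn_const _))
    · exact (differentiableOn_const _).sub ((differentiableOn_const _).mul hφd)
    · exact hden
  have hw0 : w 0 = 0 := by simp [hw, ha]
  have hwlt : ∀ u ∈ ball (0:ℂ) 1, ‖w u‖ < 1 := by
    intro u hu
    have hid := normSq_ident L a (φ u)
    have hpos : 0 < (L^2 - Complex.normSq a) * (L^2 - Complex.normSq (φ u)) := by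
      apply mul_pos
      · have := Complex.sq_norm a; nlinarith [norm_nonneg a]
      · have := Complex.sq_norm (φ u); nlinarith [norm_nonneg (φ u), hb u hu]
    have hd0 : 0 < Complex.normSq ((L:ℂ)^2 - (starRingEnd ℂ) a * φ u) := by
      rcases (Complex.normSq_pos).2 (hden u hu) with h; exact h
    rw [hw]
    simp only [norm_div, norm_mul]
    rw [div_lt_one (norm_pos_iff.mpr (hden u hu))]
    have hsq : (‖(L:ℂ)‖ * ‖φ u - a‖)^2
        < (‖(L:ℂ)^2 - (starRingEnd ℂ) a * φ u‖)^2 := by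
      rw [mul_pow, Complex.sq_norm, Complex.sq_norm, Complex.sq_norm]
      have hns : Complex.normSq (L:ℂ) = L^2 := by simp [Complex.normSq_apply]; ring
      rw [hns]
      linarith [hid, hpos]
    have h1' : 0 ≤ ‖(L:ℂ)‖ * ‖φ u - a‖ := by positivity
    nlinarith [hsq, h1', norm_nonneg ((L:ℂ)^2 - (starRingEnd ℂ) a * φ u)]
  -- Schwarz
  have hmaps : Set.MapsTo w (ball 0 1) (ball (w 0) 1) := by
    intro u hu
    rw [hw0]
    simpa [mem_ball, dist_eq_norm] using hwlt u hu
  have hschwarz : ‖w z‖ ≤ ‖z‖ := by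
    have hz1 : z ∈ ball (0:ℂ) 1 := by
      have : r < 1 := by nlinarith
      exact ball_subset_ball this.le hz
    have := Complex.dist_le_div_mul_dist_of_mapsTo_ball hwd (hmaps.mono_right ball_subset_closedBall) hz1
    rw [hw0] at this
    simpa [dist_eq_norm] using this
  -- translate to real inequality
  have hzr : ‖z‖ < r := by
    simpa [mem_ball, dist_eq_norm] using hz
  have hwr : ‖w z‖ < r := lt_of_le_of_lt hschwarz hzr
  have hz1 : z ∈ ball (0:ℂ) 1 := by
    have : r < 1 := by nlinarith
    exact ball_subset_ball this.le hz
  have habs : ‖w z‖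
      = L * ‖φ z - a‖ / ‖(L:ℂ)^2 - (starRingEnd ℂ) a * φ z‖ := by
    rw [hw]
    simp only [norm_div, norm_mul, Complex.norm_real, Real.norm_eq_abs, abs_of_pos hL0]
  have hmul : L * ‖φ z - a‖ < r * ‖(L:ℂ)^2 - (starRingEnd ℂ) a * φ z‖ := by
    rw [habs] at hwr
    exact (div_lt_iff₀ (norm_pos_iff.mpr (hden z hz1))).1 hwr
  set X : ℝ := ((starRingEnd ℂ) a * φ z).re with hX
  set Y : ℝ := Complex.normSq (φ z) with hY
  set S : ℝ := ‖a‖ with hS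
  have hS2 : S^2 = Complex.normSq a := Complex.sq_norm a
  have e1 : Complex.normSq (φ z - a) = Y + S^2 - 2 * X := by
    rw [hS2, hY, hX]
    simp only [Complex.normSq_apply, Complex.sub_re, Complex.sub_im, Complex.mul_re,
      Complex.mul_im, Complex.conj_re, Complex.conj_im]
    ring
  have e2 : Complex.normSq ((L:ℂ)^2 - (starRingEnd ℂ) a * φ z)
      = L^4 + S^2 * Y - 2 * L^2 * X := by
    rw [hS2, hY, hX]
    simp only [Complex.normSq_apply, Complex.sub_re, Complex.sub_im, Complex.mul_re,
      Complex.mul_im, Complex.conj_re, Complex.conj_im, Complex.ofReal_re, Complex.ofReal_im,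
      pow_two]
    ring
  have hsqr : L^2 * Complex.normSq (φ z - a)
      ≤ r^2 * Complex.normSq ((L:ℂ)^2 - (starRingEnd ℂ) a * φ z) := by
    have h1' : 0 ≤ L * ‖φ z - a‖ := by positivity
    have h2' := Complex.sq_norm (φ z - a)
    have h3' := Complex.sq_norm ((L:ℂ)^2 - (starRingEnd ℂ) a * φ z)
    nlinarith [hmul, norm_nonneg ((L:ℂ)^2 - (starRingEnd ℂ) a * φ z), hr]
  have hXY : X^2 ≤ S^2 * Y := by
    have h1' : X^2 ≤ Complex.normSq ((starRingEnd ℂ) a * φ z) := by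
      rw [Complex.normSq_apply, hX]
      nlinarith [sq_nonneg (((starRingEnd ℂ) a * φ z).im)]
    rwa [Complex.normSq_mul, Complex.normSq_conj, ← hS2, ← hY] at h1'
  have hq : L^2 * (Y - 2*X + S^2) ≤ r^2 * (L^4 - 2*L^2*X + S^2*Y) := by
    rw [e1, e2] at hsqr; linarith
  have hmain := quad_bound L r S X Y hr hrL hL h1 hsL hXY hq
  have hLr : (0:ℝ) < L - r := by nlinarith
  rw [mul_div_assoc'] at *
  rw [div_le_iff₀ hLr]
  linarith [hmain]


lemma ftc_seg (f : ℂ → ℂ) (hf : AnalyticOnNhd ℂ f (ball 0 1)) (z₁ z₂ : ℂ)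
    (hmem : ∀ t ∈ Set.Icc (0:ℝ) 1, z₁ + (t:ℂ) * (z₂ - z₁) ∈ ball (0:ℂ) 1) :
    f z₂ - f z₁ = ∫ t in (0:ℝ)..1, deriv f (z₁ + (t:ℂ) * (z₂ - z₁)) * (z₂ - z₁) := by
  set δ := z₂ - z₁ with hδ
  have hder : ∀ t ∈ Set.uIcc (0:ℝ) 1,
      HasDerivAt (fun t : ℝ => f (z₁ + (t:ℂ) * δ)) (deriv f (z₁ + (t:ℂ) * δ) * δ) t := by
    intro t ht
    rw [Set.uIcc_of_le zero_le_one] at ht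
    have hmem' := hmem t ht
    have hfd : HasDerivAt f (deriv f (z₁ + (t:ℂ) * δ)) (z₁ + (t:ℂ) * δ) :=
      ((hf _ hmem').differentiableAt).hasDerivAt
    have hc : HasDerivAt (fun w : ℂ => z₁ + w * δ) δ (t:ℂ) := by
      simpa using ((hasDerivAt_id ((t:ℝ):ℂ)).mul_const δ).const_add z₁
    have hcomp := HasDerivAt.comp (t:ℂ) hfd hc
    exact hcomp.comp_ofReal
  have hcont : ContinuousOn (fun t : ℝ => deriv f (z₁ + (t:ℂ) * δ) * δ) (Set.uIcc (0:ℝ) 1) := by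
    apply ContinuousOn.mul _ continuousOn_const
    apply (hf.deriv.continuousOn).comp
    · exact (Continuous.continuousOn (by continuity))
    · intro t ht
      rw [Set.uIcc_of_le zero_le_one] at ht
      exact hmem t ht
  have hint := hcont.intervalIntegrable (μ := MeasureTheory.volume)
  have := intervalIntegral.integral_eq_sub_of_hasDerivAt hder hint
  rw [this]
  congr 2
  · rw [hδ]; push_cast; ring
  · push_cast; ring

lemma K_lower (h₂ g₂ : ℂ → ℂ) (L r : ℝ)
    (hh₂ : AnalyticOnNhd ℂ h₂ (ball 0 1)) (hg₂ : AnalyticOnNhd ℂ g₂ (ball 0 1))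
    (hlam : |‖deriv h₂ 0‖ - ‖deriv g₂ 0‖| = 1)
    (hL : 1 < L)
    (hK : ∀ z ∈ ball (0:ℂ) 1, ‖deriv h₂ z‖ + ‖deriv g₂ z‖ < L)
    (hr : 0 < r) (hrL : r * L < 1) (z₁ z₂ : ℂ) (hz₁ : z₁ ∈ ball (0:ℂ) r) (hz₂ : z₂ ∈ ball (0:ℂ) r) :
    ‖z₂ - z₁‖ * (L * (1 - L * r) / (L - r)) ≤
      ‖(h₂ z₂ + (starRingEnd ℂ) (g₂ z₂)) - (h₂ z₁ + (starRingEnd ℂ) (g₂ z₁))‖ := by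
  have hr1 : r < 1 := by nlinarith
  have hsub : ball (0:ℂ) r ⊆ ball (0:ℂ) 1 := ball_subset_ball hr1.le
  set δ := z₂ - z₁ with hδ
  set γ : ℝ → ℂ := fun t => z₁ + (t:ℂ) * δ with hγ
  have hmemr : ∀ t ∈ Set.Icc (0:ℝ) 1, γ t ∈ ball (0:ℂ) r := by
    intro t ht
    have hcomb : γ t = (1 - t) • z₁ + t • z₂ := by
      simp only [hγ, Complex.real_smul, hδ]
      push_cast
      ring
    rw [hcomb]
    exact (convex_ball (0:ℂ) r) hz₁ hz₂ (by linarith [ht.2]) ht.1 (by ring)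
  have hmem1 : ∀ t ∈ Set.Icc (0:ℝ) 1, γ t ∈ ball (0:ℂ) 1 := fun t ht => hsub (hmemr t ht)
  set A : ℂ := ∫ t in (0:ℝ)..1, deriv h₂ (γ t) with hA
  set B : ℂ := ∫ t in (0:ℝ)..1, deriv g₂ (γ t) with hB
  -- continuity facts
  have hγc : Continuous γ := by continuity
  have hmapsU : ∀ t ∈ Set.uIcc (0:ℝ) 1, γ t ∈ ball (0:ℂ) 1 := by
    intro t ht; rw [Set.uIcc_of_le zero_le_one] at ht; exact hmem1 t ht
  have hPc : ContinuousOn (fun t : ℝ => deriv h₂ (γ t)) (Set.uIcc (0:ℝ) 1) :=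
    (hh₂.deriv.continuousOn).comp hγc.continuousOn hmapsU
  have hQc : ContinuousOn (fun t : ℝ => deriv g₂ (γ t)) (Set.uIcc (0:ℝ) 1) :=
    (hg₂.deriv.continuousOn).comp hγc.continuousOn hmapsU
  have hPint := hPc.intervalIntegrable (μ := MeasureTheory.volume)
  have hQint := hQc.intervalIntegrable (μ := MeasureTheory.volume)
  -- FTC
  have hftc₂ : h₂ z₂ - h₂ z₁ = A * δ := by
    rw [hA, ← intervalIntegral.integral_mul_const]
    exact ftc_seg h₂ hh₂ z₁ z₂ hmem1
  have hftcg : g₂ z₂ - g₂ z₁ = B * δ := by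
    rw [hB, ← intervalIntegral.integral_mul_const]
    exact ftc_seg g₂ hg₂ z₁ z₂ hmem1
  -- choice of rotation
  set ε : ℂ := if B * δ = 0 then 1 else (starRingEnd ℂ) (B * δ) / (B * δ) with hε
  have hε1 : ‖ε‖ = 1 := by
    rw [hε]
    split_ifs with h
    · simp
    · rw [norm_div, Complex.norm_conj, div_self (norm_ne_zero_iff.mpr h)]
  have hεB : ε * (B * δ) = (starRingEnd ℂ) (B * δ) := by
    rw [hε]
    split_ifs with h
    · rw [h]; simp
    · rw [div_mul_cancel₀ _ h]
  set φ : ℂ → ℂ := fun z => deriv h₂ z + ε * deriv g₂ z with hφ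
  have hφd : DifferentiableOn ℂ φ (ball 0 1) :=
    (hh₂.deriv.differentiableOn).add ((differentiableOn_const ε).mul hg₂.deriv.differentiableOn)
  have hφb : ∀ z ∈ ball (0:ℂ) 1, ‖φ z‖ < L := by
    intro z hz
    calc ‖φ z‖ ≤ ‖deriv h₂ z‖ + ‖ε * deriv g₂ z‖ :=
          norm_add_le _ _
      _ = ‖deriv h₂ z‖ + ‖deriv g₂ z‖ := by rw [norm_mul, hε1, one_mul]
      _ < L := hK z hz
  have hφ1 : 1 ≤ ‖φ 0‖ := by
    have hth := abs_norm_sub_norm_le (deriv h₂ 0) (-(ε * deriv g₂ 0))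
    have e : deriv h₂ 0 - -(ε * deriv g₂ 0) = φ 0 := by rw [hφ]; ring
    rw [e, norm_neg] at hth
    simp only [norm_mul, hε1, one_mul] at hth
    rw [hlam] at hth
    exact hth
  -- apply core lemma
  set a := φ 0 with haa
  set S := ‖a‖ with hS
  set m := L * (1 - L * r) / (L - r) with hm
  have hcore := core_lemma φ L r hφd hφb hφ1 hr hrL hL
  have hφγc : ContinuousOn (fun t : ℝ => φ (γ t)) (Set.uIcc (0:ℝ) 1) :=
    hPc.add (continuousOn_const.mul hQc)
  have hφγint := hφγc.intervalIntegrable (μ := MeasureTheory.volume)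
  set T : ℂ := ∫ t in (0:ℝ)..1, φ (γ t) with hT
  have hTAB : T = A + ε * B := by
    rw [hT, hA, hB, ← intervalIntegral.integral_const_mul,
      ← intervalIntegral.integral_add hPint (hQint.const_mul ε)]
  have hconjc : ContinuousOn (fun t : ℝ => (starRingEnd ℂ) a * φ (γ t)) (Set.uIcc (0:ℝ) 1) :=
    continuousOn_const.mul hφγc
  have hconjint := hconjc.intervalIntegrable (μ := MeasureTheory.volume)
  have hrec : ContinuousOn (fun t : ℝ => ((starRingEnd ℂ) a * φ (γ t)).re) (Set.uIcc (0:ℝ) 1) :=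
    Complex.continuous_re.comp_continuousOn hconjc
  have hreint := hrec.intervalIntegrable (μ := MeasureTheory.volume)
  have hre2 : ((starRingEnd ℂ) a * T).re = ∫ t in (0:ℝ)..1, ((starRingEnd ℂ) a * φ (γ t)).re := by
    rw [hT, ← intervalIntegral.integral_const_mul]
    have := ContinuousLinearMap.intervalIntegral_comp_comm Complex.reCLM hconjint
    simpa using this.symm
  have hmono : S * m ≤ ∫ t in (0:ℝ)..1, ((starRingEnd ℂ) a * φ (γ t)).re := by
    have hconst : S * m = ∫ _t in (0:ℝ)..1, S * m := by simp
    rw [hconst]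
    apply intervalIntegral.integral_mono_on zero_le_one intervalIntegrable_const hreint
    intro t ht
    exact hcore (γ t) (hmemr t ht)
  have hfin : S * m ≤ S * ‖T‖ := by
    have h2'' : ((starRingEnd ℂ) a * T).re ≤ ‖a‖ * ‖T‖ := by
      have h3'' := Complex.re_le_norm ((starRingEnd ℂ) a * T)
      rwa [norm_mul, Complex.norm_conj] at h3''
    rw [hre2] at h2''
    calc S * m ≤ ∫ t in (0:ℝ)..1, ((starRingEnd ℂ) a * φ (γ t)).re := hmono
      _ ≤ ‖a‖ * ‖T‖ := h2''
      _ = S * ‖T‖ := by rw [hS]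
  have hS1 : (1:ℝ) ≤ S := hφ1
  have hmT : m ≤ ‖T‖ := le_of_mul_le_mul_left hfin (by linarith)
  have hKd : (h₂ z₂ + (starRingEnd ℂ) (g₂ z₂)) - (h₂ z₁ + (starRingEnd ℂ) (g₂ z₁)) = T * δ := by
    have hc : (starRingEnd ℂ) (g₂ z₂) - (starRingEnd ℂ) (g₂ z₁) = (starRingEnd ℂ) (B * δ) := by
      rw [← map_sub, hftcg]
    calc (h₂ z₂ + (starRingEnd ℂ) (g₂ z₂)) - (h₂ z₁ + (starRingEnd ℂ) (g₂ z₁))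
        = (h₂ z₂ - h₂ z₁) + ((starRingEnd ℂ) (g₂ z₂) - (starRingEnd ℂ) (g₂ z₁)) := by ring
      _ = A * δ + ε * (B * δ) := by rw [hftc₂, hc, ← hεB]
      _ = T * δ := by rw [hTAB]; ring
  rw [hKd, norm_mul, mul_comm (‖T‖)]
  exact mul_le_mul_of_nonneg_left hmT (norm_nonneg δ)


lemma G_bound (h₁ g₁ : ℂ → ℂ) (Λ₂ r : ℝ)
    (hh₁ : AnalyticOnNhd ℂ h₁ (ball 0 1)) (hg₁ : AnalyticOnNhd ℂ g₁ (ball 0 1))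
    (hh₁0 : h₁ 0 = 0)
    (hL : ∀ z ∈ ball (0:ℂ) 1,
      ‖deriv h₁ z * g₁ z‖ + ‖h₁ z * deriv g₁ z‖ ≤ Λ₂)
    (hr : 0 < r) (hr1 : r < 1) (z₁ z₂ : ℂ) (hz₁ : z₁ ∈ ball (0:ℂ) r) (hz₂ : z₂ ∈ ball (0:ℂ) r) :
    ‖(z₂ * h₁ z₂) * (starRingEnd ℂ) (z₂ * g₁ z₂)
      - (z₁ * h₁ z₁) * (starRingEnd ℂ) (z₁ * g₁ z₁)‖ ≤ 3 * r ^ 2 * Λ₂ * ‖z₂ - z₁‖ := by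
  have hsub : ball (0:ℂ) r ⊆ ball (0:ℂ) 1 := ball_subset_ball hr1.le
  have hΛ₂0 : 0 ≤ Λ₂ := le_trans (by positivity) (hL 0 (by simp))
  have hp : ∀ z ∈ ball (0:ℂ) 1, ‖h₁ z * g₁ z‖ ≤ Λ₂ * ‖z‖ := by
    intro z hz
    have hder : ∀ x ∈ ball (0:ℂ) 1,
        HasDerivWithinAt (fun w => h₁ w * g₁ w)
          (deriv h₁ x * g₁ x + h₁ x * deriv g₁ x) (ball (0:ℂ) 1) x := by
      intro x hx
      exact (((hh₁ x hx).differentiableAt.hasDerivAt).mul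
        ((hg₁ x hx).differentiableAt.hasDerivAt)).hasDerivWithinAt
    have hbd : ∀ x ∈ ball (0:ℂ) 1, ‖deriv h₁ x * g₁ x + h₁ x * deriv g₁ x‖ ≤ Λ₂ := by
      intro x hx
      calc ‖deriv h₁ x * g₁ x + h₁ x * deriv g₁ x‖
          ≤ ‖deriv h₁ x * g₁ x‖ + ‖h₁ x * deriv g₁ x‖ := norm_add_le _ _
        _ ≤ Λ₂ := hL x hx
    have := Convex.norm_image_sub_le_of_norm_hasDerivWithin_le hder hbd (convex_ball _ _)
      (by simp : (0:ℂ) ∈ ball (0:ℂ) 1) hz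
    simpa [hh₁0, mul_comm] using this
  set Du : ℂ → (ℂ →L[ℝ] ℂ) := fun z =>
    ((1 : ℂ →L[ℂ] ℂ).smulRight (h₁ z + z * deriv h₁ z)).restrictScalars ℝ with hDu
  set Dv : ℂ → (ℂ →L[ℝ] ℂ) := fun z =>
    Complex.conjCLE.toContinuousLinearMap.comp
      (((1 : ℂ →L[ℂ] ℂ).smulRight (g₁ z + z * deriv g₁ z)).restrictScalars ℝ) with hDv
  set D : ℂ → (ℂ →L[ℝ] ℂ) := fun z =>
    (z * h₁ z) • Dv z + (Du z).smulRight ((starRingEnd ℂ) (z * g₁ z)) with hD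
  have hder : ∀ x ∈ ball (0:ℂ) r,
      HasFDerivWithinAt (fun z => (z * h₁ z) * (starRingEnd ℂ) (z * g₁ z)) (D x)
        (ball (0:ℂ) r) x := by
    intro x hx
    have hx1 := hsub hx
    have hu : HasFDerivAt (fun z : ℂ => z * h₁ z) (Du x) x := by
      have h := (hasDerivAt_id x).fun_mul ((hh₁ x hx1).differentiableAt.hasDerivAt)
      have h' : HasDerivAt (fun z : ℂ => z * h₁ z) (h₁ x + x * deriv h₁ x) x := by
        simpa [one_mul] using h
      exact h'.hasFDerivAt.restrictScalars ℝ
    have hv : HasFDerivAt (fun z : ℂ => (starRingEnd ℂ) (z * g₁ z)) (Dv x) x := by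
      have h := (hasDerivAt_id x).fun_mul ((hg₁ x hx1).differentiableAt.hasDerivAt)
      have h' : HasDerivAt (fun z : ℂ => z * g₁ z) (g₁ x + x * deriv g₁ x) x := by
        simpa [one_mul] using h
      exact (Complex.conjCLE.toContinuousLinearMap.hasFDerivAt).comp x
        (h'.hasFDerivAt.restrictScalars ℝ)
    exact (hu.mul' hv).hasFDerivWithinAt
  have hbound : ∀ x ∈ ball (0:ℂ) r, ‖D x‖ ≤ 3 * r ^ 2 * Λ₂ := by
    intro x hx
    have hx1 := hsub hx
    have hxr : ‖x‖ ≤ r := by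
      have : ‖x‖ < r := by simpa [mem_ball, dist_eq_norm] using hx
      linarith
    apply ContinuousLinearMap.opNorm_le_bound _ (by positivity)
    intro w
    have happ : (D x) w = (x * h₁ x) * (starRingEnd ℂ) ((g₁ x + x * deriv g₁ x) * w)
        + (w * (h₁ x + x * deriv h₁ x)) * (starRingEnd ℂ) (x * g₁ x) := by
      simp only [hD, hDu, hDv, ContinuousLinearMap.add_apply, ContinuousLinearMap.smul_apply,
        ContinuousLinearMap.smulRight_apply, ContinuousLinearMap.comp_apply,
        ContinuousLinearMap.coe_restrictScalars',
        ContinuousLinearMap.one_apply,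
        ContinuousLinearEquiv.coe_coe, Complex.conjCLE_apply, smul_eq_mul, map_mul, map_add]
      ring
    rw [happ]
    have key1 : ‖h₁ x‖ * ‖g₁ x + x * deriv g₁ x‖
        ≤ ‖h₁ x * g₁ x‖ + ‖x‖ * ‖h₁ x * deriv g₁ x‖ := by
      calc ‖h₁ x‖ * ‖g₁ x + x * deriv g₁ x‖
          = ‖h₁ x * g₁ x + x * (h₁ x * deriv g₁ x)‖ := by
            rw [← norm_mul]; congr 1; ring
        _ ≤ ‖h₁ x * g₁ x‖ + ‖x * (h₁ x * deriv g₁ x)‖ :=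
            norm_add_le _ _
        _ = ‖h₁ x * g₁ x‖ + ‖x‖ * ‖h₁ x * deriv g₁ x‖ := by
            rw [norm_mul x (h₁ x * deriv g₁ x)]
    have key2 : ‖g₁ x‖ * ‖h₁ x + x * deriv h₁ x‖
        ≤ ‖h₁ x * g₁ x‖ + ‖x‖ * ‖deriv h₁ x * g₁ x‖ := by
      calc ‖g₁ x‖ * ‖h₁ x + x * deriv h₁ x‖
          = ‖h₁ x * g₁ x + x * (deriv h₁ x * g₁ x)‖ := by
            rw [← norm_mul]; congr 1; ring
        _ ≤ ‖h₁ x * g₁ x‖ + ‖x * (deriv h₁ x * g₁ x)‖ :=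
            norm_add_le _ _
        _ = ‖h₁ x * g₁ x‖ + ‖x‖ * ‖deriv h₁ x * g₁ x‖ := by
            rw [norm_mul x (deriv h₁ x * g₁ x)]
    have e1 : ‖(x * h₁ x) * (starRingEnd ℂ) ((g₁ x + x * deriv g₁ x) * w)‖
        ≤ (‖x‖ * ‖w‖) * (‖h₁ x * g₁ x‖
            + ‖x‖ * ‖h₁ x * deriv g₁ x‖) := by
      have lhs_eq : ‖(x * h₁ x) * (starRingEnd ℂ) ((g₁ x + x * deriv g₁ x) * w)‖
          = (‖x‖ * ‖w‖)
            * (‖h₁ x‖ * ‖g₁ x + x * deriv g₁ x‖) := by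
        simp only [norm_mul, Complex.norm_conj]
        ring
      rw [lhs_eq]
      exact mul_le_mul_of_nonneg_left key1 (by positivity)
    have e2 : ‖(w * (h₁ x + x * deriv h₁ x)) * (starRingEnd ℂ) (x * g₁ x)‖
        ≤ (‖x‖ * ‖w‖) * (‖h₁ x * g₁ x‖
            + ‖x‖ * ‖deriv h₁ x * g₁ x‖) := by
      have lhs_eq : ‖(w * (h₁ x + x * deriv h₁ x)) * (starRingEnd ℂ) (x * g₁ x)‖
          = (‖x‖ * ‖w‖)
            * (‖g₁ x‖ * ‖h₁ x + x * deriv h₁ x‖) := by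
        simp only [norm_mul, Complex.norm_conj]
        ring
      rw [lhs_eq]
      exact mul_le_mul_of_nonneg_left key2 (by positivity)
    have hx2 : ‖x‖ * ‖x‖ ≤ r * r :=
      mul_self_le_mul_self (norm_nonneg x) hxr
    have hpg := hp x hx1
    have hLx := hL x hx1
    have h3 : (‖x‖ * ‖w‖) * (‖h₁ x * g₁ x‖
            + ‖x‖ * ‖h₁ x * deriv g₁ x‖)
        + (‖x‖ * ‖w‖) * (‖h₁ x * g₁ x‖
            + ‖x‖ * ‖deriv h₁ x * g₁ x‖) ≤ 3 * r ^ 2 * Λ₂ * ‖w‖ := by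
      have hnn : (0:ℝ) ≤ ‖w‖ := norm_nonneg w
      have c1 : ‖x‖ * ‖h₁ x * g₁ x‖ ≤ Λ₂ * (r * r) := by
        calc ‖x‖ * ‖h₁ x * g₁ x‖
            ≤ ‖x‖ * (Λ₂ * ‖x‖) :=
              mul_le_mul_of_nonneg_left hpg (norm_nonneg x)
          _ = Λ₂ * (‖x‖ * ‖x‖) := by ring
          _ ≤ Λ₂ * (r * r) := mul_le_mul_of_nonneg_left hx2 hΛ₂0
      have c2 : ‖x‖ * ‖x‖ * (‖deriv h₁ x * g₁ x‖
          + ‖h₁ x * deriv g₁ x‖) ≤ r * r * Λ₂ := by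
        calc ‖x‖ * ‖x‖ * (‖deriv h₁ x * g₁ x‖
              + ‖h₁ x * deriv g₁ x‖)
            ≤ ‖x‖ * ‖x‖ * Λ₂ :=
              mul_le_mul_of_nonneg_left hLx (by positivity)
          _ ≤ r * r * Λ₂ := mul_le_mul_of_nonneg_right hx2 hΛ₂0
      nlinarith [mul_le_mul_of_nonneg_right c1 hnn, mul_le_mul_of_nonneg_right c2 hnn]
    calc ‖(x * h₁ x) * (starRingEnd ℂ) ((g₁ x + x * deriv g₁ x) * w)
          + (w * (h₁ x + x * deriv h₁ x)) * (starRingEnd ℂ) (x * g₁ x)‖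
        ≤ ‖(x * h₁ x) * (starRingEnd ℂ) ((g₁ x + x * deriv g₁ x) * w)‖
          + ‖(w * (h₁ x + x * deriv h₁ x)) * (starRingEnd ℂ) (x * g₁ x)‖ := norm_add_le _ _
      _ ≤ 3 * r ^ 2 * Λ₂ * ‖w‖ := by linarith [e1, e2, h3]
  have := Convex.norm_image_sub_le_of_norm_hasFDerivWithin_le hder hbound (convex_ball _ _) hz₁ hz₂
  simpa using this


/-- Distortion lower bound for `F(z) = |z|² L(z) + K(z)` with logharmonic `L`
and harmonic `K` of bounded length distortion. -/
theorem stmt_6 (h₁ g₁ h₂ g₂ : ℂ → ℂ) (Λ₁ Λ₂ : ℝ)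
    (hh₁ : AnalyticOnNhd ℂ h₁ (ball 0 1)) (hg₁ : AnalyticOnNhd ℂ g₁ (ball 0 1))
    (hh₂ : AnalyticOnNhd ℂ h₂ (ball 0 1)) (hg₂ : AnalyticOnNhd ℂ g₂ (ball 0 1))
    (hh₁0 : h₁ 0 = 0)
    (F : ℂ → ℂ)
    (hF : ∀ z, F z = (‖z‖ : ℂ) ^ 2 * (h₁ z * (starRingEnd ℂ) (g₁ z)) +
      (h₂ z + (starRingEnd ℂ) (g₂ z)))
    (hF0 : F 0 = 0)
    (hlam : |‖deriv h₂ 0‖ - ‖deriv g₂ 0‖| = 1)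
    (hΛ₁ : Λ₁ > 1)
    (hK : ∀ z ∈ ball (0 : ℂ) 1,
      ‖deriv h₂ z‖ + ‖deriv g₂ z‖ < Λ₁)
    (hL : ∀ z ∈ ball (0 : ℂ) 1,
      ‖deriv h₁ z * g₁ z‖ + ‖h₁ z * deriv g₁ z‖ ≤ Λ₂) :
    ∀ r ∈ Set.Ioo (0 : ℝ) 1, ∀ z₁ ∈ ball (0 : ℂ) r, ∀ z₂ ∈ ball (0 : ℂ) r,
      ‖F z₂ - F z₁‖ ≥
        ‖z₂ - z₁‖ * (Λ₁ * (1 - Λ₁ * r) / (Λ₁ - r) - 3 * r ^ 2 * Λ₂) := by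
  intro r hrIoo z₁ hz₁ z₂ hz₂
  obtain ⟨hr0, hr1⟩ := hrIoo
  rw [ge_iff_le]
  by_cases hc : Λ₁ * (1 - Λ₁ * r) / (Λ₁ - r) - 3 * r ^ 2 * Λ₂ ≤ 0
  · exact le_trans (mul_nonpos_of_nonneg_of_nonpos (norm_nonneg _) hc)
      (norm_nonneg _)
  push_neg at hc
  have hΛ₂0 : 0 ≤ Λ₂ := le_trans (by positivity) (hL 0 (by simp))
  have hm : 0 < Λ₁ * (1 - Λ₁ * r) / (Λ₁ - r) := by nlinarith
  have hΛr : 0 < Λ₁ - r := by linarith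
  have hnum : 0 < Λ₁ * (1 - Λ₁ * r) := by
    have h := mul_pos hm hΛr
    rwa [div_mul_cancel₀ _ (ne_of_gt hΛr)] at h
  have hrΛ : r * Λ₁ < 1 := by nlinarith
  have hK' := K_lower h₂ g₂ Λ₁ r hh₂ hg₂ hlam hΛ₁ hK hr0 hrΛ z₁ z₂ hz₁ hz₂
  have hG' := G_bound h₁ g₁ Λ₂ r hh₁ hg₁ hh₁0 hL hr0 hr1 z₁ z₂ hz₁ hz₂
  have habs2 : ∀ z : ℂ, ((‖z‖ : ℂ)) ^ 2 * (h₁ z * (starRingEnd ℂ) (g₁ z))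
      = (z * h₁ z) * (starRingEnd ℂ) (z * g₁ z) := by
    intro z
    have h2 : ((‖z‖ : ℂ)) ^ 2 = z * (starRingEnd ℂ) z := by
      rw [← Complex.ofReal_pow, Complex.sq_norm, Complex.mul_conj]
    rw [h2, map_mul]
    ring
  set Gd : ℂ := (z₂ * h₁ z₂) * (starRingEnd ℂ) (z₂ * g₁ z₂)
    - (z₁ * h₁ z₁) * (starRingEnd ℂ) (z₁ * g₁ z₁) with hGd
  set Kd : ℂ := (h₂ z₂ + (starRingEnd ℂ) (g₂ z₂)) - (h₂ z₁ + (starRingEnd ℂ) (g₂ z₁)) with hKd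
  have hFd : F z₂ - F z₁ = Gd + Kd := by
    rw [hF z₂, hF z₁, habs2 z₂, habs2 z₁, hGd, hKd]
    ring
  have tri : ‖Kd‖ ≤ ‖Gd + Kd‖ + ‖Gd‖ := by
    have h := norm_add_le (Gd + Kd) (-Gd)
    rw [show Gd + Kd + -Gd = Kd from by ring, norm_neg] at h
    exact h
  rw [hFd]
  have expand : ‖z₂ - z₁‖ * (Λ₁ * (1 - Λ₁ * r) / (Λ₁ - r) - 3 * r ^ 2 * Λ₂)
      = ‖z₂ - z₁‖ * (Λ₁ * (1 - Λ₁ * r) / (Λ₁ - r))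
        - 3 * r ^ 2 * Λ₂ * ‖z₂ - z₁‖ := by ring
  rw [expand]
  linarith [hK', hG', tri]
end

section
/- Let Λ₁ > 1 and Λ₂ ≥ 0 be real numbers, and define g₁(r) = Λ₁·(1 − Λ₁ r)/(Λ₁ − r) − 3 r² Λ₂ for r ∈ [0,1]. Then g₁ is strictly decreasing on [0,1], and there exists a unique r₁ ∈ (0, 1/Λ₁] with g₁(r₁) = 0. -/
open Set

/-- The auxiliary function `g₁(r) = Λ₁(1 − Λ₁ r)/(Λ₁ − r) − 3 r² Λ₂` is strictly
decreasing on `[0,1]` and has a unique zero in `(0, 1/Λ₁]`. -/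
theorem stmt_7 (Λ₁ Λ₂ : ℝ) (hΛ₁ : Λ₁ > 1) (hΛ₂ : Λ₂ ≥ 0)
    (g₁ : ℝ → ℝ)
    (hg₁ : ∀ r, g₁ r = Λ₁ * (1 - Λ₁ * r) / (Λ₁ - r) - 3 * r ^ 2 * Λ₂) :
    StrictAntiOn g₁ (Icc 0 1) ∧
      ∃! r₁, r₁ ∈ Ioc 0 (1 / Λ₁) ∧ g₁ r₁ = 0 := by
  have hΛ₁0 : (0:ℝ) < Λ₁ := by linarith
  have hinv : 1 / Λ₁ < 1 := by
    rw [div_lt_one hΛ₁0]; linarith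
  have hinvpos : 0 < 1 / Λ₁ := by positivity
  have hanti : StrictAntiOn g₁ (Icc 0 1) := by
    intro a ha b hb hab
    rw [hg₁, hg₁]
    have hΛa : 0 < Λ₁ - a := by linarith [ha.2]
    have hΛb : 0 < Λ₁ - b := by linarith [hb.2]
    have key : Λ₁ * (1 - Λ₁ * b) / (Λ₁ - b) - Λ₁ * (1 - Λ₁ * a) / (Λ₁ - a)
        = ((b - a) * Λ₁ * (1 - Λ₁ ^ 2)) / ((Λ₁ - b) * (Λ₁ - a)) := by
      field_simp
      ring
    have hnum : (b - a) * Λ₁ * (1 - Λ₁ ^ 2) < 0 := by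
      have hp : 0 < (b - a) * Λ₁ := mul_pos (by linarith) hΛ₁0
      have hneg : 1 - Λ₁ ^ 2 < 0 := by nlinarith
      exact mul_neg_of_pos_of_neg hp hneg
    have h1 : Λ₁ * (1 - Λ₁ * b) / (Λ₁ - b) - Λ₁ * (1 - Λ₁ * a) / (Λ₁ - a) < 0 := by
      rw [key]
      exact div_neg_of_neg_of_pos hnum (by positivity)
    have h2 : 3 * a ^ 2 * Λ₂ ≤ 3 * b ^ 2 * Λ₂ := by
      nlinarith [mul_nonneg (mul_nonneg (by linarith : (0:ℝ) ≤ b - a)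
        (by linarith [ha.1] : (0:ℝ) ≤ b + a)) hΛ₂]
    linarith
  refine ⟨hanti, ?_⟩
  -- continuity on [0, 1/Λ₁]
  have hcont : ContinuousOn g₁ (Icc 0 (1 / Λ₁)) := by
    have : g₁ = fun r => Λ₁ * (1 - Λ₁ * r) / (Λ₁ - r) - 3 * r ^ 2 * Λ₂ := funext hg₁
    rw [this]
    apply ContinuousOn.sub
    · apply ContinuousOn.div (by fun_prop) (by fun_prop)
      intro x hx
      have : x ≤ 1 / Λ₁ := hx.2
      have : x < 1 := lt_of_le_of_lt this hinv
      intro h; linarith [sub_eq_zero.mp h]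
    · fun_prop
  have hg0 : g₁ 0 = 1 := by
    rw [hg₁]; simp [hΛ₁0.ne']
  have hgend : g₁ (1 / Λ₁) ≤ 0 := by
    rw [hg₁]
    have : Λ₁ * (1 / Λ₁) = 1 := by field_simp
    rw [this]
    simp only [sub_self, mul_zero, zero_div, zero_sub, neg_nonpos]
    positivity
  have hiv := intermediate_value_Icc' (le_of_lt hinvpos) hcont
  have h0mem : (0:ℝ) ∈ Icc (g₁ (1 / Λ₁)) (g₁ 0) := ⟨hgend, by rw [hg0]; norm_num⟩
  obtain ⟨r₁, hr₁mem, hr₁⟩ := hiv h0mem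
  have hr₁pos : 0 < r₁ := by
    rcases lt_or_eq_of_le hr₁mem.1 with h | h
    · exact h
    · exfalso; rw [← h] at hr₁; rw [hg0] at hr₁; norm_num at hr₁
  refine ⟨r₁, ⟨⟨hr₁pos, hr₁mem.2⟩, hr₁⟩, ?_⟩
  rintro y ⟨⟨hy1, hy2⟩, hy0⟩
  have hsub : Ioc (0:ℝ) (1 / Λ₁) ⊆ Icc 0 1 := fun x hx =>
    ⟨le_of_lt hx.1, le_trans hx.2 (le_of_lt hinv)⟩
  have hinj := hanti.injOn
  exact hinj (hsub ⟨hy1, hy2⟩) (hsub ⟨hr₁pos, hr₁mem.2⟩) (by rw [hy0, hr₁])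
end

section
/- Let F(z) = |z|²·L(z) + K(z) on the unit disk 𝔻, where L(z) = h₁(z)·conj(g₁(z)) is logharmonic with h₁, g₁ analytic on 𝔻 and h₁(0) = 0, and K(z) = h₂(z) + conj(g₂(z)) is harmonic with h₂, g₂ analytic on 𝔻. Suppose F(0) = 0, λ_F(0) = ||h₂'(0)| − |g₂'(0)|| = 1, Λ_K(z) = |h₂'(z)| + |g₂'(z)| < Λ₁ for all z ∈ 𝔻, where Λ₁ > 1, and Λ_L(z) = |h₁'(z)·g₁(z)| + |h₁(z)·g₁'(z)| ≤ Λ₂ for all z ∈ 𝔻. If r₁ ∈ (0,1) satisfies Λ₁·(1 − Λ₁ r₁)/(Λ₁ − r₁) − 3 r₁² Λ₂ = 0, then F is univalent (injective) on the disk 𝔻_{r₁} = {|z| < r₁}. -/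
open Complex Metric

open Set

section LandauAux
set_option maxHeartbeats 1600000

noncomputable def Complex.abs : AbsoluteValue ℂ ℝ := NormedField.toAbsoluteValue ℂ

theorem Complex.norm_eq_abs (z : ℂ) : ‖z‖ = Complex.abs z := rfl

theorem Complex.abs_conj (z : ℂ) : Complex.abs ((starRingEnd ℂ) z) = Complex.abs z :=
  Complex.norm_conj z

theorem Complex.abs_ofReal (r : ℝ) : Complex.abs (r : ℂ) = |r| :=
  (Complex.norm_real r).trans (Real.norm_eq_abs r)

theorem Complex.normSq_eq_abs (z : ℂ) : Complex.normSq z = Complex.abs z ^ 2 :=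
  Complex.normSq_eq_norm_sq z

theorem Complex.sq_abs (z : ℂ) : Complex.abs z ^ 2 = Complex.normSq z :=
  Complex.sq_norm z

theorem Complex.abs_le_abs_of_mapsTo_ball_self {f : ℂ → ℂ} {z : ℂ}
    (hd : DifferentiableOn ℂ f (ball 0 1)) (h_maps : MapsTo f (ball 0 1) (ball 0 1))
    (h₀ : f 0 = 0) (hz : ‖z‖ < 1) : Complex.abs (f z) ≤ Complex.abs z :=
  Complex.norm_le_norm_of_mapsTo_ball hd (h_maps.mono_right ball_subset_closedBall) h₀ hz

-- Phase alignment: choose a unimodular ε so that |u + εv| = |u| + |v|.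
lemma abs_add_phase (u v : ℂ) :
    ∃ ε : ℂ, Complex.abs ε = 1 ∧ Complex.abs (u + ε * v) = Complex.abs u + Complex.abs v := by
  rcases eq_or_ne v 0 with rfl | hv
  · exact ⟨1, by simp⟩
  rcases eq_or_ne u 0 with rfl | hu
  · refine ⟨(starRingEnd ℂ) v / (Complex.abs v : ℂ), ?_, ?_⟩
    · rw [map_div₀, Complex.abs_conj, Complex.abs_ofReal, _root_.abs_of_nonneg (Complex.abs.nonneg v),
        div_self (Complex.abs.ne_zero hv)]
    · have : (starRingEnd ℂ) v / (Complex.abs v : ℂ) * v = ((Complex.abs v : ℂ))^2 / (Complex.abs v : ℂ) := by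
        rw [div_mul_eq_mul_div, mul_comm, Complex.mul_conj, Complex.normSq_eq_abs]
        norm_num
      simp only [zero_add, this]
      rw [sq, mul_div_assoc, div_self (by simpa using Complex.abs.ne_zero hv), mul_one]
      simp [Complex.abs_ofReal, _root_.abs_of_nonneg (Complex.abs.nonneg v)]
  · refine ⟨u * (starRingEnd ℂ) v / ((Complex.abs u * Complex.abs v : ℝ) : ℂ), ?_, ?_⟩
    · rw [map_div₀, map_mul, Complex.abs_conj, Complex.abs_ofReal]
      rw [_root_.abs_of_nonneg (by positivity)]
      field_simp [Complex.abs.ne_zero hu, Complex.abs.ne_zero hv]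
    · have hne : ((Complex.abs u * Complex.abs v : ℝ) : ℂ) ≠ 0 := by
        simp only [ne_eq, Complex.ofReal_eq_zero, mul_eq_zero, not_or]
        exact ⟨Complex.abs.ne_zero hu, Complex.abs.ne_zero hv⟩
      have key : u + u * (starRingEnd ℂ) v / ((Complex.abs u * Complex.abs v : ℝ) : ℂ) * v
          = u * (((Complex.abs u + Complex.abs v) / Complex.abs u : ℝ) : ℂ) := by
        have hcv : (starRingEnd ℂ) v * v = ((Complex.abs v : ℂ))^2 := by
          rw [mul_comm, Complex.mul_conj, Complex.normSq_eq_abs]; norm_num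
        have hu' : ((Complex.abs u : ℝ) : ℂ) ≠ 0 := by
          simpa using Complex.abs.ne_zero hu
        have hv' : ((Complex.abs v : ℝ) : ℂ) ≠ 0 := by
          simpa using Complex.abs.ne_zero hv
        rw [div_mul_eq_mul_div, mul_assoc u _ v, hcv]
        push_cast
        field_simp
      rw [key, map_mul, Complex.abs_ofReal, _root_.abs_of_nonneg (by positivity)]
      field_simp [Complex.abs.ne_zero hu]

-- Möbius identity key: |Λ²-āb|² - Λ²|b-a|² = (Λ²-|a|²)(Λ²-|b|²)
lemma mobius_identity (Λ : ℝ) (a b : ℂ) :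
    (Complex.abs ((Λ:ℂ)^2 - (starRingEnd ℂ) a * b))^2 - Λ^2 * (Complex.abs (b - a))^2
      = (Λ^2 - (Complex.abs a)^2) * (Λ^2 - (Complex.abs b)^2) := by
  have h1 : ∀ z : ℂ, ((Complex.abs z : ℝ) : ℂ)^2 = z * (starRingEnd ℂ) z := by
    intro z
    rw [Complex.mul_conj, Complex.normSq_eq_abs]
    push_cast; ring
  have key : (((Complex.abs ((Λ:ℂ)^2 - (starRingEnd ℂ) a * b))^2 - Λ^2 * (Complex.abs (b - a))^2 : ℝ) : ℂ)
      = (((Λ^2 - (Complex.abs a)^2) * (Λ^2 - (Complex.abs b)^2) : ℝ) : ℂ) := by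
    push_cast
    rw [h1, h1, h1, h1]
    simp only [map_sub, map_mul, map_pow, Complex.conj_conj, Complex.conj_ofReal]
    ring
  exact_mod_cast key

lemma sp_core (f : ℂ → ℂ) (Λ : ℝ) (hΛ : 1 < Λ)
    (hd : DifferentiableOn ℂ f (ball 0 1))
    (hb : ∀ z ∈ ball (0:ℂ) 1, Complex.abs (f z) < Λ)
    (z : ℂ) (hz : z ∈ ball (0:ℂ) 1) :
    Complex.abs (f z - f 0) * (Λ - Complex.abs (f 0) * Complex.abs z)
      ≤ Complex.abs z * (Λ^2 - (Complex.abs (f 0))^2) := by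
  have h0mem : (0:ℂ) ∈ ball (0:ℂ) 1 := by simp
  set a := f 0 with ha
  set c := Complex.abs a with hc
  have hcΛ : c < Λ := hb 0 h0mem
  have hc0 : 0 ≤ c := Complex.abs.nonneg a
  -- the denominator is nonzero on the ball
  have hden : ∀ x ∈ ball (0:ℂ) 1, (Λ:ℂ)^2 - (starRingEnd ℂ) a * f x ≠ 0 := by
    intro x hx
    have hfx := hb x hx
    intro h
    have : Complex.abs ((Λ:ℂ)^2) = Complex.abs ((starRingEnd ℂ) a * f x) := by
      rw [sub_eq_zero] at h; rw [h]
    rw [map_pow, Complex.abs_ofReal, _root_.abs_of_nonneg (by linarith : (0:ℝ) ≤ Λ), map_mul,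
      Complex.abs_conj] at this
    nlinarith [Complex.abs.nonneg (f x)]
  set G : ℂ → ℂ := fun x => (Λ:ℂ) * (f x - a) / ((Λ:ℂ)^2 - (starRingEnd ℂ) a * f x) with hG
  have hGd : DifferentiableOn ℂ G (ball 0 1) := by
    apply DifferentiableOn.div
    · exact (differentiableOn_const _).mul (hd.sub_const a)
    · exact (differentiableOn_const _).sub ((differentiableOn_const _).mul hd)
    · exact hden
  have hGmaps : MapsTo G (ball (0:ℂ) 1) (ball (0:ℂ) 1) := by
    intro x hx
    have hfx := hb x hx
    have hid := mobius_identity Λ a (f x)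
    have habs : Complex.abs (G x) = Λ * Complex.abs (f x - a) / Complex.abs ((Λ:ℂ)^2 - (starRingEnd ℂ) a * f x) := by
      rw [hG]
      simp only [map_div₀, map_mul, Complex.abs_ofReal, _root_.abs_of_nonneg (by linarith : (0:ℝ) ≤ Λ)]
    rw [mem_ball_zero_iff, Complex.norm_eq_abs, habs]
    have hdpos : 0 < Complex.abs ((Λ:ℂ)^2 - (starRingEnd ℂ) a * f x) :=
      Complex.abs.pos (hden x hx)
    rw [div_lt_one hdpos]
    have hpos : 0 < (Λ^2 - c^2) * (Λ^2 - (Complex.abs (f x))^2) := by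
      apply mul_pos <;> nlinarith [Complex.abs.nonneg (f x)]
    nlinarith [Complex.abs.nonneg (f x - a), hdpos, hid, hpos]
  have hG0 : G 0 = 0 := by
    rw [hG]; simp [← ha]
  have hsch : Complex.abs (G z) ≤ Complex.abs z :=
    Complex.abs_le_abs_of_mapsTo_ball_self hGd hGmaps hG0 (mem_ball_zero_iff.1 hz)
  -- unfold
  have hdz := hden z hz
  have habsG : Complex.abs (G z) = Λ * Complex.abs (f z - a) / Complex.abs ((Λ:ℂ)^2 - (starRingEnd ℂ) a * f z) := by
    rw [hG]
    simp only [map_div₀, map_mul, Complex.abs_ofReal, _root_.abs_of_nonneg (by linarith : (0:ℝ) ≤ Λ)]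
  have h1 : Λ * Complex.abs (f z - a) ≤ Complex.abs z * Complex.abs ((Λ:ℂ)^2 - (starRingEnd ℂ) a * f z) := by
    rw [habsG, div_le_iff₀ (Complex.abs.pos hdz)] at hsch
    linarith [hsch]
  -- bound the denominator
  have h2 : Complex.abs ((Λ:ℂ)^2 - (starRingEnd ℂ) a * f z) ≤ (Λ^2 - c^2) + c * Complex.abs (f z - a) := by
    have hrw : (Λ:ℂ)^2 - (starRingEnd ℂ) a * f z
        = ((Λ^2 - c^2 : ℝ) : ℂ) - (starRingEnd ℂ) a * (f z - a) := by
      have : (starRingEnd ℂ) a * a = ((c^2 : ℝ) : ℂ) := by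
        rw [mul_comm, Complex.mul_conj, Complex.normSq_eq_abs, hc]
      rw [mul_sub, this]; push_cast; ring
    rw [hrw]
    calc Complex.abs (((Λ^2 - c^2 : ℝ) : ℂ) - (starRingEnd ℂ) a * (f z - a))
        ≤ Complex.abs (((Λ^2 - c^2 : ℝ) : ℂ)) + Complex.abs ((starRingEnd ℂ) a * (f z - a)) :=
          Complex.abs.sub_le_add _ _
      _ = |Λ^2 - c^2| + c * Complex.abs (f z - a) := by
          rw [Complex.abs_ofReal, map_mul, Complex.abs_conj, ← hc]
      _ ≤ (Λ^2 - c^2) + c * Complex.abs (f z - a) := by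
          rw [_root_.abs_of_nonneg (by nlinarith)]
  have hz1 : Complex.abs z < 1 := mem_ball_zero_iff.1 hz
  nlinarith [Complex.abs.nonneg (f z - a), Complex.abs.nonneg z,
    mul_le_mul_of_nonneg_left h2 (Complex.abs.nonneg z)]

lemma Kdist (p q : ℂ → ℂ) (Λ r' : ℝ) (hΛ : 1 < Λ)
    (hp : DifferentiableOn ℂ p (ball 0 1)) (hq : DifferentiableOn ℂ q (ball 0 1))
    (hb : ∀ z ∈ ball (0:ℂ) 1, Complex.abs (p z) + Complex.abs (q z) < Λ)
    (hl : 1 ≤ |Complex.abs (p 0) - Complex.abs (q 0)|)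
    (hr'0 : 0 ≤ r') (hr'1 : r' < 1) (hΛr : Λ * r' ≤ 1)
    (z : ℂ) (hz : Complex.abs z ≤ r') :
    Complex.abs (p z - p 0) + Complex.abs (q z - q 0) ≤ (Λ^2 - 1) * r' / (Λ - r') := by
  obtain ⟨ε, hε1, hεe⟩ := abs_add_phase (p z - p 0) (q z - q 0)
  set f : ℂ → ℂ := fun x => p x + ε * q x with hf
  have hzball : z ∈ ball (0:ℂ) 1 := by
    rw [mem_ball_zero_iff, Complex.norm_eq_abs]; linarith
  have hfd : DifferentiableOn ℂ f (ball 0 1) := hp.add ((differentiableOn_const _).mul hq)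
  have hfb : ∀ x ∈ ball (0:ℂ) 1, Complex.abs (f x) < Λ := by
    intro x hx
    calc Complex.abs (p x + ε * q x) ≤ Complex.abs (p x) + Complex.abs (ε * q x) :=
          Complex.abs.add_le _ _
      _ = Complex.abs (p x) + Complex.abs (q x) := by rw [map_mul, hε1, one_mul]
      _ < Λ := hb x hx
  -- 1 ≤ |f 0| =: c < Λ
  set c := Complex.abs (f 0) with hcdef
  have hcΛ : c < Λ := hfb 0 (by simp)
  have hc1 : 1 ≤ c := by
    have hq0 : Complex.abs (ε * q 0) = Complex.abs (q 0) := by rw [map_mul, hε1, one_mul]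
    have h1 : Complex.abs (p 0) ≤ c + Complex.abs (q 0) := by
      have he : p 0 = f 0 - ε * q 0 := by simp only [hf]; ring
      rw [he]
      calc Complex.abs (f 0 - ε * q 0) ≤ Complex.abs (f 0) + Complex.abs (ε * q 0) :=
            Complex.abs.sub_le_add _ _
        _ = c + Complex.abs (q 0) := by rw [hq0]
    have h2 : Complex.abs (q 0) ≤ c + Complex.abs (p 0) := by
      have he : ε * q 0 = f 0 - p 0 := by simp only [hf]; ring
      rw [← hq0, he]
      calc Complex.abs (f 0 - p 0) ≤ Complex.abs (f 0) + Complex.abs (p 0) :=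
            Complex.abs.sub_le_add _ _
        _ = c + Complex.abs (p 0) := rfl
    have habs : |Complex.abs (p 0) - Complex.abs (q 0)| ≤ c :=
      abs_le.mpr ⟨by linarith, by linarith⟩
    linarith
  -- apply Schwarz-Pick to f
  have hsp := sp_core f Λ hΛ hfd hfb z hzball
  have hfz : f z - f 0 = (p z - p 0) + ε * (q z - q 0) := by simp only [hf]; ring
  set Δ := Complex.abs (p z - p 0) + Complex.abs (q z - q 0) with hΔ
  have hΔabs : Complex.abs (f z - f 0) = Δ := by rw [hfz, hεe]
  rw [hΔabs] at hsp
  -- hsp : Δ * (Λ - c * |z|) ≤ |z| * (Λ² - c²)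
  have hΔ0 : 0 ≤ Δ := by positivity
  set s := Complex.abs z with hs
  have hs0 : 0 ≤ s := Complex.abs.nonneg z
  have hsp' : Δ * (Λ - c * s) ≤ s * (Λ^2 - c^2) := by rw [hcdef]; exact hsp
  have hc0 : (0:ℝ) ≤ c := le_trans zero_le_one hc1
  have hcs : c * s ≤ 1 := by nlinarith
  have hden1 : 0 < Λ - c * s := by nlinarith
  have hden2 : 0 < Λ - c * r' := by nlinarith
  have hden3 : 0 < Λ - r' := by nlinarith
  have hstepA : Δ * (Λ - c * r') ≤ r' * (Λ^2 - c^2) := by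
    have hmono : s * (Λ^2 - c^2) * (Λ - c * r') ≤ r' * (Λ^2 - c^2) * (Λ - c * s) := by
      nlinarith [mul_nonneg (mul_nonneg (by nlinarith : (0:ℝ) ≤ Λ^2 - c^2)
        (by linarith : (0:ℝ) ≤ Λ)) (sub_nonneg.2 hz)]
    have h5 : Δ * (Λ - c * r') * (Λ - c * s) ≤ r' * (Λ^2 - c^2) * (Λ - c * s) := by
      nlinarith [mul_le_mul_of_nonneg_right hsp' hden2.le]
    exact le_of_mul_le_mul_right h5 hden1
  have hstepB : r' * (Λ^2 - c^2) * (Λ - r') ≤ r' * (Λ^2 - 1) * (Λ - c * r') := by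
    have key : (c - 1) * (Λ^2 * r' + c * r' - Λ * c - Λ) ≤ 0 := by
      have e1 : Λ^2 * r' ≤ Λ := by nlinarith
      have e2 : c * r' ≤ Λ * c := by nlinarith
      apply mul_nonpos_of_nonneg_of_nonpos (by linarith)
      nlinarith
    nlinarith [mul_nonneg hr'0 (by linarith : (0:ℝ) ≤ -((c - 1) * (Λ^2 * r' + c * r' - Λ * c - Λ)))]
  rw [le_div_iff₀ hden3]
  have h6 : Δ * (Λ - r') * (Λ - c * r') ≤ r' * (Λ^2 - 1) * (Λ - c * r') := by
    nlinarith [mul_le_mul_of_nonneg_right hstepA hden3.le]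
  have h7 : Δ * (Λ - r') ≤ r' * (Λ^2 - 1) := le_of_mul_le_mul_right h6 hden2
  linarith

lemma prod_growth (h₁ g₁ : ℂ → ℂ) (Λ₂ : ℝ)
    (hh₁ : AnalyticOnNhd ℂ h₁ (ball 0 1)) (hg₁ : AnalyticOnNhd ℂ g₁ (ball 0 1))
    (hh₁0 : h₁ 0 = 0)
    (hL : ∀ z ∈ ball (0 : ℂ) 1,
      Complex.abs (deriv h₁ z * g₁ z) + Complex.abs (h₁ z * deriv g₁ z) ≤ Λ₂)
    (z : ℂ) (hz : z ∈ ball (0:ℂ) 1) :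
    Complex.abs (h₁ z * g₁ z) ≤ Λ₂ * Complex.abs z := by
  set ψ : ℝ → ℂ := fun t => h₁ ((t:ℂ) * z) * g₁ ((t:ℂ) * z) with hψ
  set ψ' : ℝ → ℂ := fun t =>
    deriv h₁ ((t:ℂ) * z) * z * g₁ ((t:ℂ) * z) + h₁ ((t:ℂ) * z) * (deriv g₁ ((t:ℂ) * z) * z)
    with hψ'
  have hzn : Complex.abs z < 1 := mem_ball_zero_iff.1 hz
  have hmem : ∀ t ∈ Icc (0:ℝ) 1, ((t:ℂ) * z) ∈ ball (0:ℂ) 1 := by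
    intro t ht
    rw [mem_ball_zero_iff, norm_mul, Complex.norm_eq_abs, Complex.norm_eq_abs,
      Complex.abs_ofReal, _root_.abs_of_nonneg ht.1]
    nlinarith [ht.2, Complex.abs.nonneg z, ht.1]
  have hd : ∀ t ∈ Icc (0:ℝ) 1, HasDerivWithinAt ψ (ψ' t) (Icc (0:ℝ) 1) t := by
    intro t ht
    have hγ : HasDerivAt (fun t : ℝ => (t:ℂ) * z) z t := by
      simpa using (Complex.ofRealCLM.hasDerivAt (x := t)).mul_const z
    have hhd : HasDerivAt (fun t : ℝ => h₁ ((t:ℂ) * z)) (deriv h₁ ((t:ℂ) * z) * z) t :=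
      ((hh₁ _ (hmem t ht)).differentiableAt.hasDerivAt).comp t hγ
    have hgd : HasDerivAt (fun t : ℝ => g₁ ((t:ℂ) * z)) (deriv g₁ ((t:ℂ) * z) * z) t :=
      ((hg₁ _ (hmem t ht)).differentiableAt.hasDerivAt).comp t hγ
    exact (hhd.mul hgd).hasDerivWithinAt
  have hbound : ∀ t ∈ Icc (0:ℝ) 1, ‖ψ' t‖ ≤ Λ₂ * Complex.abs z := by
    intro t ht
    have h := hL _ (hmem t ht)
    rw [Complex.norm_eq_abs, hψ']
    calc Complex.abs (deriv h₁ ((t:ℂ) * z) * z * g₁ ((t:ℂ) * z)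
            + h₁ ((t:ℂ) * z) * (deriv g₁ ((t:ℂ) * z) * z))
        ≤ Complex.abs (deriv h₁ ((t:ℂ) * z) * z * g₁ ((t:ℂ) * z))
            + Complex.abs (h₁ ((t:ℂ) * z) * (deriv g₁ ((t:ℂ) * z) * z)) := Complex.abs.add_le _ _
      _ = (Complex.abs (deriv h₁ ((t:ℂ) * z) * g₁ ((t:ℂ) * z))
            + Complex.abs (h₁ ((t:ℂ) * z) * deriv g₁ ((t:ℂ) * z))) * Complex.abs z := by
          simp only [map_mul]; ring
      _ ≤ Λ₂ * Complex.abs z := by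
          apply mul_le_mul_of_nonneg_right h (Complex.abs.nonneg z)
  have hMVT := Convex.norm_image_sub_le_of_norm_hasDerivWithin_le hd hbound
    (convex_Icc 0 1) (left_mem_Icc.2 zero_le_one) (right_mem_Icc.2 zero_le_one)
  have hψ1 : ψ 1 = h₁ z * g₁ z := by simp [hψ]
  have hψ0 : ψ 0 = 0 := by simp [hψ, hh₁0]
  rw [hψ1, hψ0, sub_zero, Complex.norm_eq_abs] at hMVT
  simpa using hMVT

end LandauAux

set_option maxHeartbeats 1600000 in
/-- Landau-type theorem: univalence of `F(z) = |z|² L(z) + K(z)` on the disk of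
radius `r₁`, the root of `Λ₁(1 − Λ₁ r)/(Λ₁ − r) − 3 r² Λ₂ = 0`. -/
theorem stmt_8 (h₁ g₁ h₂ g₂ : ℂ → ℂ) (Λ₁ Λ₂ : ℝ)
    (hh₁ : AnalyticOnNhd ℂ h₁ (ball 0 1)) (hg₁ : AnalyticOnNhd ℂ g₁ (ball 0 1))
    (hh₂ : AnalyticOnNhd ℂ h₂ (ball 0 1)) (hg₂ : AnalyticOnNhd ℂ g₂ (ball 0 1))
    (hh₁0 : h₁ 0 = 0)
    (F : ℂ → ℂ)
    (hF : ∀ z, F z = ((‖z‖ : ℝ) : ℂ) ^ 2 * (h₁ z * (starRingEnd ℂ) (g₁ z)) +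
      (h₂ z + (starRingEnd ℂ) (g₂ z)))
    (hF0 : F 0 = 0)
    (hlam : |‖deriv h₂ 0‖ - ‖deriv g₂ 0‖| = 1)
    (hΛ₁ : Λ₁ > 1)
    (hK : ∀ z ∈ ball (0 : ℂ) 1,
      ‖deriv h₂ z‖ + ‖deriv g₂ z‖ < Λ₁)
    (hL : ∀ z ∈ ball (0 : ℂ) 1,
      ‖deriv h₁ z * g₁ z‖ + ‖h₁ z * deriv g₁ z‖ ≤ Λ₂)
    (r₁ : ℝ) (hr₁ : r₁ ∈ Set.Ioo (0 : ℝ) 1)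
    (hroot : Λ₁ * (1 - Λ₁ * r₁) / (Λ₁ - r₁) - 3 * r₁ ^ 2 * Λ₂ = 0) :
    Set.InjOn F (ball 0 r₁) := by
  simp only [Complex.norm_eq_abs] at hF hlam hK hL
  obtain ⟨hr₁0, hr₁1⟩ := hr₁
  have h01 : (0:ℂ) ∈ ball (0:ℂ) 1 := by simp
  have hΛ₂0 : 0 ≤ Λ₂ := le_trans (by positivity) (hL 0 h01)
  have hΛr₁pos : (0:ℝ) < Λ₁ - r₁ := by linarith
  have hroot' : Λ₁ * (1 - Λ₁ * r₁) = 3 * r₁ ^ 2 * Λ₂ * (Λ₁ - r₁) := by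
    rw [sub_eq_zero, div_eq_iff (ne_of_gt hΛr₁pos)] at hroot
    exact hroot
  have hΛr₁ : Λ₁ * r₁ ≤ 1 := by
    nlinarith [mul_nonneg (mul_nonneg (by positivity : (0:ℝ) ≤ 3 * r₁^2) hΛ₂0) hΛr₁pos.le]
  -- key root identity
  have hid : (Λ₁^2 - 1) * r₁ = (1 - 3 * r₁^2 * Λ₂) * (Λ₁ - r₁) := by nlinarith [hroot']
  intro z₁ hz₁ z₂ hz₂ hFeq
  by_contra hne
  set w := z₁ - z₂ with hw
  have hwne : w ≠ 0 := sub_ne_zero.2 hne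
  have hwpos : 0 < Complex.abs w := Complex.abs.pos hwne
  have hz₁' : Complex.abs z₁ < r₁ := by rwa [mem_ball_zero_iff, Complex.norm_eq_abs] at hz₁
  have hz₂' : Complex.abs z₂ < r₁ := by rwa [mem_ball_zero_iff, Complex.norm_eq_abs] at hz₂
  set r' := max (Complex.abs z₁) (Complex.abs z₂) with hr'
  have hr'r₁ : r' < r₁ := max_lt hz₁' hz₂'
  have hr'0 : 0 ≤ r' := le_trans (Complex.abs.nonneg z₁) (le_max_left _ _)
  have hr'1 : r' < 1 := lt_trans hr'r₁ hr₁1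
  have hΛr' : Λ₁ * r' ≤ 1 := by nlinarith
  set γ : ℝ → ℂ := fun t => z₂ + (t:ℂ) * w with hγ
  have hγr : ∀ t ∈ Icc (0:ℝ) 1, Complex.abs (γ t) ≤ r' := by
    intro t ht
    have heq : γ t = ((1 - t : ℝ):ℂ) * z₂ + ((t:ℝ):ℂ) * z₁ := by
      simp only [hγ, hw]; push_cast; ring
    rw [heq]
    calc Complex.abs (((1 - t : ℝ):ℂ) * z₂ + ((t:ℝ):ℂ) * z₁)
        ≤ Complex.abs (((1 - t : ℝ):ℂ) * z₂) + Complex.abs (((t:ℝ):ℂ) * z₁) :=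
          Complex.abs.add_le _ _
      _ = (1 - t) * Complex.abs z₂ + t * Complex.abs z₁ := by
          rw [map_mul, map_mul, Complex.abs_ofReal, Complex.abs_ofReal,
            _root_.abs_of_nonneg (by linarith [ht.2] : (0:ℝ) ≤ 1 - t),
            _root_.abs_of_nonneg ht.1]
      _ ≤ (1 - t) * r' + t * r' := by
          have h1 : Complex.abs z₂ ≤ r' := le_max_right _ _
          have h2 : Complex.abs z₁ ≤ r' := le_max_left _ _
          have := ht.1; have := ht.2
          nlinarith
      _ = r' := by ring
  have hγball : ∀ t ∈ Icc (0:ℝ) 1, γ t ∈ ball (0:ℂ) 1 := by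
    intro t ht
    rw [mem_ball_zero_iff, Complex.norm_eq_abs]
    exact lt_of_le_of_lt (hγr t ht) hr'1
  set C₀ : ℂ := deriv h₂ 0 * w + star (deriv g₂ 0 * w) with hC₀
  set φ : ℝ → ℂ := fun t =>
    γ t * star (γ t) * (h₁ (γ t) * star (g₁ (γ t))) + (h₂ (γ t) + star (g₂ (γ t)))
      - (t:ℂ) * C₀ with hφ
  have habs2 : ∀ x : ℂ, ((Complex.abs x : ℝ) : ℂ)^2 = x * star x := by
    intro x
    rw [← Complex.ofReal_pow, Complex.sq_abs, ← Complex.mul_conj, starRingEnd_apply]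
  have hφF : ∀ t : ℝ, φ t = F (γ t) - (t:ℂ) * C₀ := by
    intro t
    rw [hφ, hF (γ t), habs2]
    simp only [starRingEnd_apply]
    all_goals ring
  set φ' : ℝ → ℂ := fun t =>
    (w * star (γ t) + γ t * star w) * (h₁ (γ t) * star (g₁ (γ t)))
      + γ t * star (γ t) * ((deriv h₁ (γ t) * w) * star (g₁ (γ t))
        + h₁ (γ t) * star (deriv g₁ (γ t) * w))
      + ((deriv h₂ (γ t) * w) + star (deriv g₂ (γ t) * w)) - C₀ with hφ'
  have hderiv : ∀ t ∈ Icc (0:ℝ) 1, HasDerivWithinAt φ (φ' t) (Icc (0:ℝ) 1) t := by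
    intro t ht
    have hγd : HasDerivAt γ w t := by
      simpa [hγ] using ((Complex.ofRealCLM.hasDerivAt (x := t)).mul_const w).const_add z₂
    have hγs : HasDerivAt (fun s : ℝ => star (γ s)) (star w) t := hγd.star
    have hmem := hγball t ht
    have hh₁d : HasDerivAt (fun s : ℝ => h₁ (γ s)) (deriv h₁ (γ t) * w) t :=
      ((hh₁ _ hmem).differentiableAt.hasDerivAt).comp t hγd
    have hg₁d : HasDerivAt (fun s : ℝ => g₁ (γ s)) (deriv g₁ (γ t) * w) t :=
      ((hg₁ _ hmem).differentiableAt.hasDerivAt).comp t hγd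
    have hh₂d : HasDerivAt (fun s : ℝ => h₂ (γ s)) (deriv h₂ (γ t) * w) t :=
      ((hh₂ _ hmem).differentiableAt.hasDerivAt).comp t hγd
    have hg₂d : HasDerivAt (fun s : ℝ => g₂ (γ s)) (deriv g₂ (γ t) * w) t :=
      ((hg₂ _ hmem).differentiableAt.hasDerivAt).comp t hγd
    have hg₁s : HasDerivAt (fun s : ℝ => star (g₁ (γ s))) (star (deriv g₁ (γ t) * w)) t :=
      hg₁d.star
    have hg₂s : HasDerivAt (fun s : ℝ => star (g₂ (γ s))) (star (deriv g₂ (γ t) * w)) t :=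
      hg₂d.star
    have htC : HasDerivAt (fun s : ℝ => (s:ℂ) * C₀) C₀ t := by
      simpa using (Complex.ofRealCLM.hasDerivAt (x := t)).mul_const C₀
    have hall := (((hγd.mul hγs).mul (hh₁d.mul hg₁s)).add (hh₂d.add hg₂s)).sub htC
    have : HasDerivAt φ (φ' t) t := by
      exact hall.congr_deriv (by rw [hφ']; simp only [Pi.mul_apply])
    exact this.hasDerivWithinAt
  -- bound on the derivative
  have habs_star : ∀ y : ℂ, Complex.abs (star y) = Complex.abs y := by
    intro y; rw [← starRingEnd_apply]; exact Complex.abs_conj y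
  set M : ℝ := ((Λ₁^2 - 1) * r' / (Λ₁ - r') + 3 * r'^2 * Λ₂) * Complex.abs w with hM
  have hbound : ∀ t ∈ Icc (0:ℝ) 1, ‖φ' t‖ ≤ M := by
    intro t ht
    set x := γ t with hx
    have hxr : Complex.abs x ≤ r' := hγr t ht
    have hxball : x ∈ ball (0:ℂ) 1 := hγball t ht
    have hx0 : 0 ≤ Complex.abs x := Complex.abs.nonneg x
    -- T1 bound
    have hT1 : Complex.abs ((w * star x + x * star w) * (h₁ x * star (g₁ x)))
        ≤ 2 * r' * Complex.abs w * (Λ₂ * r') := by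
      have hprod : Complex.abs (h₁ x * star (g₁ x)) ≤ Λ₂ * r' := by
        rw [map_mul, habs_star, ← map_mul]
        calc Complex.abs (h₁ x * g₁ x) ≤ Λ₂ * Complex.abs x :=
              prod_growth h₁ g₁ Λ₂ hh₁ hg₁ hh₁0 hL x hxball
          _ ≤ Λ₂ * r' := by nlinarith
      have hsum : Complex.abs (w * star x + x * star w) ≤ 2 * r' * Complex.abs w := by
        calc Complex.abs (w * star x + x * star w)
            ≤ Complex.abs (w * star x) + Complex.abs (x * star w) := Complex.abs.add_le _ _
          _ = Complex.abs w * Complex.abs x + Complex.abs x * Complex.abs w := by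
              rw [map_mul, map_mul, habs_star, habs_star]
          _ ≤ 2 * r' * Complex.abs w := by nlinarith [Complex.abs.nonneg w]
      rw [map_mul]
      have h1 := Complex.abs.nonneg (w * star x + x * star w)
      have h2 := Complex.abs.nonneg (h₁ x * star (g₁ x))
      nlinarith [mul_nonneg (mul_nonneg (by norm_num : (0:ℝ) ≤ 2) hr'0) (Complex.abs.nonneg w)]
    -- T2 bound
    have hT2 : Complex.abs (x * star x * ((deriv h₁ x * w) * star (g₁ x)
          + h₁ x * star (deriv g₁ x * w)))
        ≤ r'^2 * Λ₂ * Complex.abs w := by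
      have hinner : Complex.abs ((deriv h₁ x * w) * star (g₁ x) + h₁ x * star (deriv g₁ x * w))
          ≤ Λ₂ * Complex.abs w := by
        calc Complex.abs ((deriv h₁ x * w) * star (g₁ x) + h₁ x * star (deriv g₁ x * w))
            ≤ Complex.abs ((deriv h₁ x * w) * star (g₁ x))
              + Complex.abs (h₁ x * star (deriv g₁ x * w)) := Complex.abs.add_le _ _
          _ = (Complex.abs (deriv h₁ x * g₁ x) + Complex.abs (h₁ x * deriv g₁ x))
              * Complex.abs w := by
              simp only [map_mul, habs_star]; ring
          _ ≤ Λ₂ * Complex.abs w :=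
              mul_le_mul_of_nonneg_right (hL x hxball) (Complex.abs.nonneg w)
      rw [map_mul, map_mul, habs_star]
      have hxx : Complex.abs x * Complex.abs x ≤ r'^2 := by nlinarith
      calc Complex.abs x * Complex.abs x
            * Complex.abs ((deriv h₁ x * w) * star (g₁ x) + h₁ x * star (deriv g₁ x * w))
          ≤ r'^2 * (Λ₂ * Complex.abs w) :=
            mul_le_mul hxx hinner (Complex.abs.nonneg _) (by positivity)
        _ = r'^2 * Λ₂ * Complex.abs w := by ring
    -- T3 bound
    have hT3 : Complex.abs (((deriv h₂ x * w) + star (deriv g₂ x * w)) - C₀)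
        ≤ (Λ₁^2 - 1) * r' / (Λ₁ - r') * Complex.abs w := by
      have hrw : ((deriv h₂ x * w) + star (deriv g₂ x * w)) - C₀
          = (deriv h₂ x - deriv h₂ 0) * w + star ((deriv g₂ x - deriv g₂ 0) * w) := by
        rw [hC₀, sub_mul, sub_mul, star_sub]; ring
      rw [hrw]
      have hKd := Kdist (deriv h₂) (deriv g₂) Λ₁ r' hΛ₁ (hh₂.deriv.differentiableOn)
        (hg₂.deriv.differentiableOn) hK (le_of_eq hlam.symm) hr'0 hr'1 hΛr' x hxr
      calc Complex.abs ((deriv h₂ x - deriv h₂ 0) * w + star ((deriv g₂ x - deriv g₂ 0) * w))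
          ≤ Complex.abs ((deriv h₂ x - deriv h₂ 0) * w)
            + Complex.abs (star ((deriv g₂ x - deriv g₂ 0) * w)) := Complex.abs.add_le _ _
        _ = (Complex.abs (deriv h₂ x - deriv h₂ 0) + Complex.abs (deriv g₂ x - deriv g₂ 0))
            * Complex.abs w := by
            rw [habs_star, map_mul, map_mul]; ring
        _ ≤ (Λ₁^2 - 1) * r' / (Λ₁ - r') * Complex.abs w :=
            mul_le_mul_of_nonneg_right hKd (Complex.abs.nonneg w)
    have edec : φ' t = ((w * star x + x * star w) * (h₁ x * star (g₁ x))
        + x * star x * ((deriv h₁ x * w) * star (g₁ x) + h₁ x * star (deriv g₁ x * w)))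
        + (((deriv h₂ x * w) + star (deriv g₂ x * w)) - C₀) := by
      rw [hφ', hx]; ring
    rw [Complex.norm_eq_abs, edec]
    have hspl1 := Complex.abs.add_le
      ((w * star x + x * star w) * (h₁ x * star (g₁ x))
        + x * star x * ((deriv h₁ x * w) * star (g₁ x) + h₁ x * star (deriv g₁ x * w)))
      (((deriv h₂ x * w) + star (deriv g₂ x * w)) - C₀)
    have hspl2 := Complex.abs.add_le
      ((w * star x + x * star w) * (h₁ x * star (g₁ x)))
      (x * star x * ((deriv h₁ x * w) * star (g₁ x) + h₁ x * star (deriv g₁ x * w)))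
    have hMexp : M = (Λ₁^2 - 1) * r' / (Λ₁ - r') * Complex.abs w
        + 3 * r'^2 * Λ₂ * Complex.abs w := by rw [hM]; ring
    have hmono3 : 2 * r' * Complex.abs w * (Λ₂ * r') + r'^2 * Λ₂ * Complex.abs w
        = 3 * r'^2 * Λ₂ * Complex.abs w := by ring
    linarith
  -- mean value theorem
  have hMVT := Convex.norm_image_sub_le_of_norm_hasDerivWithin_le hderiv hbound
    (convex_Icc 0 1) (left_mem_Icc.2 zero_le_one) (right_mem_Icc.2 zero_le_one)
  have hγ1 : γ 1 = z₁ := by simp [hγ, hw]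
  have hγ0 : γ 0 = z₂ := by simp [hγ]
  have hφ1 : φ 1 = F z₁ - C₀ := by rw [hφF 1, hγ1]; push_cast; ring
  have hφ0 : φ 0 = F z₂ := by rw [hφF 0, hγ0]; push_cast; ring
  rw [hφ1, hφ0, hFeq] at hMVT
  have hφdiff : F z₂ - C₀ - F z₂ = -C₀ := by ring
  rw [hφdiff, norm_neg] at hMVT
  have hnorm1 : ‖(1:ℝ) - 0‖ = 1 := by norm_num
  rw [hnorm1, mul_one] at hMVT
  -- lower bound on C₀
  have hC₀lb : Complex.abs w ≤ ‖C₀‖ := by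
    have h := abs_norm_sub_norm_le (deriv h₂ 0 * w) (-(star (deriv g₂ 0 * w)))
    have he : deriv h₂ 0 * w - -(star (deriv g₂ 0 * w)) = C₀ := by rw [hC₀]; ring
    rw [he, norm_neg] at h
    have h1 : ‖deriv h₂ 0 * w‖ = Complex.abs (deriv h₂ 0) * Complex.abs w := by
      rw [Complex.norm_eq_abs, map_mul]
    have h2 : ‖star (deriv g₂ 0 * w)‖ = Complex.abs (deriv g₂ 0) * Complex.abs w := by
      rw [norm_star, Complex.norm_eq_abs, map_mul]
    rw [h1, h2] at h
    have h3 : |Complex.abs (deriv h₂ 0) * Complex.abs w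
        - Complex.abs (deriv g₂ 0) * Complex.abs w|
        = |Complex.abs (deriv h₂ 0) - Complex.abs (deriv g₂ 0)| * Complex.abs w := by
      rw [← sub_mul, abs_mul, _root_.abs_of_nonneg (Complex.abs.nonneg w)]
    rw [h3, hlam, one_mul] at h
    linarith
  -- final contradiction
  have hD : (Λ₁^2 - 1) * r' / (Λ₁ - r') + 3 * r'^2 * Λ₂ < 1 := by
    have hΛr'pos : (0:ℝ) < Λ₁ - r' := by linarith
    have hA : (Λ₁^2 - 1) * r' / (Λ₁ - r') < (Λ₁^2 - 1) * r₁ / (Λ₁ - r₁) := by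
      rw [div_lt_div_iff₀ hΛr'pos hΛr₁pos]
      nlinarith [mul_pos (by nlinarith : (0:ℝ) < Λ₁^2 - 1) (by linarith : (0:ℝ) < Λ₁)]
    have hid2 : (Λ₁^2 - 1) * r₁ / (Λ₁ - r₁) = 1 - 3 * r₁^2 * Λ₂ := by
      rw [div_eq_iff (ne_of_gt hΛr₁pos)]
      linarith [hid]
    have hB : 3 * r'^2 * Λ₂ ≤ 3 * r₁^2 * Λ₂ := by
      nlinarith [mul_nonneg hΛ₂0 (by nlinarith : (0:ℝ) ≤ r₁^2 - r'^2)]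
    rw [hid2] at hA
    linarith
  have hMlt : M < Complex.abs w := by
    rw [hM]
    have := mul_lt_mul_of_pos_right hD hwpos
    linarith
  linarith
end

section
/- Let Λ₁ > 1 and Λ₂ ≥ 0, and let r₁ ∈ (0, 1/Λ₁] be the unique root of Λ₁·(1 − Λ₁ r)/(Λ₁ − r) − 3 r² Λ₂ = 0. Define F₀(z) = Λ₁² z + (Λ₁³ − Λ₁)·Log(1 − z/Λ₁) − Λ₂ z²·conj(z) for z ∈ 𝔻, where Log is the principal branch of the complex logarithm. Then for every r ∈ (r₁, 1], F₀ is not injective on the disk 𝔻_r = {|z| < r}: there exist distinct real points x₁, x₂ ∈ 𝔻_r with F₀(x₁) = F₀(x₂). -/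
open Complex Metric

lemma bracket_nonneg (a t L x : ℝ) (ha : 1 < a) (ht : 0 < t) (hat : a*t ≤ 1) (hL : 0 ≤ L)
    (hE : a*(1-a*t) = 3*L*t^2*(a-t)) (hx0 : 0 ≤ x) (hx1 : x ≤ 1) :
    0 ≤ a^2 + 3*L*(a*(t+x) - t^2 - t*x - x^2) := by
  have h2 : 0 < a - t := by nlinarith
  have hk : 3*L*t^2 ≤ a^2 := by nlinarith [mul_pos h2 ht]
  nlinarith [mul_nonneg hL (mul_nonneg hx0 (sub_nonneg.2 hx1)),
    mul_nonneg hL (mul_nonneg ht.le (sub_nonneg.2 hx1)),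
    mul_nonneg hL (mul_nonneg ht.le hx0),
    mul_nonneg hL ht.le, mul_nonneg hL hx0,
    mul_pos ht (sub_pos.2 ha), mul_nonneg hx0 (sub_nonneg.2 hx1),
    sq_nonneg (t-x), mul_nonneg (mul_nonneg hL ht.le) ht.le]

lemma P_factor (a t L x : ℝ) (hE : a*(1-a*t) = 3*L*t^2*(a-t)) :
    a*(1-a*x) - 3*L*x^2*(a-x) = (t-x) * (a^2 + 3*L*(a*(t+x) - t^2 - t*x - x^2)) := by
  nlinarith [hE]

/-- Sharpness of the univalence radius `r₁`: the extremal map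
`F₀(z) = Λ₁² z + (Λ₁³ − Λ₁) Log(1 − z/Λ₁) − Λ₂ z² z̄` fails to be injective on
every disk `𝔻_r` with `r₁ < r ≤ 1`. -/
theorem stmt_10 (Λ₁ Λ₂ : ℝ) (hΛ₁ : Λ₁ > 1) (hΛ₂ : Λ₂ ≥ 0)
    (r₁ : ℝ) (hr₁ : r₁ ∈ Set.Ioc 0 (1 / Λ₁))
    (hroot : Λ₁ * (1 - Λ₁ * r₁) / (Λ₁ - r₁) - 3 * r₁ ^ 2 * Λ₂ = 0)
    (F₀ : ℂ → ℂ)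
    (hF₀ : ∀ z, F₀ z = (Λ₁ : ℂ) ^ 2 * z + ((Λ₁ : ℂ) ^ 3 - Λ₁) *
      Complex.log (1 - z / Λ₁) - (Λ₂ : ℂ) * z ^ 2 * (starRingEnd ℂ) z) :
    ∀ r ∈ Set.Ioc r₁ 1, ∃ x₁ x₂ : ℝ, x₁ ≠ x₂ ∧
      (x₁ : ℂ) ∈ ball (0 : ℂ) r ∧ (x₂ : ℂ) ∈ ball (0 : ℂ) r ∧
      F₀ x₁ = F₀ x₂ := by
  intro r hr
  obtain ⟨hr₁0, hr₁Λ⟩ := hr₁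
  obtain ⟨hrr₁, hr1⟩ := hr
  have hΛ₀ : (0:ℝ) < Λ₁ := by linarith
  have hiΛ : 1 / Λ₁ < 1 := by
    rw [div_lt_one hΛ₀]; exact hΛ₁
  have hr₁1 : r₁ < 1 := lt_of_le_of_lt hr₁Λ hiΛ
  have hatle : Λ₁ * r₁ ≤ 1 := by
    rw [le_div_iff₀ hΛ₀] at hr₁Λ; linarith [hr₁Λ]
  -- the root equation in product form
  have hΛr₁ : 0 < Λ₁ - r₁ := by linarith
  have hE : Λ₁*(1-Λ₁*r₁) = 3*Λ₂*r₁^2*(Λ₁-r₁) := by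
    have := hroot
    field_simp at this
    nlinarith [this]
  -- the real function
  set g : ℝ → ℝ := fun x => Λ₁^2*x + (Λ₁^3 - Λ₁)*Real.log (1 - x/Λ₁) - Λ₂*x^3 with hg
  -- F₀ on real points equals g
  have hreal : ∀ x : ℝ, 0 ≤ x → x ≤ 1 → F₀ x = ((g x : ℝ) : ℂ) := by
    intro x hx0 hx1
    have hpos : (0:ℝ) < 1 - x/Λ₁ := by
      rw [sub_pos, div_lt_one hΛ₀]; linarith
    have hcast : (1 - (x:ℂ)/Λ₁) = (((1 - x/Λ₁ : ℝ)) : ℂ) := by push_cast; ring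
    rw [hF₀, hcast, ← Complex.ofReal_log hpos.le, Complex.conj_ofReal, hg]
    push_cast
    ring
  -- derivative of g
  have hderiv : ∀ x : ℝ, x ≤ 1 → HasDerivAt g
      ((Λ₁*(1-Λ₁*x) - 3*Λ₂*x^2*(Λ₁-x)) / (Λ₁ - x)) x := by
    intro x hx1
    have hΛx : 0 < Λ₁ - x := by linarith
    have hpos : (0:ℝ) < 1 - x/Λ₁ := by
      rw [sub_pos, div_lt_one hΛ₀]; linarith
    have h1 : HasDerivAt (fun y : ℝ => 1 - y/Λ₁) (-(1/Λ₁)) x := by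
      simpa using ((hasDerivAt_id x).div_const Λ₁).const_sub 1
    have h2 : HasDerivAt (fun y : ℝ => Real.log (1 - y/Λ₁)) (-(1/Λ₁) / (1 - x/Λ₁)) x :=
      h1.log (ne_of_gt hpos)
    have h3 : HasDerivAt (fun y : ℝ => Λ₁^2*y) (Λ₁^2) x := by
      simpa using (hasDerivAt_id x).const_mul (Λ₁^2)
    have h4 : HasDerivAt (fun y : ℝ => Λ₂*y^3) (Λ₂*(3*x^2)) x := by
      simpa using (hasDerivAt_pow 3 x).const_mul Λ₂
    have h5 := (h3.add (h2.const_mul (Λ₁^3 - Λ₁))).sub h4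
    refine HasDerivAt.congr_deriv h5 ?_
    symm
    have h1' : 1 - x/Λ₁ = (Λ₁ - x)/Λ₁ := by field_simp
    rw [h1', div_div_eq_mul_div]
    field_simp
    ring
  have hcont : ContinuousOn g (Set.Icc (-1 : ℝ) 1) := by
    intro x hx
    exact ((hderiv x hx.2).continuousAt).continuousWithinAt
  -- sign of derivative
  have hsign_pos : ∀ x ∈ Set.Icc (0:ℝ) r₁, 0 ≤ (Λ₁*(1-Λ₁*x) - 3*Λ₂*x^2*(Λ₁-x)) / (Λ₁ - x) := by
    intro x hx
    have hΛx : 0 < Λ₁ - x := by linarith [hx.2]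
    apply div_nonneg _ hΛx.le
    rw [P_factor Λ₁ r₁ Λ₂ x hE]
    exact mul_nonneg (by linarith [hx.2]) (bracket_nonneg Λ₁ r₁ Λ₂ x hΛ₁ hr₁0 hatle hΛ₂ hE hx.1 (by linarith [hx.2]))
  have hsign_neg : ∀ x ∈ Set.Icc r₁ (1:ℝ), (Λ₁*(1-Λ₁*x) - 3*Λ₂*x^2*(Λ₁-x)) / (Λ₁ - x) ≤ 0 := by
    intro x hx
    have hΛx : 0 < Λ₁ - x := by linarith [hx.2]
    apply div_nonpos_of_nonpos_of_nonneg _ hΛx.le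
    rw [P_factor Λ₁ r₁ Λ₂ x hE]
    exact mul_nonpos_of_nonpos_of_nonneg (by linarith [hx.1])
      (bracket_nonneg Λ₁ r₁ Λ₂ x hΛ₁ hr₁0 hatle hΛ₂ hE (le_trans hr₁0.le hx.1) hx.2)
  -- monotone on [0, r₁]
  have hmono : MonotoneOn g (Set.Icc (0:ℝ) r₁) := by
    apply monotoneOn_of_deriv_nonneg (convex_Icc 0 r₁)
      (hcont.mono (Set.Icc_subset_Icc (by norm_num) hr₁1.le))
    · intro x hx
      rw [interior_Icc] at hx
      exact ((hderiv x (by linarith [hx.2])).differentiableAt).differentiableWithinAt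
    · intro x hx
      rw [interior_Icc] at hx
      rw [(hderiv x (by linarith [hx.2])).deriv]
      exact hsign_pos x ⟨hx.1.le, hx.2.le⟩
  set m : ℝ := (r₁ + r)/2 with hm
  have hmr₁ : r₁ < m := by simp only [hm]; linarith
  have hmr : m < r := by simp only [hm]; linarith
  have hm1 : m < 1 := lt_of_lt_of_le hmr hr1
  -- antitone on [r₁, m]
  have hanti : AntitoneOn g (Set.Icc r₁ m) := by
    apply antitoneOn_of_deriv_nonpos (convex_Icc r₁ m)
      (hcont.mono (Set.Icc_subset_Icc (by linarith) hm1.le))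
    · intro x hx
      rw [interior_Icc] at hx
      exact ((hderiv x (by linarith [hx.2])).differentiableAt).differentiableWithinAt
    · intro x hx
      rw [interior_Icc] at hx
      rw [(hderiv x (by linarith [hx.2])).deriv]
      exact hsign_neg x ⟨hx.1.le, by linarith [hx.2]⟩
  have hgm_le : g m ≤ g r₁ := hanti ⟨le_refl r₁, hmr₁.le⟩ ⟨hmr₁.le, le_refl m⟩ hmr₁.le
  have hg0_le : g 0 ≤ g r₁ := hmono ⟨le_refl 0, hr₁0.le⟩ ⟨hr₁0.le, le_refl r₁⟩ hr₁0.le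
  have hrpos : 0 < r := lt_trans hr₁0 hrr₁
  have hballmem : ∀ x : ℝ, 0 ≤ x → x < r → (x:ℂ) ∈ ball (0:ℂ) r := by
    intro x hx0 hxr
    simp; rw [_root_.abs_of_nonneg hx0]; exact hxr
  by_cases hcase : g 0 ≤ g m
  · -- find x₁ ∈ [0, r₁] with g x₁ = g m
    have hiv := intermediate_value_Icc hr₁0.le
      (hcont.mono (Set.Icc_subset_Icc (by norm_num) (by linarith)))
    obtain ⟨x₁, hx₁mem, hx₁eq⟩ := hiv ⟨hcase, hgm_le⟩
    refine ⟨x₁, m, ?_, ?_, ?_, ?_⟩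
    · exact ne_of_lt (lt_of_le_of_lt hx₁mem.2 hmr₁)
    · exact hballmem x₁ hx₁mem.1 (lt_of_le_of_lt hx₁mem.2 (lt_trans hmr₁ hmr))
    · exact hballmem m (by linarith) hmr
    · rw [hreal x₁ hx₁mem.1 (by linarith [hx₁mem.2]), hreal m (by linarith) hm1.le, hx₁eq]
  · -- find x₂ ∈ [r₁, m] with g x₂ = g 0
    push_neg at hcase
    have hiv := intermediate_value_Icc' hmr₁.le
      (hcont.mono (Set.Icc_subset_Icc (by linarith) hm1.le))
    obtain ⟨x₂, hx₂mem, hx₂eq⟩ := hiv ⟨hcase.le, hg0_le⟩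
    refine ⟨0, x₂, ?_, ?_, ?_, ?_⟩
    · exact ne_of_lt (lt_of_lt_of_le hr₁0 hx₂mem.1)
    · exact hballmem 0 (le_refl 0) hrpos
    · exact hballmem x₂ (le_trans hr₁0.le hx₂mem.1) (lt_of_le_of_lt hx₂mem.2 hmr)
    · rw [hreal 0 (le_refl 0) (by norm_num), hreal x₂ (le_trans hr₁0.le hx₂mem.1) (by linarith [hx₂mem.2]), hx₂eq]
end

section
/- Let F(z) = |z|²·L(z) + K(z) on the unit disk 𝔻, where L(z) = h₁(z)·conj(g₁(z)) is logharmonic with h₁, g₁ analytic on 𝔻 and h₁(0) = 0, and K(z) = h₂(z) + conj(g₂(z)) is harmonic with h₂, g₂ analytic on 𝔻. Suppose F(0) = 0, λ_F(0) = ||h₂'(0)| − |g₂'(0)|| = 1, Λ_K(z) = |h₂'(z)| + |g₂'(z)| ≤ 1 for all z ∈ 𝔻, and Λ_L(z) = |h₁'(z)·g₁(z)| + |h₁(z)·g₁'(z)| ≤ Λ₂ for all z ∈ 𝔻. Set r₁' = 1 if 3Λ₂ ≤ 1 and r₁' = 1/√(3Λ₂) if 3Λ₂ > 1. Then F is univalent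 (injective) on the disk 𝔻_{r₁'} = {|z| < r₁'}. -/
open Complex Metric

lemma const_of_im_eq_zero {f : ℂ → ℂ} (hf : AnalyticOnNhd ℂ f (ball 0 1))
    (h : ∀ z ∈ ball (0:ℂ) 1, (f z).im = 0) : ∀ z ∈ ball (0:ℂ) 1, f z = f 0 := by
  rcases hf.is_constant_or_isOpen (convex_ball (0:ℂ) 1).isPreconnected with ⟨w, hw⟩ | hopen
  · intro z hz; rw [hw z hz, hw 0 (mem_ball_self one_pos)]
  · exfalso
    have himg : IsOpen (f '' ball 0 1) := hopen _ subset_rfl isOpen_ball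
    have hmem : f 0 ∈ f '' ball 0 1 := ⟨0, mem_ball_self one_pos, rfl⟩
    rcases Metric.isOpen_iff.1 himg _ hmem with ⟨ε, hε, hb⟩
    have : f 0 + ↑(ε/2) * I ∈ f '' ball 0 1 := by
      apply hb
      simp only [mem_ball, dist_eq, add_sub_cancel_left]
      rw [norm_mul, Complex.norm_I, mul_one, Complex.norm_real, Real.norm_eq_abs]
      rw [abs_of_pos (by linarith)]; linarith
    rcases this with ⟨z, hz, hfz⟩
    have h1 : (f z).im = 0 := h z hz
    have h2 : (f 0).im = 0 := h 0 (mem_ball_self one_pos)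
    rw [hfz] at h1
    simp [Complex.add_im, h2, Complex.mul_im] at h1
    linarith

lemma deriv_eq_const_of_max {h₂ g₂ : ℂ → ℂ}
    (hh₂ : AnalyticOnNhd ℂ h₂ (ball 0 1)) (hg₂ : AnalyticOnNhd ℂ g₂ (ball 0 1))
    (hlam : |‖deriv h₂ 0‖ - ‖deriv g₂ 0‖| = 1)
    (hK : ∀ z ∈ ball (0:ℂ) 1, ‖deriv h₂ z‖ + ‖deriv g₂ z‖ ≤ 1) :
    ∀ z ∈ ball (0:ℂ) 1, deriv h₂ z = deriv h₂ 0 ∧ deriv g₂ z = deriv g₂ 0 := by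
  set a := deriv h₂ 0 with ha
  set b := deriv g₂ 0 with hb
  have h0 : (0:ℂ) ∈ ball (0:ℂ) 1 := mem_ball_self one_pos
  have hab : ‖a‖ + ‖b‖ = 1 := by
    refine le_antisymm (hK 0 h0) ?_
    have := abs_le.1 hlam.le
    have h1 := norm_nonneg a
    have h2 := norm_nonneg b
    rcases abs_cases (‖a‖ - ‖b‖) with ⟨he, _⟩ | ⟨he, _⟩ <;> 
      rw [he] at hlam <;> linarith
  set c₁ : ℂ := if a = 0 then 1 else (‖a‖ : ℂ) / a with hc₁
  set c₂ : ℂ := if b = 0 then 1 else (‖b‖ : ℂ) / b with hc₂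
  have habs : ∀ (w : ℂ) (c : ℂ), c = (if w = 0 then 1 else (‖w‖ : ℂ) / w) →
      ‖c‖ = 1 ∧ c * w = ‖w‖ := by
    intro w c hc
    by_cases hw : w = 0
    · simp [hc, hw]
    · constructor
      · rw [hc, if_neg hw, norm_div, Complex.norm_real, Real.norm_eq_abs, abs_norm, div_self]
        simpa using hw
      · rw [hc, if_neg hw, div_mul_cancel₀ _ hw]
  obtain ⟨hc₁abs, hc₁a⟩ := habs a c₁ hc₁
  obtain ⟨hc₂abs, hc₂b⟩ := habs b c₂ hc₂
  set φ : ℂ → ℂ := fun z => c₁ * deriv h₂ z + c₂ * deriv g₂ z with hφ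
  have hφa : AnalyticOnNhd ℂ φ (ball 0 1) :=
    (analyticOnNhd_const.mul hh₂.deriv).add (analyticOnNhd_const.mul hg₂.deriv)
  have hφ0 : φ 0 = 1 := by
    rw [hφ]; simp only [← ha, ← hb]
    rw [hc₁a, hc₂b, ← Complex.ofReal_add, hab, Complex.ofReal_one]
  have hφb : ∀ z ∈ ball (0:ℂ) 1, ‖φ z‖ ≤ 1 := by
    intro z hz
    calc ‖φ z‖ ≤ ‖c₁ * deriv h₂ z‖ + ‖c₂ * deriv g₂ z‖ :=
          norm_add_le _ _
      _ = ‖deriv h₂ z‖ + ‖deriv g₂ z‖ := by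
          rw [norm_mul, norm_mul, hc₁abs, hc₂abs, one_mul, one_mul]
      _ ≤ 1 := hK z hz
  have hmax : IsMaxOn (norm ∘ φ) (ball (0:ℂ) 1) 0 := by
    intro z hz
    simp only [Function.comp_apply, hφ0]
    simpa [hφ0] using hφb z hz
  have hconst : ∀ z ∈ ball (0:ℂ) 1, φ z = 1 := by
    intro z hz
    have := Complex.eqOn_of_isPreconnected_of_isMaxOn_norm
      (convex_ball (0:ℂ) 1).isPreconnected isOpen_ball hφa.differentiableOn h0 hmax hz
    simpa [hφ0] using this
  -- pointwise: Re(c₁ h₂') = |c₁ h₂'| etc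
  have him : ∀ z ∈ ball (0:ℂ) 1, (c₁ * deriv h₂ z).im = 0 ∧ (c₂ * deriv g₂ z).im = 0 := by
    intro z hz
    have h1 : (c₁ * deriv h₂ z).re + (c₂ * deriv g₂ z).re = 1 := by
      have := hconst z hz
      have := congrArg Complex.re this
      simpa [hφ] using this
    have h2 : ‖c₁ * deriv h₂ z‖ + ‖c₂ * deriv g₂ z‖ ≤ 1 := by
      rw [norm_mul, norm_mul, hc₁abs, hc₂abs, one_mul, one_mul]; exact hK z hz
    have r1 := Complex.re_le_norm (c₁ * deriv h₂ z)
    have r2 := Complex.re_le_norm (c₂ * deriv g₂ z)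
    have e1 : (c₁ * deriv h₂ z).re = ‖c₁ * deriv h₂ z‖ := by linarith
    have e2 : (c₂ * deriv g₂ z).re = ‖c₂ * deriv g₂ z‖ := by linarith
    constructor
    · have hs := Complex.sq_norm (c₁ * deriv h₂ z)
      rw [Complex.normSq_apply, ← e1, pow_two] at hs
      exact mul_self_eq_zero.mp (by linarith)
    · have hs := Complex.sq_norm (c₂ * deriv g₂ z)
      rw [Complex.normSq_apply, ← e2, pow_two] at hs
      exact mul_self_eq_zero.mp (by linarith)
  have hu : ∀ z ∈ ball (0:ℂ) 1, c₁ * deriv h₂ z = c₁ * a := by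
    have := const_of_im_eq_zero (f := fun z => c₁ * deriv h₂ z)
      (analyticOnNhd_const.mul hh₂.deriv) (fun z hz => (him z hz).1)
    simpa [← ha] using this
  have hv : ∀ z ∈ ball (0:ℂ) 1, c₂ * deriv g₂ z = c₂ * b := by
    have := const_of_im_eq_zero (f := fun z => c₂ * deriv g₂ z)
      (analyticOnNhd_const.mul hg₂.deriv) (fun z hz => (him z hz).2)
    simpa [← hb] using this
  have hc₁ne : c₁ ≠ 0 := by intro h; rw [h] at hc₁abs; simp at hc₁abs
  have hc₂ne : c₂ ≠ 0 := by intro h; rw [h] at hc₂abs; simp at hc₂abs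
  intro z hz
  exact ⟨mul_left_cancel₀ hc₁ne (hu z hz), mul_left_cancel₀ hc₂ne (hv z hz)⟩

lemma prod_bound {h₁ g₁ : ℂ → ℂ} {Λ₂ : ℝ}
    (hh₁ : AnalyticOnNhd ℂ h₁ (ball 0 1)) (hg₁ : AnalyticOnNhd ℂ g₁ (ball 0 1))
    (hh₁0 : h₁ 0 = 0)
    (hL : ∀ z ∈ ball (0:ℂ) 1,
      ‖deriv h₁ z * g₁ z‖ + ‖h₁ z * deriv g₁ z‖ ≤ Λ₂) :
    ∀ z ∈ ball (0:ℂ) 1, ‖h₁ z * g₁ z‖ ≤ Λ₂ * ‖z‖ := by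
  intro z hz
  have hmvt := Convex.norm_image_sub_le_of_norm_hasDerivWithin_le
    (f := fun w => h₁ w * g₁ w) (f' := fun w => deriv h₁ w * g₁ w + h₁ w * deriv g₁ w)
    (s := ball (0:ℂ) 1) (C := Λ₂)
    (fun x hx => (((hh₁ x hx).differentiableAt.hasDerivAt).mul
      ((hg₁ x hx).differentiableAt.hasDerivAt)).hasDerivWithinAt)
    (fun x hx => le_trans (norm_add_le _ _) (by simpa using hL x hx))
    (convex_ball 0 1) (mem_ball_self one_pos) hz
  simpa [hh₁0] using hmvt

lemma G_bound_s11 {h₁ g₁ : ℂ → ℂ} {Λ₂ : ℝ}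
    (hh₁ : AnalyticOnNhd ℂ h₁ (ball 0 1)) (hg₁ : AnalyticOnNhd ℂ g₁ (ball 0 1))
    (hh₁0 : h₁ 0 = 0)
    (hL : ∀ z ∈ ball (0:ℂ) 1,
      ‖deriv h₁ z * g₁ z‖ + ‖h₁ z * deriv g₁ z‖ ≤ Λ₂)
    {z : ℂ} (hz : z ∈ ball (0:ℂ) 1) :
    ∃ D : ℂ →L[ℝ] ℂ,
      HasFDerivAt (fun w => w * (starRingEnd ℂ) w * (h₁ w * (starRingEnd ℂ) (g₁ w))) D z ∧
      ‖D‖ ≤ 3 * Λ₂ * (‖z‖) ^ 2 := by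
  have hΛ : 0 ≤ Λ₂ := le_trans (by positivity) (hL 0 (mem_ball_self one_pos))
  set cj : ℂ →L[ℝ] ℂ := Complex.conjCLE.toContinuousLinearMap with hcj
  have hconj : ∀ x : ℂ, HasFDerivAt (fun w : ℂ => (starRingEnd ℂ) w) cj x := by
    intro x
    have := Complex.conjCLE.hasFDerivAt (x := x)
    exact this
  have hf1 : HasFDerivAt h₁
      (((1 : ℂ →L[ℂ] ℂ).smulRight (deriv h₁ z)).restrictScalars ℝ) z :=
    ((hh₁ z hz).differentiableAt.hasDerivAt.hasFDerivAt).restrictScalars ℝ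
  have hfg : HasFDerivAt g₁
      (((1 : ℂ →L[ℂ] ℂ).smulRight (deriv g₁ z)).restrictScalars ℝ) z :=
    ((hg₁ z hz).differentiableAt.hasDerivAt.hasFDerivAt).restrictScalars ℝ
  have hconjg : HasFDerivAt (fun w => (starRingEnd ℂ) (g₁ w))
      (cj.comp (((1 : ℂ →L[ℂ] ℂ).smulRight (deriv g₁ z)).restrictScalars ℝ)) z :=
    (hconj (g₁ z)).comp z hfg
  have hM := hf1.mul hconjg
  have hN := (hasFDerivAt_id z).mul (hconj z)
  have hG := hN.mul hM
  refine ⟨_, hG, ?_⟩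
  apply ContinuousLinearMap.opNorm_le_bound _ (by positivity)
  intro w
  simp only [hcj, ContinuousLinearMap.add_apply, ContinuousLinearMap.smul_apply,
    ContinuousLinearMap.coe_comp', Function.comp_apply,
    ContinuousLinearMap.coe_restrictScalars', ContinuousLinearMap.smulRight_apply,
    ContinuousLinearMap.one_apply, ContinuousLinearEquiv.coe_coe, Complex.conjCLE_apply,
    ContinuousLinearMap.coe_id', id_eq, smul_eq_mul]
  have hLz := hL z hz
  have hpq := prod_bound hh₁ hg₁ hh₁0 hL z hz
  have t1 : ‖h₁ z * (starRingEnd ℂ) (w * deriv g₁ z) +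
      (starRingEnd ℂ) (g₁ z) * (w * deriv h₁ z)‖ ≤ Λ₂ * ‖w‖ := by
    calc ‖h₁ z * (starRingEnd ℂ) (w * deriv g₁ z) +
          (starRingEnd ℂ) (g₁ z) * (w * deriv h₁ z)‖
        ≤ ‖h₁ z * (starRingEnd ℂ) (w * deriv g₁ z)‖ +
          ‖(starRingEnd ℂ) (g₁ z) * (w * deriv h₁ z)‖ := norm_add_le _ _
      _ = (‖h₁ z * deriv g₁ z‖ + ‖deriv h₁ z * g₁ z‖) *
          ‖w‖ := by simp [norm_mul, Complex.norm_conj]; ring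
      _ ≤ Λ₂ * ‖w‖ := by
          apply mul_le_mul_of_nonneg_right _ (norm_nonneg w); linarith
  have t2 : ‖z * (starRingEnd ℂ) w + (starRingEnd ℂ) z * w‖ ≤
      2 * ‖z‖ * ‖w‖ := by
    calc ‖z * (starRingEnd ℂ) w + (starRingEnd ℂ) z * w‖
        ≤ ‖z * (starRingEnd ℂ) w‖ + ‖(starRingEnd ℂ) z * w‖ :=
          norm_add_le _ _
      _ = 2 * ‖z‖ * ‖w‖ := by simp [norm_mul, Complex.norm_conj]; ring
  have A1 : ‖z * (starRingEnd ℂ) z * (h₁ z * (starRingEnd ℂ) (w * deriv g₁ z) +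
      (starRingEnd ℂ) (g₁ z) * (w * deriv h₁ z))‖ ≤
      ‖z‖ * ‖z‖ * (Λ₂ * ‖w‖) := by
    rw [norm_mul, norm_mul, Complex.norm_conj]
    exact mul_le_mul_of_nonneg_left t1 (by positivity)
  have A2 : ‖h₁ z * (starRingEnd ℂ) (g₁ z) *
      (z * (starRingEnd ℂ) w + (starRingEnd ℂ) z * w)‖ ≤
      (Λ₂ * ‖z‖) * (2 * ‖z‖ * ‖w‖) := by
    rw [norm_mul, norm_mul, Complex.norm_conj]
    exact mul_le_mul (by rw [← norm_mul]; exact hpq) t2 (norm_nonneg _) (by positivity)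
  exact le_trans (norm_add_le _ _) (le_trans (add_le_add A1 A2) (le_of_eq (by ring)))

lemma linear_of_deriv_const {f : ℂ → ℂ} {a : ℂ} (hf : AnalyticOnNhd ℂ f (ball 0 1))
    (hd : ∀ z ∈ ball (0:ℂ) 1, deriv f z = a) {x y : ℂ} (hx : x ∈ ball (0:ℂ) 1)
    (hy : y ∈ ball (0:ℂ) 1) : f x - f y = a * (x - y) := by
  have hmvt := Convex.norm_image_sub_le_of_norm_hasDerivWithin_le
    (f := fun z => f z - a * z) (f' := fun z => deriv f z - a) (C := 0) (s := ball (0:ℂ) 1)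
    (fun w hw => (((hf w hw).differentiableAt.hasDerivAt).sub
      (((hasDerivAt_id w).const_mul a).congr_deriv (mul_one a))).hasDerivWithinAt)
    (fun w hw => by simp [hd w hw]) (convex_ball 0 1) hy hx
  rw [zero_mul] at hmvt
  have h0 : f x - a * x - (f y - a * y) = 0 := by
    have := norm_le_zero_iff.mp hmvt
    simpa using this
  linear_combination h0

/-- Landau-type theorem in the case `Λ_K ≤ 1`: univalence of
`F(z) = |z|² L(z) + K(z)` on the disk of radius `r₁' = 1` (if `3Λ₂ ≤ 1`) or
`r₁' = 1/√(3Λ₂)` (if `3Λ₂ > 1`). -/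
theorem stmt_11 (h₁ g₁ h₂ g₂ : ℂ → ℂ) (Λ₂ : ℝ)
    (hh₁ : AnalyticOnNhd ℂ h₁ (ball 0 1)) (hg₁ : AnalyticOnNhd ℂ g₁ (ball 0 1))
    (hh₂ : AnalyticOnNhd ℂ h₂ (ball 0 1)) (hg₂ : AnalyticOnNhd ℂ g₂ (ball 0 1))
    (hh₁0 : h₁ 0 = 0)
    (F : ℂ → ℂ)
    (hF : ∀ z, F z = (‖z‖ : ℂ) ^ 2 * (h₁ z * (starRingEnd ℂ) (g₁ z)) +
      (h₂ z + (starRingEnd ℂ) (g₂ z)))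
    (hF0 : F 0 = 0)
    (hlam : |‖deriv h₂ 0‖ - ‖deriv g₂ 0‖| = 1)
    (hK : ∀ z ∈ ball (0 : ℂ) 1,
      ‖deriv h₂ z‖ + ‖deriv g₂ z‖ ≤ 1)
    (hL : ∀ z ∈ ball (0 : ℂ) 1,
      ‖deriv h₁ z * g₁ z‖ + ‖h₁ z * deriv g₁ z‖ ≤ Λ₂)
    (r₁' : ℝ)
    (hr₁' : r₁' = if 3 * Λ₂ ≤ 1 then 1 else 1 / Real.sqrt (3 * Λ₂)) :
    Set.InjOn F (ball 0 r₁') := by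
  intro z₁ hz₁ z₂ hz₂ hFeq
  have hΛ : 0 ≤ Λ₂ := le_trans (by positivity) (hL 0 (mem_ball_self one_pos))
  have hr1 : r₁' ≤ 1 := by
    rw [hr₁']; split_ifs with h
    · exact le_refl 1
    · push_neg at h
      have hs : 1 < Real.sqrt (3 * Λ₂) := by
        rw [show (1:ℝ) = Real.sqrt 1 by simp]
        exact Real.sqrt_lt_sqrt (by norm_num) (by simpa using h)
      rw [div_le_one (by linarith)]; linarith
  have hsub : ball (0:ℂ) r₁' ⊆ ball 0 1 := ball_subset_ball hr1
  set m := max (‖z₁‖) (‖z₂‖) with hm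
  have hm0 : 0 ≤ m := le_trans (norm_nonneg z₁) (le_max_left _ _)
  have habs₁ : ‖z₁‖ < r₁' := by
    have := mem_ball.mp hz₁; rwa [dist_zero_right] at this
  have habs₂ : ‖z₂‖ < r₁' := by
    have := mem_ball.mp hz₂; rwa [dist_zero_right] at this
  have hmr : m < r₁' := max_lt habs₁ habs₂
  have hm1 : m < 1 := lt_of_lt_of_le hmr hr1
  have hc : 3 * Λ₂ * m ^ 2 < 1 := by
    rw [hr₁'] at hmr; split_ifs at hmr with h
    · nlinarith
    · push_neg at h
      have h3 : 0 < 3 * Λ₂ := by linarith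
      have hs : 0 < Real.sqrt (3 * Λ₂) := Real.sqrt_pos.2 h3
      have hms : m * Real.sqrt (3 * Λ₂) < 1 := (lt_div_iff₀ hs).1 hmr
      nlinarith [Real.sq_sqrt h3.le, hms, mul_nonneg hm0 hs.le]
  -- K part
  have hder := deriv_eq_const_of_max hh₂ hg₂ hlam hK
  have e2 : h₂ z₁ - h₂ z₂ = deriv h₂ 0 * (z₁ - z₂) :=
    linear_of_deriv_const hh₂ (fun z hz => (hder z hz).1) (hsub hz₁) (hsub hz₂)
  have e3 : g₂ z₁ - g₂ z₂ = deriv g₂ 0 * (z₁ - z₂) :=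
    linear_of_deriv_const hg₂ (fun z hz => (hder z hz).2) (hsub hz₁) (hsub hz₂)
  -- G part
  set G : ℂ → ℂ := fun w => w * (starRingEnd ℂ) w * (h₁ w * (starRingEnd ℂ) (g₁ w)) with hG
  have hball : closedBall (0:ℂ) m ⊆ ball 0 1 := by
    intro x hx
    rw [mem_closedBall, dist_zero_right] at hx
    rw [mem_ball, dist_zero_right]
    exact lt_of_le_of_lt hx hm1
  have hGle : ‖G z₁ - G z₂‖ ≤ 3 * Λ₂ * m ^ 2 * ‖z₁ - z₂‖ := by
    apply Convex.norm_image_sub_le_of_norm_hasFDerivWithin_le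
      (f' := fun x => fderiv ℝ G x) (fun x hx => ?_) (fun x hx => ?_)
      (convex_closedBall 0 m)
      (by rw [mem_closedBall, dist_zero_right]; exact le_max_right _ _)
      (by rw [mem_closedBall, dist_zero_right]; exact le_max_left _ _)
    · obtain ⟨D, hD, _⟩ := G_bound_s11 hh₁ hg₁ hh₁0 hL (hball hx)
      simpa [hG, hD.fderiv] using hD.hasFDerivWithinAt (s := closedBall (0:ℂ) m)
    · obtain ⟨D, hD, hDle⟩ := G_bound_s11 hh₁ hg₁ hh₁0 hL (hball hx)
      simp only [hG, hD.fderiv]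
      refine le_trans hDle ?_
      have hxm : ‖x‖ ≤ m := by
        have := mem_closedBall.mp hx; rwa [dist_zero_right] at this
      have := norm_nonneg x
      gcongr
  -- combine
  have habs2 : ∀ w : ℂ, ((‖w‖ : ℂ)) ^ 2 = w * (starRingEnd ℂ) w := by
    intro w; rw [← Complex.ofReal_pow, Complex.sq_norm, Complex.mul_conj]
  have hFeq' : G z₁ + (h₂ z₁ + (starRingEnd ℂ) (g₂ z₁)) =
      G z₂ + (h₂ z₂ + (starRingEnd ℂ) (g₂ z₂)) := by
    have := hFeq
    rw [hF z₁, hF z₂, habs2 z₁, habs2 z₂] at this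
    exact this
  have hcj : (starRingEnd ℂ) (g₂ z₁) - (starRingEnd ℂ) (g₂ z₂) =
      (starRingEnd ℂ) (deriv g₂ 0 * (z₁ - z₂)) := by rw [← map_sub, e3]
  have hkey : deriv h₂ 0 * (z₁ - z₂) + (starRingEnd ℂ) (deriv g₂ 0 * (z₁ - z₂)) =
      -(G z₁ - G z₂) := by linear_combination hFeq' - e2 - hcj
  set t := ‖z₁ - z₂‖ with ht
  have hlow : t ≤ ‖G z₁ - G z₂‖ := by
    have h1 : |‖deriv h₂ 0 * (z₁ - z₂)‖ - ‖-((starRingEnd ℂ) (deriv g₂ 0 * (z₁ - z₂)))‖| ≤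
        ‖deriv h₂ 0 * (z₁ - z₂) - -((starRingEnd ℂ) (deriv g₂ 0 * (z₁ - z₂)))‖ :=
      abs_norm_sub_norm_le _ _
    rw [sub_neg_eq_add, hkey, norm_neg, norm_neg] at h1
    refine le_trans (le_of_eq ?_) h1
    rw [norm_mul, Complex.norm_conj, norm_mul]
    rw [show ‖deriv h₂ 0‖ * ‖z₁ - z₂‖ -
        ‖deriv g₂ 0‖ * ‖z₁ - z₂‖ =
        (‖deriv h₂ 0‖ - ‖deriv g₂ 0‖) * ‖z₁ - z₂‖ by ring]
    rw [_root_.abs_mul, hlam, one_mul, _root_.abs_of_nonneg (norm_nonneg _)]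
  have ht0 : 0 ≤ t := norm_nonneg _
  have hfin : t ≤ 3 * Λ₂ * m ^ 2 * t := le_trans hlow hGle
  have : t = 0 := by nlinarith
  exact sub_eq_zero.mp (norm_eq_zero.mp this)
end

section
/- Let F(z) = |z|²·L(z) + K(z) on the unit disk 𝔻, where L(z) = h₁(z)·conj(g₁(z)) is logharmonic with h₁, g₁ analytic on 𝔻 and h₁(0) = 0, and K(z) = h₂(z) + conj(g₂(z)) is harmonic with h₂, g₂ analytic on 𝔻. Suppose F(0) = 0, λ_F(0) = ||h₂'(0)| − |g₂'(0)|| = 1, Λ_K(z) = |h₂'(z)| + |g₂'(z)| ≤ 1 for all z ∈ 𝔻, and Λ_L(z) = |h₁'(z)·g₁(z)| + |h₁(z)·g₁'(z)| ≤ Λ₂ for all z ∈ 𝔻. Set r₁' = 1 if 3Λ₂ ≤ 1 and r₁' = 1/√(3Λ₂) if 3Λ₂ > 1, and ρ₁' = r₁' − Λ₂·(r₁')³. Then the image F(𝔻_{r₁'}) contains the disk 𝔻_{ρ₁'} = {w ∈ ℂ : |w| < ρ₁'}. -/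
open Complex Metric


lemma aux_fixed (T : ℂ → ℂ) (r k : ℝ) (hr : 0 ≤ r) (hk0 : 0 ≤ k) (hk : k < 1)
    (hmap : ∀ z ∈ closedBall (0:ℂ) r, T z ∈ closedBall (0:ℂ) r)
    (hlip : ∀ z₁ ∈ closedBall (0:ℂ) r, ∀ z₂ ∈ closedBall (0:ℂ) r,
      dist (T z₁) (T z₂) ≤ k * dist z₁ z₂) :
    ∃ z ∈ closedBall (0:ℂ) r, T z = z := by
  haveI : CompleteSpace (closedBall (0:ℂ) r) := (isClosed_closedBall).completeSpace_coe
  haveI : Nonempty (closedBall (0:ℂ) r) := ⟨⟨0, mem_closedBall_self hr⟩⟩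
  set T' : closedBall (0:ℂ) r → closedBall (0:ℂ) r := fun z => ⟨T z, hmap z z.2⟩ with hT'
  have hc : ContractingWith k.toNNReal T' := by
    constructor
    · rw [← NNReal.coe_lt_coe, Real.coe_toNNReal _ hk0, NNReal.coe_one]; exact hk
    · apply LipschitzWith.of_dist_le_mul
      intro x y
      rw [Subtype.dist_eq, Subtype.dist_eq, Real.coe_toNNReal _ hk0]
      exact hlip x x.2 y y.2
  set z := ContractingWith.fixedPoint T' hc with hz
  refine ⟨z, z.2, ?_⟩
  have := ContractingWith.fixedPoint_isFixedPt hc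
  exact congrArg Subtype.val this

noncomputable def conjCLM : ℂ →L[ℝ] ℂ := Complex.conjCLE.toContinuousLinearMap

noncomputable def Lmap (p q : ℂ) : ℂ →L[ℝ] ℂ :=
  p • (ContinuousLinearMap.id ℝ ℂ) + q • conjCLM

@[simp] lemma Lmap_apply (p q v : ℂ) : Lmap p q v = p * v + q * (starRingEnd ℂ) v := by
  simp [Lmap, conjCLM, Complex.conjCLE_apply]

lemma aux_hasfderiv (a b : ℂ → ℂ) (a' b' z : ℂ)
    (ha : HasDerivAt a a' z) (hb : HasDerivAt b b' z) :
    HasFDerivAt (fun w => a w * (starRingEnd ℂ) (b w))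
      (Lmap (a' * (starRingEnd ℂ) (b z)) (a z * (starRingEnd ℂ) b')) z := by
  have haF := (ha.hasFDerivAt).restrictScalars ℝ
  have hbF := (hb.hasFDerivAt).restrictScalars ℝ
  have hconj : HasFDerivAt (fun w : ℂ => (starRingEnd ℂ) w) conjCLM (b z) := by
    have := conjCLM.hasFDerivAt (x := b z); exact this
  have hbc := hconj.comp z hbF
  have hmul := haF.mul hbc
  refine hmul.congr_fderiv ?_
  ext v
  simp [Complex.conjCLE_apply, conjCLM, map_mul]
  ring

lemma aux_K (f g : ℂ → ℂ) (hf : AnalyticOnNhd ℂ f (ball 0 1)) (hg : AnalyticOnNhd ℂ g (ball 0 1))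
    (h1 : norm (deriv f 0) = 1)
    (hb : ∀ z ∈ ball (0:ℂ) 1, norm (deriv f z) + norm (deriv g z) ≤ 1) :
    ∀ z ∈ ball (0:ℂ) 1, f z = f 0 + deriv f 0 * z ∧ g z = g 0 := by
  have hfd : AnalyticOnNhd ℂ (deriv f) (ball 0 1) := hf.deriv
  have hmax : IsMaxOn (norm ∘ deriv f) (ball (0:ℂ) 1) 0 := by
    intro z hz
    have := hb z hz
    have h2 : norm (deriv f z) ≤ 1 := by
      have := norm_nonneg (deriv g z); linarith
    simp only [Function.comp_apply, Set.mem_setOf_eq, h1]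
    exact h2
  have hconst := Complex.eqOn_of_isPreconnected_of_isMaxOn_norm
    (convex_ball (0:ℂ) 1).isPreconnected isOpen_ball hfd.differentiableOn
    (mem_ball_self one_pos) hmax
  have hdf : ∀ z ∈ ball (0:ℂ) 1, deriv f z = deriv f 0 := fun z hz => hconst hz
  have hdg : ∀ z ∈ ball (0:ℂ) 1, deriv g z = 0 := by
    intro z hz
    have h3 := hb z hz
    rw [hdf z hz, h1] at h3
    have := norm_nonneg (deriv g z)
    have : norm (deriv g z) = 0 := by linarith
    exact norm_eq_zero.mp this
  intro z hz
  constructor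
  · have key := (convex_ball (0:ℂ) 1).norm_image_sub_le_of_norm_hasDerivWithin_le
      (f := fun w => f w - deriv f 0 * w) (f' := fun w => deriv f w - deriv f 0) (C := 0)
      (fun w hw => (((hf w hw).differentiableAt.hasDerivAt).sub
        ((hasDerivAt_id w).const_mul (deriv f 0))).hasDerivWithinAt.congr_deriv (by ring))
      (fun w hw => by simp [hdf w hw]) (mem_ball_self one_pos) hz
    simp only [mul_zero, sub_zero, zero_mul] at key
    have : f z - deriv f 0 * z - f 0 = 0 := by
      have := norm_le_zero_iff.mp key
      simpa [sub_sub] using this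
    linear_combination this
  · have key := (convex_ball (0:ℂ) 1).norm_image_sub_le_of_norm_hasDerivWithin_le
      (f := g) (f' := deriv g) (C := 0)
      (fun w hw => ((hg w hw).differentiableAt.hasDerivAt).hasDerivWithinAt)
      (fun w hw => by simp [hdg w hw]) (mem_ball_self one_pos) hz
    simp only [zero_mul] at key
    have := norm_le_zero_iff.mp key
    linear_combination this

lemma aux_phi (h₁ g₁ : ℂ → ℂ) (Λ₂ : ℝ)
    (hh₁ : AnalyticOnNhd ℂ h₁ (ball 0 1)) (hg₁ : AnalyticOnNhd ℂ g₁ (ball 0 1))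
    (hh₁0 : h₁ 0 = 0)
    (hL : ∀ z ∈ ball (0 : ℂ) 1,
      norm (deriv h₁ z * g₁ z) + norm (h₁ z * deriv g₁ z) ≤ Λ₂) :
    ∀ z ∈ ball (0:ℂ) 1, norm (h₁ z * g₁ z) ≤ Λ₂ * norm z := by
  intro z hz
  have key := (convex_ball (0:ℂ) 1).norm_image_sub_le_of_norm_hasDerivWithin_le
    (f := fun w => h₁ w * g₁ w) (f' := fun w => deriv h₁ w * g₁ w + h₁ w * deriv g₁ w) (C := Λ₂)
    (fun w hw => (((hh₁ w hw).differentiableAt.hasDerivAt).mul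
      ((hg₁ w hw).differentiableAt.hasDerivAt)).hasDerivWithinAt)
    (fun w hw => le_trans (norm_add_le _ _) (hL w hw)) (mem_ball_self one_pos) hz
  simpa [hh₁0] using key

lemma aux_Glip (h₁ g₁ : ℂ → ℂ) (Λ₂ : ℝ)
    (hh₁ : AnalyticOnNhd ℂ h₁ (ball 0 1)) (hg₁ : AnalyticOnNhd ℂ g₁ (ball 0 1))
    (hh₁0 : h₁ 0 = 0) (hΛ₂ : 0 ≤ Λ₂)
    (hL : ∀ z ∈ ball (0 : ℂ) 1,
      norm (deriv h₁ z * g₁ z) + norm (h₁ z * deriv g₁ z) ≤ Λ₂)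
    (r : ℝ) (hr0 : 0 ≤ r) (hr : r < 1) :
    ∀ z₁ ∈ closedBall (0:ℂ) r, ∀ z₂ ∈ closedBall (0:ℂ) r,
      ‖(z₁ * h₁ z₁) * (starRingEnd ℂ) (z₁ * g₁ z₁)
        - (z₂ * h₁ z₂) * (starRingEnd ℂ) (z₂ * g₁ z₂)‖ ≤ 3*Λ₂*r^2 * ‖z₁ - z₂‖ := by
  have hsub : closedBall (0:ℂ) r ⊆ ball (0:ℂ) 1 := fun x hx => by
    simp only [mem_closedBall, mem_ball] at *
    exact lt_of_le_of_lt hx hr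
  intro z₁ hz₁ z₂ hz₂
  refine (convex_closedBall (0:ℂ) r).norm_image_sub_le_of_norm_hasFDerivWithin_le
    (f := fun w => (w * h₁ w) * (starRingEnd ℂ) (w * g₁ w))
    (f' := fun w => Lmap ((1 * h₁ w + w * deriv h₁ w) * (starRingEnd ℂ) (w * g₁ w))
      ((w * h₁ w) * (starRingEnd ℂ) (1 * g₁ w + w * deriv g₁ w)))
    ?_ ?_ hz₂ hz₁
  · intro w hw
    have hw1 : w ∈ ball (0:ℂ) 1 := hsub hw
    exact (aux_hasfderiv (fun w => w * h₁ w) (fun w => w * g₁ w) _ _ w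
      ((hasDerivAt_id w).mul (hh₁ w hw1).differentiableAt.hasDerivAt)
      ((hasDerivAt_id w).mul (hg₁ w hw1).differentiableAt.hasDerivAt)).hasFDerivWithinAt
  · intro w hw
    have hw1 : w ∈ ball (0:ℂ) 1 := hsub hw
    set p := (1 * h₁ w + w * deriv h₁ w) * (starRingEnd ℂ) (w * g₁ w) with hp
    set q := (w * h₁ w) * (starRingEnd ℂ) (1 * g₁ w + w * deriv g₁ w) with hq
    have hwr : norm w ≤ r := by simpa [Complex.dist_eq] using hw
    have hw0 : (0:ℝ) ≤ norm w := norm_nonneg _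
    have hphi := aux_phi h₁ g₁ Λ₂ hh₁ hg₁ hh₁0 hL w hw1
    have hLw := hL w hw1
    have hpabs : norm p ≤ norm w * norm (h₁ w * g₁ w)
        + norm w ^ 2 * norm (deriv h₁ w * g₁ w) := by
      have e1 : norm p
          = norm (w * (h₁ w * g₁ w) + w^2 * (deriv h₁ w * g₁ w)) := by
        rw [hp, norm_mul, Complex.norm_conj, ← norm_mul]
        congr 1; ring
      rw [e1]
      refine le_trans (norm_add_le _ _) ?_
      simp only [norm_mul, norm_pow]
      exact le_rfl
    have hqabs : norm q ≤ norm w * norm (h₁ w * g₁ w)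
        + norm w ^ 2 * norm (h₁ w * deriv g₁ w) := by
      have e1 : norm q
          = norm (w * (h₁ w * g₁ w) + w^2 * (h₁ w * deriv g₁ w)) := by
        rw [hq, norm_mul, Complex.norm_conj, ← norm_mul]
        congr 1; ring
      rw [e1]
      refine le_trans (norm_add_le _ _) ?_
      simp only [norm_mul, norm_pow]
      exact le_rfl
    have hsum : norm p + norm q ≤ 3*Λ₂*r^2 := by
      have h1 : norm w * norm (h₁ w * g₁ w) ≤ Λ₂ * norm w ^ 2 := by
        calc norm w * norm (h₁ w * g₁ w) ≤ norm w * (Λ₂ * norm w) :=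
          mul_le_mul_of_nonneg_left hphi hw0
        _ = Λ₂ * norm w ^ 2 := by ring
      have h2 : norm w ^ 2 ≤ r ^ 2 := by
        apply pow_le_pow_left₀ hw0 hwr
      nlinarith [norm_nonneg (deriv h₁ w * g₁ w), norm_nonneg (h₁ w * deriv g₁ w),
        norm_nonneg (h₁ w * g₁ w)]
    refine ContinuousLinearMap.opNorm_le_bound _ (by positivity) (fun v => ?_)
    rw [Lmap_apply]
    calc ‖p * v + q * (starRingEnd ℂ) v‖ ≤ ‖p * v‖ + ‖q * (starRingEnd ℂ) v‖ := norm_add_le _ _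
    _ = (norm p + norm q) * ‖v‖ := by
        simp [map_mul, Complex.norm_conj]; ring
    _ ≤ 3*Λ₂*r^2 * ‖v‖ := by
        apply mul_le_mul_of_nonneg_right hsum (norm_nonneg v)


/-- Landau-type theorem in the case `Λ_K ≤ 1`: schlicht disk for
`F(z) = |z|² L(z) + K(z)` on the disk of radius `r₁' = 1` (if `3Λ₂ ≤ 1`) or
`r₁' = 1/√(3Λ₂)` (if `3Λ₂ > 1`). -/
theorem stmt_12 (h₁ g₁ h₂ g₂ : ℂ → ℂ) (Λ₂ : ℝ)
    (hh₁ : AnalyticOnNhd ℂ h₁ (ball 0 1)) (hg₁ : AnalyticOnNhd ℂ g₁ (ball 0 1))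
    (hh₂ : AnalyticOnNhd ℂ h₂ (ball 0 1)) (hg₂ : AnalyticOnNhd ℂ g₂ (ball 0 1))
    (hh₁0 : h₁ 0 = 0)
    (F : ℂ → ℂ)
    (hF : ∀ z, F z = (‖z‖ : ℂ) ^ 2 * (h₁ z * (starRingEnd ℂ) (g₁ z)) +
      (h₂ z + (starRingEnd ℂ) (g₂ z)))
    (hF0 : F 0 = 0)
    (hlam : |‖deriv h₂ 0‖ - ‖deriv g₂ 0‖| = 1)
    (hK : ∀ z ∈ ball (0 : ℂ) 1,
      ‖deriv h₂ z‖ + ‖deriv g₂ z‖ ≤ 1)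
    (hL : ∀ z ∈ ball (0 : ℂ) 1,
      ‖deriv h₁ z * g₁ z‖ + ‖h₁ z * deriv g₁ z‖ ≤ Λ₂)
    (r₁' : ℝ)
    (hr₁' : r₁' = if 3 * Λ₂ ≤ 1 then 1 else 1 / Real.sqrt (3 * Λ₂)) :
    ball (0 : ℂ) (r₁' - Λ₂ * r₁' ^ 3) ⊆ F '' (ball 0 r₁') := by
  intro w hw
  set Gfun : ℂ → ℂ := fun z => (z * h₁ z) * (starRingEnd ℂ) (z * g₁ z) with hGfun
  have habs2 : ∀ z : ℂ, ((norm z : ℂ))^2 * (h₁ z * (starRingEnd ℂ) (g₁ z)) = Gfun z := by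
    intro z
    have h1 : ((norm z : ℂ))^2 = z * (starRingEnd ℂ) z := by
      rw [← Complex.ofReal_pow, Complex.sq_norm, Complex.mul_conj]
    simp only [hGfun, map_mul, h1]
    ring
  have hF' : ∀ z, F z = Gfun z + (h₂ z + (starRingEnd ℂ) (g₂ z)) := fun z => by
    rw [hF z, habs2 z]
  have hΛ₂ : 0 ≤ Λ₂ := le_trans (by positivity) (hL 0 (mem_ball_self one_pos))
  have hK00 : h₂ 0 + (starRingEnd ℂ) (g₂ 0) = 0 := by
    have h0 := hF' 0
    rw [hF0] at h0
    simpa [hGfun] using h0.symm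
  -- structure of K
  obtain ⟨c, hc1, τ, hτinv, hτabs, hτsub, hFform⟩ :
      ∃ c : ℂ, norm c = 1 ∧ ∃ τ : ℂ → ℂ,
        (∀ x, τ (τ x) = x) ∧ (∀ x, norm (τ x) = norm x) ∧
        (∀ x y, τ x - τ y = τ (x - y)) ∧
        (∀ z ∈ ball (0:ℂ) 1, F z = Gfun z + τ (c * z)) := by
    have hK0 := hK 0 (mem_ball_self one_pos)
    have hga := norm_nonneg (deriv g₂ 0)
    have hha := norm_nonneg (deriv h₂ 0)
    rcases (abs_eq (by norm_num : (0:ℝ) ≤ 1)).mp hlam with h | h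
    · have ha : norm (deriv h₂ 0) = 1 := by linarith
      refine ⟨deriv h₂ 0, ha, id, fun x => rfl, fun x => rfl, fun x y => rfl, ?_⟩
      intro z hz
      obtain ⟨hh, hg⟩ := aux_K h₂ g₂ hh₂ hg₂ ha hK z hz
      rw [hF' z, hh, hg]
      simp only [id_eq]
      linear_combination hK00
    · have hb : norm (deriv g₂ 0) = 1 := by linarith
      refine ⟨deriv g₂ 0, hb, (starRingEnd ℂ), fun x => Complex.conj_conj x,
        fun x => Complex.norm_conj x, fun x y => (map_sub _ _ _).symm, ?_⟩
      intro z hz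
      obtain ⟨hg, hh⟩ := aux_K g₂ h₂ hg₂ hh₂ hb
        (fun z hz => by rw [add_comm]; exact hK z hz) z hz
      rw [hF' z, hh, hg, map_add]
      linear_combination hK00
  -- radius facts
  have hr₁pos : 0 < r₁' := by
    rw [hr₁']
    split_ifs with h
    · norm_num
    · push_neg at h
      have : 0 < Real.sqrt (3*Λ₂) := Real.sqrt_pos.mpr (by linarith)
      positivity
  have hsq : ¬ (3*Λ₂ ≤ 1) → Real.sqrt (3*Λ₂) ^ 2 = 3*Λ₂ := fun h =>
    Real.sq_sqrt (by push_neg at h; linarith)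
  have hr₁le1 : r₁' ≤ 1 := by
    rw [hr₁']
    split_ifs with h
    · exact le_refl 1
    · push_neg at h
      have h2 := hsq (not_le.mpr h)
      have h3 : 0 ≤ Real.sqrt (3*Λ₂) := Real.sqrt_nonneg _
      have h4 : 1 < Real.sqrt (3*Λ₂) := by nlinarith
      rw [div_le_one (by linarith)]
      linarith
  have h31 : 3 * Λ₂ * r₁'^2 ≤ 1 := by
    rw [hr₁']
    split_ifs with h
    · simpa using h
    · push_neg at h
      have h2 := hsq (not_le.mpr h)
      have h4 : 0 < Real.sqrt (3*Λ₂) := Real.sqrt_pos.mpr (by linarith)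
      rw [div_pow, one_pow, h2]
      rw [mul_one_div, div_self (by linarith)]
  have hρpos : 0 < r₁' - Λ₂ * r₁'^3 := by
    have : Λ₂ * r₁'^3 = (3*Λ₂*r₁'^2) * r₁' / 3 := by ring
    rw [this]
    have h5 : (3*Λ₂*r₁'^2) * r₁' ≤ 1 * r₁' := by
      apply mul_le_mul_of_nonneg_right h31 hr₁pos.le
    linarith
  set ρ := r₁' - Λ₂ * r₁'^3 with hρ
  have hwρ : norm w < ρ := by
    simpa [Complex.dist_eq] using hw
  have hw0 : 0 ≤ norm w := norm_nonneg w
  set s : ℝ := (norm w / ρ + 1)/2 with hs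
  have hsl : norm w / ρ < 1 := (div_lt_one hρpos).mpr hwρ
  have hs0 : 0 < s := by
    have : 0 ≤ norm w / ρ := div_nonneg hw0 hρpos.le
    rw [hs]; linarith
  have hs1 : s < 1 := by rw [hs]; linarith
  have hws : norm w < s * ρ := by
    have h6 : norm w / ρ < s := by rw [hs]; linarith
    calc norm w = (norm w / ρ) * ρ := by field_simp
    _ < s * ρ := by apply mul_lt_mul_of_pos_right h6 hρpos
  set r := s * r₁' with hr
  have hrpos : 0 < r := mul_pos hs0 hr₁pos
  have hrlt : r < r₁' := by
    rw [hr]; nlinarith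
  have hrlt1 : r < 1 := lt_of_lt_of_le hrlt hr₁le1
  have hwr : norm w ≤ r - Λ₂ * r^3 := by
    have hs3 : s^3 ≤ s := by
      have hs2 : s^2 ≤ 1 := by nlinarith
      calc s^3 = s * s^2 := by ring
      _ ≤ s * 1 := mul_le_mul_of_nonneg_left hs2 hs0.le
      _ = s := mul_one s
    have h7 : Λ₂ * r^3 ≤ s * (Λ₂ * r₁'^3) := by
      rw [hr]
      have : Λ₂ * (s*r₁')^3 = (s^3) * (Λ₂ * r₁'^3) := by ring
      rw [this]
      apply mul_le_mul_of_nonneg_right hs3 (by positivity)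
    have h8 : s * ρ = s * r₁' - s * (Λ₂ * r₁'^3) := by rw [hρ]; ring
    rw [h8] at hws
    linarith
  have hk1 : 3*Λ₂*r^2 < 1 := by
    have : 3*Λ₂*r^2 = s^2 * (3*Λ₂*r₁'^2) := by rw [hr]; ring
    rw [this]
    have h9 : s^2 * (3*Λ₂*r₁'^2) ≤ s^2 * 1 := by
      apply mul_le_mul_of_nonneg_left h31 (by positivity)
    nlinarith
  -- bound on Gfun
  have hGb : ∀ z ∈ closedBall (0:ℂ) r, norm (Gfun z) ≤ Λ₂ * r^3 := by
    intro z hz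
    have hzr : norm z ≤ r := by simpa [Complex.dist_eq] using hz
    have hz1 : z ∈ ball (0:ℂ) 1 := by
      simp only [mem_ball, Complex.dist_eq, sub_zero]
      exact lt_of_le_of_lt hzr hrlt1
    have hphi := aux_phi h₁ g₁ Λ₂ hh₁ hg₁ hh₁0 hL z hz1
    have hz0 : 0 ≤ norm z := norm_nonneg z
    have e1 : norm (Gfun z) = norm z ^2 * norm (h₁ z * g₁ z) := by
      simp only [hGfun, norm_mul, Complex.norm_conj]
      ring
    rw [e1]
    calc norm z ^2 * norm (h₁ z * g₁ z)
        ≤ norm z ^2 * (Λ₂ * norm z) := by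
          apply mul_le_mul_of_nonneg_left hphi (by positivity)
      _ = Λ₂ * norm z ^ 3 := by ring
      _ ≤ Λ₂ * r ^ 3 := by
          apply mul_le_mul_of_nonneg_left _ hΛ₂
          exact pow_le_pow_left₀ hz0 hzr 3
  have hlipG := aux_Glip h₁ g₁ Λ₂ hh₁ hg₁ hh₁0 hΛ₂ hL r hrpos.le hrlt1
  have hc0 : c ≠ 0 := by
    intro h
    rw [h] at hc1
    simp at hc1
  -- fixed point
  set T : ℂ → ℂ := fun z => τ (w - Gfun z) / c with hT
  have hTabs : ∀ z, norm (T z) = norm (w - Gfun z) := by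
    intro z
    rw [hT]
    simp only [norm_div, hc1, div_one, hτabs]
  obtain ⟨z, hzball, hfix⟩ := aux_fixed T r (3*Λ₂*r^2) hrpos.le (by positivity) hk1
    (by
      intro z hz
      simp only [mem_closedBall, Complex.dist_eq, sub_zero]
      rw [hTabs z]
      calc norm (w - Gfun z) ≤ norm w + norm (Gfun z) := by
            exact norm_sub_le w (Gfun z)
        _ ≤ (r - Λ₂ * r^3) + Λ₂ * r^3 := add_le_add hwr (hGb z hz)
        _ = r := by ring)
    (by
      intro x hx y hy
      rw [Complex.dist_eq, Complex.dist_eq, hT]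
      simp only
      rw [div_sub_div_same, norm_div, hc1, div_one, hτsub]
      have e2 : w - Gfun x - (w - Gfun y) = -(Gfun x - Gfun y) := by ring
      rw [e2]
      rw [hτabs, norm_neg]
      exact hlipG x hx y hy)
  have hzr : norm z ≤ r := by simpa [Complex.dist_eq] using hzball
  have hz1 : z ∈ ball (0:ℂ) 1 := by
    simp only [mem_ball, Complex.dist_eq, sub_zero]
    exact lt_of_le_of_lt hzr hrlt1
  refine ⟨z, ?_, ?_⟩
  · simp only [mem_ball, Complex.dist_eq, sub_zero]
    exact lt_of_le_of_lt hzr hrlt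
  · have h10 : τ (w - Gfun z) = c * z := by
      have := hfix
      rw [hT] at this
      field_simp at this
      linear_combination this
    have h11 : w - Gfun z = τ (c * z) := by
      rw [← h10, hτinv]
    rw [hFform z hz1, ← h11]
    ring
end

section
/- Let Λ₂ > 1/3 and define F₁(z) = z − Λ₂ z²·conj(z) for z ∈ 𝔻, and set r₁' = 1/√(3Λ₂). Then for every r ∈ (r₁', 1], F₁ is not injective on the disk 𝔻_r = {|z| < r}: there exist distinct real points x₁, x₂ ∈ 𝔻_r with F₁(x₁) = F₁(x₂). Moreover |F₁(r₁')| = r₁' − Λ₂·(r₁')³. -/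
open Complex Metric

/-- Sharpness of the radii in the case `Λ_K ≤ 1`: the extremal map
`F₁(z) = z − Λ₂ z² z̄` is not injective on `𝔻_r` for `r₁' < r ≤ 1`, where
`r₁' = 1/√(3Λ₂)`, and `|F₁(r₁')| = r₁' − Λ₂ (r₁')³`. -/
theorem stmt_13 (Λ₂ : ℝ) (hΛ₂ : Λ₂ > 1 / 3)
    (F₁ : ℂ → ℂ)
    (hF₁ : ∀ z, F₁ z = z - (Λ₂ : ℂ) * z ^ 2 * (starRingEnd ℂ) z)
    (r₁' : ℝ) (hr₁' : r₁' = 1 / Real.sqrt (3 * Λ₂)) :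
    (∀ r ∈ Set.Ioc r₁' 1, ∃ x₁ x₂ : ℝ, x₁ ≠ x₂ ∧
      (x₁ : ℂ) ∈ ball (0 : ℂ) r ∧ (x₂ : ℂ) ∈ ball (0 : ℂ) r ∧
      F₁ x₁ = F₁ x₂) ∧
    ‖F₁ r₁'‖ = r₁' - Λ₂ * r₁' ^ 3 := by
  have hΛ : (0:ℝ) < Λ₂ := by linarith
  have hc : (0:ℝ) < 3*Λ₂ := by linarith
  have hr0 : 0 < r₁' := by
    rw [hr₁']; positivity
  have hr2 : 3 * Λ₂ * r₁'^2 = 1 := by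
    rw [hr₁', div_pow, one_pow, Real.sq_sqrt hc.le]
    field_simp
  have hreal : ∀ x : ℝ, F₁ x = ((x - Λ₂*x^3 : ℝ) : ℂ) := by
    intro x
    rw [hF₁]
    rw [Complex.conj_ofReal]
    push_cast
    ring
  constructor
  · intro r hr
    obtain ⟨hra, hrb⟩ := hr
    set t := r₁' + min ((r - r₁')/2) (r₁'/2) with ht
    have hm : 0 < min ((r - r₁')/2) (r₁'/2) := by
      apply lt_min <;> linarith
    have ht1 : r₁' < t := by simp only [ht]; linarith
    have ht2 : t < r := by
      have := min_le_left ((r - r₁')/2) (r₁'/2)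
      simp only [ht]; linarith
    have ht3 : t ≤ 3/2 * r₁' := by
      have := min_le_right ((r - r₁')/2) (r₁'/2)
      simp only [ht]; linarith
    clear_value t
    clear ht hm
    set D := 12*r₁'^2 - 3*t^2 with hD
    clear_value D
    have hD0 : 0 < D := by nlinarith [sq_nonneg t]
    set s := (Real.sqrt D - t)/2 with hs
    clear_value s
    have hsqD : Real.sqrt D ^ 2 = D := Real.sq_sqrt hD0.le
    have hkey : s^2 + s*t + t^2 = 3 * r₁'^2 := by
      rw [hs]; field_simp; nlinarith [hsqD]
    have hne : t ≠ s := by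
      intro h
      rw [← h] at hkey
      nlinarith
    have hslt : s < r₁' := by
      by_contra h
      push_neg at h
      nlinarith
    have hsgt : -r < s := by
      have h0 : 0 ≤ Real.sqrt D := Real.sqrt_nonneg D
      have : -t/2 ≤ s := by rw [hs]; linarith
      linarith
    have heq : t - Λ₂*t^3 = s - Λ₂*s^3 := by
      linear_combination Λ₂*(s-t)*hkey + (s-t) * hr2
    refine ⟨t, s, hne, ?_, ?_, ?_⟩
    · rw [mem_ball_zero_iff, Complex.norm_real, Real.norm_eq_abs, abs_lt]
      constructor <;> linarith
    · rw [mem_ball_zero_iff, Complex.norm_real, Real.norm_eq_abs, abs_lt]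
      constructor <;> linarith
    · rw [hreal, hreal, heq]
  · rw [hreal r₁', Complex.norm_real, Real.norm_eq_abs, _root_.abs_of_nonneg]
    nlinarith
end
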